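/- arXiv:0710.1354 — 9 statements merged into one kernel-verified Lean document; each statement's English description precedes it below -/
import Mathlib

section
/- Let p be a prime such that 2 is a primitive root modulo p (i.e., 2 generates the multiplicative group of nonzero residues mod p). Then for every natural number x, S_p(2^p · x) = p · S_p(2 · x). -/
open Finset AddMonoidAlgebra

lemma sdig (q b : ℕ) (hb : b < 2) :
    (Nat.digits 2 (2 * q + b)).sum = b + (Nat.digits 2 q).sum := by
  rcases Nat.eq_zero_or_pos (2 * q + b) with h | h
  · have hq : q = 0 := by omega
    have hb0 : b = 0 := by omega
    simp [hq, hb0]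
  · rw [Nat.digits_def' one_lt_two h, List.sum_cons]
    have h1 : (2 * q + b) % 2 = b := by omega
    have h2 : (2 * q + b) / 2 = q := by omega
    rw [h1, h2]

lemma sdig_pow (k : ℕ) : ∀ q r : ℕ, r < 2 ^ k →
    (Nat.digits 2 (2 ^ k * q + r)).sum = (Nat.digits 2 q).sum + (Nat.digits 2 r).sum := by
  induction k with
  | zero => intro q r hr; interval_cases r; simp
  | succ k ih =>
    intro q r hr
    have key : 2 ^ (k + 1) * q + r = 2 * (2 ^ k * q + r / 2) + r % 2 := by
      have := Nat.div_add_mod r 2; ring_nf; omega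
    rw [key, sdig _ _ (Nat.mod_lt _ (by norm_num)), ih q (r / 2) (by omega)]
    have hr2 : (Nat.digits 2 r).sum = r % 2 + (Nat.digits 2 (r / 2)).sum := by
      have h3 := sdig (r / 2) (r % 2) (Nat.mod_lt _ (by norm_num))
      have h4 : 2 * (r / 2) + r % 2 = r := by omega
      rw [h4] at h3; omega
    omega

lemma sum_block (m x : ℕ) (g : ℕ → ℤ) :
    ∑ n ∈ range (m * x), g n = ∑ q ∈ range x, ∑ r ∈ range m, g (m * q + r) := by
  induction x with
  | zero => simp
  | succ x ih =>
    have : m * (x + 1) = m * x + m := by ring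
    rw [this, Finset.sum_range_add, ih, Finset.sum_range_succ]

section
variable (p : ℕ) [Fact p.Prime]

-- invariance of P under multiplication by a unit
lemma P_invariance (c : ZMod p) (hc : c ≠ 0) (b : ZMod p) :
    (∏ u ∈ (univ \ {0} : Finset (ZMod p)), (1 - single u (1 : ℤ))).coeff (c * b)
      = (∏ u ∈ (univ \ {0} : Finset (ZMod p)), (1 - single u (1 : ℤ))).coeff b := by
  set P : AddMonoidAlgebra ℤ (ZMod p) :=
    ∏ u ∈ (univ \ {0} : Finset (ZMod p)), (1 - single u (1 : ℤ)) with hPdef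
  have hinj : Function.Injective (fun z : ZMod p => c * z) :=
    fun x y h => mul_left_cancel₀ hc h
  set φ := AddMonoidAlgebra.mapDomainRingHom ℤ (AddMonoidHom.mulLeft c) with hφdef
  have hfac : ∀ u : ZMod p, φ (1 - single u (1 : ℤ)) = 1 - single (c * u) (1 : ℤ) := by
    intro u
    rw [map_sub, map_one]
    congr 1
    simp [hφdef, AddMonoidAlgebra.mapDomainRingHom_apply, Finsupp.mapDomain_single]
  have hφP : φ P = P := by
    rw [hPdef, map_prod]
    simp only [hfac]
    refine Finset.prod_nbij' (fun u => c * u) (fun u => c⁻¹ * u) ?_ ?_ ?_ ?_ ?_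
    · intro u hu
      simp only [mem_sdiff, mem_univ, mem_singleton, true_and] at hu ⊢
      exact mul_ne_zero hc hu
    · intro u hu
      simp only [mem_sdiff, mem_univ, mem_singleton, true_and] at hu ⊢
      exact mul_ne_zero (inv_ne_zero hc) hu
    · intro u _; field_simp
    · intro u _; field_simp
    · intro u _; rfl
  have happ : (φ P).coeff (c * b) = P.coeff b := by
    show Finsupp.mapDomain (AddMonoidHom.mulLeft c) P.coeff (c * b) = P.coeff b
    have : c * b = (AddMonoidHom.mulLeft c) b := rfl
    rw [this]
    exact Finsupp.mapDomain_apply (fun x y h => mul_left_cancel₀ hc (by simpa using h)) P.coeff b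
  rw [← happ, hφP]

lemma P_eval (hp1 : 1 < p) (ζ : ℂ) (hζ : ζ ^ p = 1) :
    ∏ u ∈ (univ \ {0} : Finset (ZMod p)), (1 - ζ ^ (ZMod.val u))
      = ∑ b : ZMod p,
          ((∏ u ∈ (univ \ {0} : Finset (ZMod p)), (1 - single u (1 : ℤ))).coeff b : ℂ)
            * ζ ^ (ZMod.val b) := by
  haveI : NeZero p := ⟨by omega⟩
  set P : AddMonoidAlgebra ℤ (ZMod p) :=
    ∏ u ∈ (univ \ {0} : Finset (ZMod p)), (1 - single u (1 : ℤ)) with hPdef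
  set ψ := (AddMonoidAlgebra.lift ℤ ℂ (ZMod p)) (AddChar.zmodChar p hζ).toMonoidHom with hψdef
  have hsingle : ∀ (a : ZMod p) (r : ℤ), ψ (single a r) = (r : ℂ) * ζ ^ (ZMod.val a) := by
    intro a r
    rw [hψdef, AddMonoidAlgebra.lift_single]
    simp [AddChar.zmodChar_apply, zsmul_eq_mul]
  have h1 : ψ P = ∏ u ∈ (univ \ {0} : Finset (ZMod p)), (1 - ζ ^ (ZMod.val u)) := by
    rw [hPdef, map_prod]
    refine Finset.prod_congr rfl fun u _ => ?_
    rw [map_sub, map_one, hsingle]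
    simp
  have hPsum : P = ∑ b : ZMod p, single b (P.coeff b) := by
    ext b'
    rw [AddMonoidAlgebra.coeff_sum, Finsupp.finset_sum_apply]
    simp [AddMonoidAlgebra.coeff_single, Finsupp.single_apply]
  have h2 : ψ P = ∑ b : ZMod p, ((P.coeff b : ℂ) * ζ ^ (ZMod.val b)) := by
    conv_lhs => rw [hPsum]
    rw [map_sum]
    exact Finset.sum_congr rfl fun b _ => hsingle b (P.coeff b)
  rw [← h1, h2]

lemma P_values (hp1 : 1 < p) :
    (∏ u ∈ (univ \ {0} : Finset (ZMod p)), (1 - single u (1 : ℤ))).coeff 0 = (p : ℤ) - 1 ∧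
    ∀ b : ZMod p, b ≠ 0 →
      (∏ u ∈ (univ \ {0} : Finset (ZMod p)), (1 - single u (1 : ℤ))).coeff b = -1 := by
  haveI : NeZero p := ⟨by omega⟩
  set P : AddMonoidAlgebra ℤ (ZMod p) :=
    ∏ u ∈ (univ \ {0} : Finset (ZMod p)), (1 - single u (1 : ℤ)) with hPdef
  have hPa : ∀ b : ZMod p, b ≠ 0 → P.coeff b = P.coeff 1 := by
    intro b hb
    simpa using P_invariance p b hb 1
  have hcard : (univ \ {0} : Finset (ZMod p)).card = p - 1 := by
    rw [Finset.card_sdiff_of_subset (by simp)]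
    simp [ZMod.card]
  -- evaluation at ζ = 1
  have e1 : (0 : ℂ) = ∑ b : ZMod p, (P.coeff b : ℂ) := by
    have h := P_eval p hp1 1 (one_pow p)
    rw [Finset.prod_eq_zero (i := (1 : ZMod p)) (by simp) (by simp)] at h
    simpa using h
  -- primitive root evaluation
  obtain ⟨ζ, hζprim⟩ : ∃ ζ : ℂ, IsPrimitiveRoot ζ p :=
    ⟨Complex.exp (2 * Real.pi * Complex.I / p), Complex.isPrimitiveRoot_exp p (by omega)⟩
  have e2 : ((p : ℂ)) = ∑ b : ZMod p, (P.coeff b : ℂ) * ζ ^ (ZMod.val b) := by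
    rw [← P_eval p hp1 ζ hζprim.pow_eq_one]
    -- reindex product over univ \ {0} to range (p-1)
    have hre : ∏ u ∈ (univ \ {0} : Finset (ZMod p)), (1 - ζ ^ (ZMod.val u))
        = ∏ k ∈ range (p - 1), (1 - ζ ^ (k + 1)) := by
      refine Finset.prod_nbij' (fun u => ZMod.val u - 1) (fun k => ((k + 1 : ℕ) : ZMod p))
        ?_ ?_ ?_ ?_ ?_
      · intro u hu
        simp only [mem_sdiff, mem_univ, mem_singleton, true_and] at hu
        have h1 : u.val ≠ 0 := fun h => hu (by rwa [← ZMod.val_eq_zero])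
        have h2 : u.val < p := ZMod.val_lt u
        simp only [mem_range]; omega
      · intro k hk
        simp only [mem_range] at hk
        simp only [mem_sdiff, mem_univ, mem_singleton, true_and]
        intro h
        have := ZMod.val_cast_of_lt (a := k + 1) (by omega : k + 1 < p)
        rw [h, ZMod.val_zero] at this
        omega
      · intro u hu
        simp only [mem_sdiff, mem_univ, mem_singleton, true_and] at hu
        have h1 : u.val ≠ 0 := fun h => hu (by rwa [← ZMod.val_eq_zero])
        show ((u.val - 1 + 1 : ℕ) : ZMod p) = u
        have h4 : u.val - 1 + 1 = u.val := by omega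
        rw [h4, ZMod.natCast_zmod_val]
      · intro k hk
        simp only [mem_range] at hk
        show (((k + 1 : ℕ) : ZMod p)).val - 1 = k
        rw [ZMod.val_cast_of_lt (by omega : k + 1 < p)]
        omega
      · intro u hu
        simp only [mem_sdiff, mem_univ, mem_singleton, true_and] at hu
        have h1 : u.val ≠ 0 := fun h => hu (by rwa [← ZMod.val_eq_zero])
        have : u.val - 1 + 1 = u.val := by omega
        rw [this]
    rw [hre]
    have hprim' : IsPrimitiveRoot ζ ((p - 1) + 1) := by
      have : p - 1 + 1 = p := by omega
      rwa [this]
    have := hprim'.prod_one_sub_pow_eq_order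
    rw [this]
    rw [Nat.cast_sub (by omega : 1 ≤ p)]
    ring
  -- now extract the two linear equations
  have hzero : (0 : ZMod p) ∈ (univ : Finset (ZMod p)) := mem_univ _
  have hsplit : ∀ f : ZMod p → ℂ,
      ∑ b : ZMod p, f b = (∑ b ∈ (univ \ {0} : Finset (ZMod p)), f b) + f 0 := by
    intro f
    rw [Finset.sum_eq_sum_sdiff_singleton_add hzero]
  have hvalsum : ∑ b : ZMod p, ζ ^ (ZMod.val b) = 0 := by
    have hre2 : ∑ b : ZMod p, ζ ^ (ZMod.val b) = ∑ j ∈ range p, ζ ^ j := by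
      refine Finset.sum_nbij' (fun b => ZMod.val b) (fun j => (j : ZMod p)) ?_ ?_ ?_ ?_ ?_
      · intro b _; simp only [mem_range]; exact ZMod.val_lt b
      · intro j _; exact mem_univ _
      · intro b _; exact ZMod.natCast_zmod_val b
      · intro j hj
        simp only [mem_range] at hj
        exact ZMod.val_cast_of_lt hj
      · intro b _; rfl
    rw [hre2]
    exact hζprim.geom_sum_eq_zero hp1
  have e1' : (0 : ℂ) = ((p : ℂ) - 1) * (P.coeff 1 : ℂ) + (P.coeff 0 : ℂ) := by
    rw [e1, hsplit]
    congr 1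
    rw [Finset.sum_congr rfl (fun b hb => by
      rw [hPa b (by simpa [mem_sdiff] using hb)])]
    rw [Finset.sum_const, hcard, nsmul_eq_mul]
    rw [Nat.cast_sub (by omega : 1 ≤ p)]
    push_cast
    ring
  have e2' : (p : ℂ) = (P.coeff 0 : ℂ) - (P.coeff 1 : ℂ) := by
    rw [e2, hsplit]
    have hrest : ∑ b ∈ (univ \ {0} : Finset (ZMod p)), (P.coeff b : ℂ) * ζ ^ (ZMod.val b)
        = (P.coeff 1 : ℂ) * ∑ b ∈ (univ \ {0} : Finset (ZMod p)), ζ ^ (ZMod.val b) := by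
      rw [Finset.mul_sum]
      refine Finset.sum_congr rfl fun b hb => ?_
      rw [hPa b (by simpa [mem_sdiff] using hb)]
    have hrs : ∑ b ∈ (univ \ {0} : Finset (ZMod p)), ζ ^ (ZMod.val b) = -1 := by
      have := hsplit (fun b => ζ ^ (ZMod.val b))
      rw [hvalsum] at this
      simp only [ZMod.val_zero, pow_zero] at this
      linear_combination -this
    rw [hrest, hrs]
    simp
    ring
  have hpne : (p : ℂ) ≠ 0 := Nat.cast_ne_zero.mpr (by omega)
  have hkey : (p : ℂ) * ((P.coeff 1 : ℂ) + 1) = 0 := by linear_combination e2' - e1'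
  have hP1C : (P.coeff 1 : ℂ) = -1 := by
    rcases mul_eq_zero.mp hkey with h | h
    · exact absurd h hpne
    · linear_combination h
  have hP1 : P.coeff 1 = -1 := by exact_mod_cast hP1C
  have hP0 : P.coeff 0 = (p : ℤ) - 1 := by
    have : (P.coeff 0 : ℂ) = (p : ℂ) - 1 := by linear_combination -e2' + hP1C
    exact_mod_cast this
  exact ⟨hP0, fun b hb => (hPa b hb).trans hP1⟩

lemma key_coeff (h2 : orderOf (2 : ZMod p) = p - 1) (a : ZMod p) :
    (∏ j ∈ range p, (1 - single ((2 : ZMod p) ^ j) (1 : ℤ))).coeff a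
      = (if a = 0 then (p : ℤ) else 0) - (if a = 1 then (p : ℤ) else 0) := by
  have hp := (Fact.out : p.Prime)
  have hp1 : 1 < p := hp.one_lt
  haveI : NeZero p := ⟨by omega⟩
  have hpow : (2 : ZMod p) ^ (p - 1) = 1 := by rw [← h2]; exact pow_orderOf_eq_one _
  have h2unit : IsUnit (2 : ZMod p) := IsUnit.of_pow_eq_one hpow (by omega)
  set P : AddMonoidAlgebra ℤ (ZMod p) :=
    ∏ u ∈ (univ \ {0} : Finset (ZMod p)), (1 - single u (1 : ℤ)) with hPdef
  -- the product over range (p-1) equals P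
  have hinj2 : Set.InjOn ((2 : ZMod p) ^ ·) (Set.Iio (p - 1)) := by
    rw [← h2]; exact pow_injOn_Iio_orderOf
  have himage : (range (p - 1)).image (fun j => (2 : ZMod p) ^ j)
      = (univ \ {0} : Finset (ZMod p)) := by
    apply Finset.eq_of_subset_of_card_le
    · intro u hu
      simp only [mem_image, mem_range] at hu
      obtain ⟨j, _, rfl⟩ := hu
      simp only [mem_sdiff, mem_univ, mem_singleton, true_and]
      exact (h2unit.pow j).ne_zero
    · have hc1 : (univ \ {0} : Finset (ZMod p)).card = p - 1 := by
        rw [Finset.card_sdiff_of_subset (by simp)]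
        simp [ZMod.card]
      have hc2 : ((range (p - 1)).image (fun j => (2 : ZMod p) ^ j)).card = p - 1 := by
        rw [Finset.card_image_of_injOn (by rwa [Finset.coe_range])]
        simp
      omega
  have hprodP : ∏ j ∈ range (p - 1), (1 - single ((2 : ZMod p) ^ j) (1 : ℤ)) = P := by
    rw [hPdef, ← himage, Finset.prod_image (by rwa [← Finset.coe_range] at hinj2)]
  -- split off the last factor
  have hsplit : ∏ j ∈ range p, (1 - single ((2 : ZMod p) ^ j) (1 : ℤ))
      = P * (1 - single (1 : ZMod p) (1 : ℤ)) := by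
    have hps : range p = range ((p - 1) + 1) := by congr 1; omega
    rw [hps, Finset.prod_range_succ, hprodP, hpow]
  rw [hsplit]
  have hcoeff : (P * (1 - single (1 : ZMod p) (1 : ℤ))).coeff a = P.coeff a - P.coeff (a - 1) := by
    rw [mul_sub, mul_one, AddMonoidAlgebra.coeff_sub, Finsupp.sub_apply, AddMonoidAlgebra.coeff_mul_single_apply, mul_one, ← sub_eq_add_neg]
  rw [hcoeff]
  obtain ⟨hP0, hP1⟩ := P_values p hp1
  by_cases h0 : a = 0
  · subst h0
    have : (0 : ZMod p) - 1 ≠ 0 := by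
      simp only [zero_sub, ne_eq, neg_eq_zero]
      exact one_ne_zero
    rw [hP0, hP1 _ this]
    rw [if_pos rfl, if_neg (zero_ne_one' (ZMod p))]
    ring
  · by_cases h1 : a = 1
    · subst h1
      rw [hP1 _ h0]
      rw [sub_self, hP0]
      rw [if_neg (one_ne_zero' (ZMod p)), if_pos rfl]
      ring
    · have ha1 : a - 1 ≠ 0 := fun h => h1 (by rwa [sub_eq_zero] at h)
      rw [hP1 _ h0, hP1 _ ha1]
      simp [h0, h1]

lemma coeff_prod_eq_sum : ∀ (k : ℕ) (a : ZMod p),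
    (∏ j ∈ range k, (1 - single ((2 : ZMod p) ^ j) (1 : ℤ))).coeff a
      = ∑ r ∈ range (2 ^ k),
          (if ((r : ZMod p) = a) then (-1 : ℤ) ^ ((Nat.digits 2 r).sum) else 0) := by
  intro k
  induction k with
  | zero =>
    intro a
    simp only [range_zero, Finset.prod_empty, pow_zero, range_one, Finset.sum_singleton]
    rw [AddMonoidAlgebra.one_def]
    simp [Finsupp.single_apply, eq_comm]
  | succ k ih =>
    intro a
    rw [Finset.prod_range_succ]
    have hcoeff : ((∏ j ∈ range k, (1 - single ((2 : ZMod p) ^ j) (1 : ℤ)))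
        * (1 - single ((2 : ZMod p) ^ k) (1 : ℤ))).coeff a
        = (∏ j ∈ range k, (1 - single ((2 : ZMod p) ^ j) (1 : ℤ))).coeff a
          - (∏ j ∈ range k, (1 - single ((2 : ZMod p) ^ j) (1 : ℤ))).coeff (a - 2 ^ k) := by
      rw [mul_sub, mul_one, AddMonoidAlgebra.coeff_sub, Finsupp.sub_apply, AddMonoidAlgebra.coeff_mul_single_apply, mul_one, ← sub_eq_add_neg]
    rw [hcoeff, ih, ih]
    have h2k : 2 ^ (k + 1) = 2 ^ k + 2 ^ k := by ring
    rw [h2k, Finset.sum_range_add, sub_eq_add_neg]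
    congr 1
    rw [← Finset.sum_neg_distrib]
    refine Finset.sum_congr rfl fun r hr => ?_
    simp only [mem_range] at hr
    have hdig : (Nat.digits 2 (2 ^ k + r)).sum = 1 + (Nat.digits 2 r).sum := by
      have := sdig_pow k 1 r hr
      simpa using this
    have hcond : (((2 ^ k + r : ℕ) : ZMod p) = a) ↔ ((r : ZMod p) = a - 2 ^ k) := by
      push_cast
      constructor
      · intro h; rw [← h]; ring
      · intro h; rw [h]; ring
    by_cases hc : ((r : ZMod p) = a - 2 ^ k)
    · rw [if_pos hc, if_pos (hcond.mpr hc), hdig]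
      ring
    · rw [if_neg hc, if_neg (fun h => hc (hcond.mp h)), neg_zero]

end

/-- The Newman sum `S_m(x) = ∑_{0 ≤ n < x, m ∣ n} (-1)^{σ(n)}`, where `σ(n)` is the
number of 1's in the binary expansion of `n`. -/
def newmanSum (m x : ℕ) : ℤ :=
  ∑ n ∈ Finset.range x, if m ∣ n then (-1 : ℤ) ^ (Nat.digits 2 n).sum else 0

/-- If 2 is a primitive root of a prime `p`, then `S_p(2^p x) = p · S_p(2 x)`. -/
theorem newmanSum_pow_prime_primitiveRoot
    (p : ℕ) (hp : p.Prime) (h2 : orderOf (2 : ZMod p) = p - 1) :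
    ∀ x : ℕ, newmanSum p (2 ^ p * x) = p * newmanSum p (2 * x) := by
  haveI : Fact p.Prime := ⟨hp⟩
  haveI : NeZero p := ⟨hp.pos.ne'⟩
  have hp1 : 1 < p := hp.one_lt
  have hpow : (2 : ZMod p) ^ (p - 1) = 1 := by rw [← h2]; exact pow_orderOf_eq_one _
  have hpp : (2 : ZMod p) ^ p = 2 := by
    have h := pow_succ (2 : ZMod p) (p - 1)
    rw [hpow, one_mul] at h
    rw [← h]
    congr 1
    omega
  intro x
  unfold newmanSum
  rw [sum_block, sum_block, Finset.mul_sum]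
  refine Finset.sum_congr rfl fun q hq => ?_
  -- LHS inner sum
  have hdvd : ∀ n : ℕ, (p ∣ n) ↔ ((n : ZMod p) = 0) :=
    fun n => (ZMod.natCast_eq_zero_iff n p).symm
  have lhs_eq : ∑ r ∈ range (2 ^ p),
      (if p ∣ 2 ^ p * q + r then (-1 : ℤ) ^ ((Nat.digits 2 (2 ^ p * q + r)).sum) else 0)
      = (-1 : ℤ) ^ ((Nat.digits 2 q).sum) *
        ∑ r ∈ range (2 ^ p),
          (if ((r : ZMod p) = -(2 * (q : ZMod p))) then (-1 : ℤ) ^ ((Nat.digits 2 r).sum) else 0) := by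
    rw [Finset.mul_sum]
    refine Finset.sum_congr rfl fun r hr => ?_
    simp only [mem_range] at hr
    have hcond : (p ∣ 2 ^ p * q + r) ↔ ((r : ZMod p) = -(2 * (q : ZMod p))) := by
      rw [hdvd]
      push_cast
      rw [hpp]
      constructor
      · intro h
        have : (r : ZMod p) = -(2 * (q : ZMod p)) := by linear_combination h
        exact this
      · intro h; rw [h]; ring
    rw [sdig_pow p q r hr]
    by_cases hc : (r : ZMod p) = -(2 * (q : ZMod p))
    · rw [if_pos (hcond.mpr hc), if_pos hc, pow_add]
    · rw [if_neg (fun h => hc (hcond.mp h)), if_neg hc, mul_zero]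
  rw [lhs_eq]
  -- evaluate the character sum using the key coefficient computation
  have hkey := (coeff_prod_eq_sum p p (-(2 * (q : ZMod p)))).symm.trans
    (key_coeff p h2 (-(2 * (q : ZMod p))))
  rw [hkey]
  -- RHS inner sum
  have rhs_eq : ∑ r ∈ range 2,
      (if p ∣ 2 * q + r then (-1 : ℤ) ^ ((Nat.digits 2 (2 * q + r)).sum) else 0)
      = (-1 : ℤ) ^ ((Nat.digits 2 q).sum) *
        ((if ((2 * (q : ZMod p)) = 0) then 1 else 0)
          - (if ((2 * (q : ZMod p)) = -1) then 1 else 0)) := by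
    rw [show (2 : ℕ) = 1 + 1 from rfl, Finset.sum_range_add]
    simp only [range_one, Finset.sum_singleton, add_zero, Nat.add_zero]
    have hd0 : (Nat.digits 2 (2 * q)).sum = (Nat.digits 2 q).sum := by
      have := sdig q 0 (by norm_num); simpa using this
    have hd1 : (Nat.digits 2 (2 * q + 1)).sum = 1 + (Nat.digits 2 q).sum := by
      exact sdig q 1 (by norm_num)
    have hc0 : (p ∣ 2 * q) ↔ ((2 * (q : ZMod p)) = 0) := by
      rw [hdvd]; push_cast
      constructor <;> (intro h; linear_combination h)
    have hc1 : (p ∣ 2 * q + 1) ↔ ((2 * (q : ZMod p)) = -1) := by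
      rw [hdvd]; push_cast
      constructor
      · intro h; linear_combination h
      · intro h; linear_combination h
    rw [hd0, hd1]
    by_cases h0 : (2 * (q : ZMod p)) = 0 <;> by_cases h1 : (2 * (q : ZMod p)) = -1 <;>
      simp [hc0, hc1, h0, h1, pow_add]
  rw [rhs_eq]
  simp only [neg_eq_iff_eq_neg, neg_zero]
  split_ifs <;> ring
end

section
/- Let p be a prime such that 2 is a primitive root modulo p. Then for all natural numbers x ≤ y, S_p([2^p x, 2^p y)) = p · S_p([2x, 2y)), where S_p([a, b)) denotes S_p(b) − S_p(a). -/
namespace NewmanAux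

open Finset Polynomial

lemma digitsSum_two_mul_add (m t : ℕ) (ht : t < 2) :
    (Nat.digits 2 (2 * m + t)).sum = (Nat.digits 2 m).sum + t := by
  rcases Nat.eq_zero_or_pos (2 * m + t) with h | h
  · have hm : m = 0 := by omega
    have ht0 : t = 0 := by omega
    simp [hm, ht0]
  · rw [Nat.digits_def' (by norm_num) h]
    have h1 : (2 * m + t) % 2 = t := by omega
    have h2 : (2 * m + t) / 2 = m := by omega
    rw [h1, h2]
    simp [Nat.add_comm]

lemma digitsSum_pow_mul_add (k : ℕ) : ∀ n r : ℕ, r < 2 ^ k →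
    (Nat.digits 2 (2 ^ k * n + r)).sum = (Nat.digits 2 n).sum + (Nat.digits 2 r).sum := by
  induction k with
  | zero =>
    intro n r hr
    interval_cases r <;> simp
  | succ k ih =>
    intro n r hr
    have hpow : 2 ^ (k+1) = 2 * 2 ^ k := by rw [pow_succ]; ring
    have h1 : 2 ^ (k+1) * n + r = 2 * (2 ^ k * n + r / 2) + r % 2 := by
      rw [hpow, mul_assoc]; omega
    have h2 : r / 2 < 2 ^ k := by omega
    rw [h1, digitsSum_two_mul_add _ _ (Nat.mod_lt _ (by norm_num)), ih n (r/2) h2]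
    have : (Nat.digits 2 r).sum = (Nat.digits 2 (r/2)).sum + r % 2 := by
      conv_lhs => rw [show r = 2 * (r/2) + r % 2 by omega]
      exact digitsSum_two_mul_add _ _ (Nat.mod_lt _ (by norm_num))
    omega

lemma newmanSum_mul (m c y : ℕ) :
    newmanSum m (c * y) = ∑ n ∈ range y, ∑ r ∈ range c,
      (if m ∣ c * n + r then (-1:ℤ)^(Nat.digits 2 (c*n+r)).sum else 0) := by
  induction y with
  | zero => simp [newmanSum]
  | succ y ih =>
    rw [sum_range_succ, ← ih, show c * (y+1) = c * y + c by ring, newmanSum,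
      Finset.sum_range_add]
    rfl

lemma newmanSum_block (m c x y : ℕ) (hxy : x ≤ y) :
    newmanSum m (c * y) - newmanSum m (c * x) = ∑ n ∈ Finset.Ico x y, ∑ r ∈ range c,
      (if m ∣ c * n + r then (-1:ℤ)^(Nat.digits 2 (c*n+r)).sum else 0) := by
  rw [newmanSum_mul, newmanSum_mul, Finset.sum_Ico_eq_sub _ hxy]

lemma zeta_pow_mod {p : ℕ} {ζ : ℂ} (hζ : IsPrimitiveRoot ζ p) (m : ℕ) :
    ζ ^ m = ζ ^ (m % p) := by
  conv_lhs => rw [← Nat.div_add_mod m p]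
  rw [pow_add, pow_mul, hζ.pow_eq_one, one_pow, one_mul]

lemma ortho {p : ℕ} (hp : 0 < p) {ζ : ℂ} (hζ : IsPrimitiveRoot ζ p) (m : ℕ) :
    ∑ t ∈ range p, ζ ^ (m * t) = if (m : ZMod p) = 0 then (p : ℂ) else 0 := by
  simp_rw [pow_mul]
  split_ifs with h
  · have h1 : ζ ^ m = 1 := (hζ.pow_eq_one_iff_dvd m).2
      ((ZMod.natCast_eq_zero_iff m p).1 h)
    simp [h1]
  · have hne : ζ ^ m ≠ 1 := fun hone =>
      h ((ZMod.natCast_eq_zero_iff m p).2 ((hζ.pow_eq_one_iff_dvd m).1 hone))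
    rw [geom_sum_eq hne, ← pow_mul, mul_comm m p, pow_mul, hζ.pow_eq_one, one_pow,
      sub_self, zero_div]

lemma prod_sub_roots {p : ℕ} (hp : 0 < p) {ζ : ℂ} (hζ : IsPrimitiveRoot ζ p) (z : ℂ) :
    ∏ k ∈ range p, (z - ζ ^ k) = z ^ p - 1 := by
  have h := hζ.pow_sub_pow_eq_prod_sub_mul z 1 hp
  rw [one_pow] at h
  rw [h]
  haveI : NeZero p := ⟨hp.ne'⟩
  refine Finset.prod_nbij (fun i => ζ ^ i) (fun i _ => ?_) (fun i hi j hj hij => ?_)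
    (fun x hx => ?_) (fun i _ => by rw [mul_one])
  · exact (Polynomial.mem_nthRootsFinset hp (1 : ℂ)).2
      (by rw [← pow_mul, mul_comm, pow_mul, hζ.pow_eq_one, one_pow])
  · exact hζ.pow_inj (Finset.mem_range.1 hi) (Finset.mem_range.1 hj) hij
  · obtain ⟨i, hi, rfl⟩ := hζ.eq_pow_of_pow_eq_one
      ((Polynomial.mem_nthRootsFinset hp (1 : ℂ)).1 (Finset.mem_coe.1 hx))
    exact ⟨i, Finset.mem_coe.2 (Finset.mem_range.2 hi), rfl⟩

lemma prod_one_sub_roots {p : ℕ} (hp : 1 < p) {ζ : ℂ} (hζ : IsPrimitiveRoot ζ p) :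
    ∏ k ∈ Finset.Ico 1 p, (1 - ζ ^ k) = p := by
  have hrange : range p = insert 0 (Finset.Ico 1 p) := by
    ext k
    simp only [Finset.mem_range, Finset.mem_insert, Finset.mem_Ico]
    omega
  have key : (X - C 1) * ∏ k ∈ Finset.Ico 1 p, (X - C (ζ ^ k))
      = (X - C 1) * ∑ j ∈ range p, X ^ j := by
    apply Polynomial.funext
    intro z
    simp only [Polynomial.eval_mul, Polynomial.eval_sub, Polynomial.eval_X, Polynomial.eval_C,
      Polynomial.eval_prod, Polynomial.eval_finset_sum, Polynomial.eval_pow]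
    have h1 : (z - 1) * ∏ k ∈ Finset.Ico 1 p, (z - ζ ^ k) = z ^ p - 1 := by
      rw [← prod_sub_roots (by omega : 0 < p) hζ z, hrange,
        Finset.prod_insert (by simp), pow_zero]
    rw [h1, mul_comm, geom_sum_mul]
  have hX1 : (X - C (1:ℂ)) ≠ 0 := Polynomial.X_sub_C_ne_zero 1
  have h2 := mul_left_cancel₀ hX1 key
  have h3 := congrArg (Polynomial.eval 1) h2
  simpa [Polynomial.eval_prod, Polynomial.eval_finset_sum] using h3

lemma prod_factor {p : ℕ} (hp : p.Prime) (hp2 : p ≠ 2)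
    (h2 : orderOf (2 : ZMod p) = p - 1) {ζ : ℂ} (hζ : IsPrimitiveRoot ζ p)
    (t : ℕ) (ht : ¬ p ∣ t) :
    ∏ i ∈ range p, (1 - ζ ^ (2 ^ i * t)) = p * (1 - ζ ^ t) := by
  haveI : Fact p.Prime := ⟨hp⟩
  have hp1 : 1 < p := hp.one_lt
  have hpd2 : ¬ p ∣ 2 := fun h => hp2 ((Nat.prime_dvd_prime_iff_eq hp Nat.prime_two).1 h)
  have hord : (2 : ZMod p) ^ (p - 1) = 1 := h2 ▸ pow_orderOf_eq_one (2 : ZMod p)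
  have htz : (t : ZMod p) ≠ 0 := fun h => ht ((ZMod.natCast_eq_zero_iff t p).1 h)
  have hnd : ∀ i : ℕ, ¬ p ∣ 2 ^ i * t := by
    intro i h
    rcases (Nat.Prime.dvd_mul hp).1 h with h' | h'
    · exact hpd2 (hp.dvd_of_dvd_pow h')
    · exact ht h'
  have hlast : ζ ^ (2 ^ (p - 1) * t) = ζ ^ t := by
    have : ((2 ^ (p - 1) * t : ℕ) : ZMod p) = ((t : ℕ) : ZMod p) := by
      push_cast
      rw [hord, one_mul]
    have hmod := (ZMod.natCast_eq_natCast_iff' _ _ _).1 this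
    rw [zeta_pow_mod hζ (2 ^ (p-1) * t), zeta_pow_mod hζ t, hmod]
  conv_lhs => rw [show p = (p - 1) + 1 by omega, prod_range_succ]
  rw [hlast]
  set ι : ℕ → ℕ := fun i => 2 ^ i * t % p with hι
  have hmem : ∀ i, ι i ∈ Finset.Ico 1 p := by
    intro i
    simp only [Finset.mem_Ico, hι]
    constructor
    · rcases Nat.eq_zero_or_pos (2 ^ i * t % p) with h | h
      · exact absurd (Nat.dvd_of_mod_eq_zero h) (hnd i)
      · omega
    · exact Nat.mod_lt _ hp.pos
  have hinj : Set.InjOn ι ↑(range (p - 1)) := by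
    intro i hi j hj hij
    simp only [Finset.coe_range, Set.mem_Iio] at hi hj
    have hcast : ((2 ^ i * t : ℕ) : ZMod p) = ((2 ^ j * t : ℕ) : ZMod p) := by
      rw [ZMod.natCast_eq_natCast_iff']
      exact hij
    push_cast at hcast
    have h22 : (2 : ZMod p) ^ i = (2 : ZMod p) ^ j := mul_right_cancel₀ htz hcast
    exact pow_injOn_Iio_orderOf (x := (2 : ZMod p)) (by rw [h2]; exact hi)
      (by rw [h2]; exact hj) h22
  have himg : (range (p - 1)).image ι = Finset.Ico 1 p := by
    apply Finset.eq_of_subset_of_card_le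
    · intro k hk
      obtain ⟨i, _, rfl⟩ := Finset.mem_image.1 hk
      exact hmem i
    · rw [Finset.card_image_of_injOn hinj]
      simp [Nat.card_Ico]
  have hfac : ∀ i, (1 : ℂ) - ζ ^ (2 ^ i * t) = 1 - ζ ^ (ι i) := by
    intro i
    rw [hι]
    rw [zeta_pow_mod hζ (2 ^ i * t)]
  calc (∏ i ∈ range (p-1), (1 - ζ ^ (2 ^ i * t))) * (1 - ζ ^ t)
      = (∏ i ∈ range (p-1), (1 - ζ ^ (ι i))) * (1 - ζ ^ t) := by
        congr 1; exact Finset.prod_congr rfl (fun i _ => hfac i)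
    _ = (∏ k ∈ (range (p-1)).image ι, (1 - ζ ^ k)) * (1 - ζ ^ t) := by
        rw [Finset.prod_image
          (fun i hi j hj h => hinj (Finset.mem_coe.2 hi) (Finset.mem_coe.2 hj) h)]
    _ = (p : ℂ) * (1 - ζ ^ t) := by rw [himg, prod_one_sub_roots hp1 hζ]

lemma sum_sign_pow (w : ℂ) (k : ℕ) :
    ∑ r ∈ range (2 ^ k), (-1 : ℂ) ^ (Nat.digits 2 r).sum * w ^ r
      = ∏ i ∈ range k, (1 - w ^ (2 ^ i)) := by
  induction k with
  | zero => simp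
  | succ k ih =>
    rw [prod_range_succ, show 2 ^ (k + 1) = 2 ^ k + 2 ^ k by ring, Finset.sum_range_add]
    have hshift : ∀ r ∈ range (2 ^ k),
        (-1 : ℂ) ^ (Nat.digits 2 (2 ^ k + r)).sum * w ^ (2 ^ k + r)
          = -((-1 : ℂ) ^ (Nat.digits 2 r).sum * w ^ r * w ^ (2 ^ k)) := by
      intro r hr
      have h1 : (Nat.digits 2 (2 ^ k + r)).sum = 1 + (Nat.digits 2 r).sum := by
        have := digitsSum_pow_mul_add k 1 r (Finset.mem_range.1 hr)
        simpa using this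
      rw [h1, pow_add, pow_add]
      ring
    rw [Finset.sum_congr rfl hshift, Finset.sum_neg_distrib, ← Finset.sum_mul, ← ih]
    ring

lemma key_complex {p : ℕ} (hp : p.Prime) (hp2 : p ≠ 2)
    (h2 : orderOf (2 : ZMod p) = p - 1) {ζ : ℂ} (hζ : IsPrimitiveRoot ζ p) (a : ZMod p) :
    ∑ r ∈ range (2 ^ p), (if ((r : ℕ) : ZMod p) = a then (-1 : ℂ) ^ (Nat.digits 2 r).sum else 0)
      = (if a = 0 then (p : ℂ) else 0) - (if a = 1 then (p : ℂ) else 0) := by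
  haveI : Fact p.Prime := ⟨hp⟩
  haveI : NeZero p := ⟨hp.pos.ne'⟩
  set a' : ℕ := (-a).val with ha'def
  have ha' : ((a' : ℕ) : ZMod p) = -a := by
    rw [ha'def, ZMod.natCast_val, ZMod.cast_id]
  set A : ℂ := ∑ r ∈ range (2 ^ p), ∑ t ∈ range p,
    (-1 : ℂ) ^ (Nat.digits 2 r).sum * ζ ^ ((r + a') * t) with hA
  have step1 : A = (p : ℂ) * ∑ r ∈ range (2 ^ p),
      (if ((r : ℕ) : ZMod p) = a then (-1 : ℂ) ^ (Nat.digits 2 r).sum else 0) := by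
    rw [hA, Finset.mul_sum]
    refine Finset.sum_congr rfl fun r _ => ?_
    rw [← Finset.mul_sum, ortho hp.pos hζ (r + a')]
    have hcond : (((r + a' : ℕ)) : ZMod p) = 0 ↔ ((r : ℕ) : ZMod p) = a := by
      push_cast
      rw [ha', add_neg_eq_zero]
    split_ifs with h1 h2 h3
    · ring
    · exact absurd (hcond.1 h1) h2
    · exact absurd (hcond.2 h3) h1
    · ring
  have step2 : A = ∑ t ∈ range p, ζ ^ (a' * t) * ∏ i ∈ range p, (1 - ζ ^ (2 ^ i * t)) := by
    rw [hA, Finset.sum_comm]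
    refine Finset.sum_congr rfl fun t _ => ?_
    have hterm : ∀ r, (-1 : ℂ) ^ (Nat.digits 2 r).sum * ζ ^ ((r + a') * t)
        = ζ ^ (a' * t) * ((-1 : ℂ) ^ (Nat.digits 2 r).sum * (ζ ^ t) ^ r) := by
      intro r
      rw [add_mul, pow_add, ← pow_mul, mul_comm t r, pow_mul]
      ring
    rw [Finset.sum_congr rfl (fun r _ => hterm r), ← Finset.mul_sum, sum_sign_pow (ζ ^ t) p]
    congr 1
    refine Finset.prod_congr rfl fun i _ => ?_
    rw [← pow_mul, mul_comm t (2 ^ i)]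
  have hrange : range p = insert 0 (Finset.Ico 1 p) := by
    ext k
    simp only [Finset.mem_range, Finset.mem_insert, Finset.mem_Ico]
    have := hp.pos
    omega
  have step3 : A = (p : ℂ) * ((if a = 0 then (p : ℂ) else 0) - (if a = 1 then (p : ℂ) else 0)) := by
    rw [step2, hrange, Finset.sum_insert (by simp)]
    have hzero : ζ ^ (a' * 0) * ∏ i ∈ insert 0 (Finset.Ico 1 p), (1 - ζ ^ (2 ^ i * 0)) = 0 := by
      rw [← hrange, Finset.prod_eq_zero (Finset.mem_range.2 hp.pos) (by simp)]
      ring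
    rw [hzero, zero_add]
    have hterm : ∀ t ∈ Finset.Ico 1 p,
        ζ ^ (a' * t) * ∏ i ∈ insert 0 (Finset.Ico 1 p), (1 - ζ ^ (2 ^ i * t))
        = (p : ℂ) * (ζ ^ (a' * t) - ζ ^ ((a' + 1) * t)) := by
      intro t ht
      rw [Finset.mem_Ico] at ht
      have hnd : ¬ p ∣ t := Nat.not_dvd_of_pos_of_lt (by omega) ht.2
      rw [← hrange, prod_factor hp hp2 h2 hζ t hnd, add_mul, one_mul, pow_add]
      ring
    rw [Finset.sum_congr rfl hterm, ← Finset.mul_sum]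
    congr 1
    have hsub : ∀ m : ℕ, ∑ t ∈ Finset.Ico 1 p, ζ ^ (m * t)
        = (if ((m : ℕ) : ZMod p) = 0 then (p : ℂ) else 0) - 1 := by
      intro m
      have := ortho hp.pos hζ m
      rw [hrange, Finset.sum_insert (by simp)] at this
      simp only [mul_zero, pow_zero] at this
      linear_combination this
    rw [Finset.sum_sub_distrib, hsub a', hsub (a' + 1)]
    have c1 : ((a' : ℕ) : ZMod p) = 0 ↔ a = 0 := by rw [ha', neg_eq_zero]
    have c2 : (((a' + 1 : ℕ)) : ZMod p) = 0 ↔ a = 1 := by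
      push_cast
      rw [ha']
      constructor
      · intro h; linear_combination -h
      · intro h; rw [h]; ring
    rw [if_congr c1 rfl rfl, if_congr c2 rfl rfl]
    ring
  have hpne : (p : ℂ) ≠ 0 := Nat.cast_ne_zero.2 hp.pos.ne'
  exact mul_left_cancel₀ hpne (step1.symm.trans step3)

lemma key_int {p : ℕ} (hp : p.Prime) (hp2 : p ≠ 2)
    (h2 : orderOf (2 : ZMod p) = p - 1) (a : ZMod p) :
    ∑ r ∈ range (2 ^ p), (if ((r : ℕ) : ZMod p) = a then (-1 : ℤ) ^ (Nat.digits 2 r).sum else 0)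
      = p * ((if a = 0 then 1 else 0) - (if a = 1 then 1 else 0)) := by
  have hζ := Complex.isPrimitiveRoot_exp p hp.pos.ne'
  have hC := key_complex hp hp2 h2 hζ a
  apply (Int.cast_injective (α := ℂ))
  push_cast
  rw [hC]
  split_ifs <;> ring

end NewmanAux

/-- If 2 is a primitive root of a prime `p`, then
`S_p([2^p x, 2^p y)) = p · S_p([2x, 2y))` for all `x ≤ y`,
where `S_p([a,b)) = S_p(b) - S_p(a)`. -/
theorem newmanSum_interval_prime_primitiveRoot
    (p : ℕ) (hp : p.Prime) (h2 : orderOf (2 : ZMod p) = p - 1) :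
    ∀ x y : ℕ, x ≤ y →
      newmanSum p (2 ^ p * y) - newmanSum p (2 ^ p * x) =
        p * (newmanSum p (2 * y) - newmanSum p (2 * x)) := by
  intro x y hxy
  haveI : Fact p.Prime := ⟨hp⟩
  have hp2 : p ≠ 2 := by
    intro h
    subst h
    have h1 : (2 : ZMod 2) = 1 := orderOf_eq_one_iff.1 h2
    have h0 : (2 : ZMod 2) = 0 := by
      have h00 := ZMod.natCast_self 2
      rwa [Nat.cast_ofNat] at h00
    exact zero_ne_one (h0.symm.trans h1)
  open Finset NewmanAux in
  rw [newmanSum_block p (2^p) x y hxy, newmanSum_block p 2 x y hxy, Finset.mul_sum]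
  refine Finset.sum_congr rfl fun n _ => ?_
  set aZ : ZMod p := -(2 * (n : ZMod p)) with haZ
  -- left inner sum
  have hleft : ∑ r ∈ Finset.range (2^p),
      (if p ∣ 2^p * n + r then (-1:ℤ)^(Nat.digits 2 (2^p*n+r)).sum else 0)
      = (-1:ℤ)^(Nat.digits 2 n).sum * ∑ r ∈ Finset.range (2^p),
        (if ((r : ℕ) : ZMod p) = aZ then (-1 : ℤ) ^ (Nat.digits 2 r).sum else 0) := by
    rw [Finset.mul_sum]
    refine Finset.sum_congr rfl fun r hr => ?_
    have hcond : p ∣ 2^p * n + r ↔ ((r : ℕ) : ZMod p) = aZ := by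
      rw [← ZMod.natCast_eq_zero_iff]
      push_cast
      rw [ZMod.pow_card (2 : ZMod p), haZ]
      constructor
      · intro h; linear_combination h
      · intro h; linear_combination h
    have hval : (Nat.digits 2 (2^p*n+r)).sum
        = (Nat.digits 2 n).sum + (Nat.digits 2 r).sum :=
      NewmanAux.digitsSum_pow_mul_add p n r (Finset.mem_range.1 hr)
    rw [if_congr hcond rfl rfl, hval, pow_add]
    split_ifs <;> ring
  -- right inner sum
  have hright : ∑ r ∈ Finset.range 2,
      (if p ∣ 2 * n + r then (-1:ℤ)^(Nat.digits 2 (2*n+r)).sum else 0)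
      = (-1:ℤ)^(Nat.digits 2 n).sum *
        ((if aZ = 0 then 1 else 0) - (if aZ = 1 then 1 else 0)) := by
    rw [Finset.sum_range_succ, Finset.sum_range_one]
    have hc0 : p ∣ 2 * n + 0 ↔ aZ = 0 := by
      rw [← ZMod.natCast_eq_zero_iff, haZ, neg_eq_zero]
      push_cast
      simp
    have hc1 : p ∣ 2 * n + 1 ↔ aZ = 1 := by
      rw [← ZMod.natCast_eq_zero_iff, haZ]
      push_cast
      constructor
      · intro h; linear_combination -h
      · intro h; linear_combination -h
    have hv0 : (Nat.digits 2 (2*n+0)).sum = (Nat.digits 2 n).sum :=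
      by simpa using NewmanAux.digitsSum_two_mul_add n 0 (by norm_num)
    have hv1 : (Nat.digits 2 (2*n+1)).sum = (Nat.digits 2 n).sum + 1 :=
      NewmanAux.digitsSum_two_mul_add n 1 (by norm_num)
    rw [if_congr hc0 rfl rfl, if_congr hc1 rfl rfl, hv0, hv1, pow_add]
    split_ifs <;> ring
  rw [hleft, hright, NewmanAux.key_int hp hp2 h2 aZ]
  ring
end

section
/- Let p be an odd prime such that 2 is a semiprimitive root of p, i.e., 2 has multiplicative order (p−1)/2 modulo p and the congruence 2^x ≡ −1 (mod p) has no solution. Then for all natural numbers x ≤ y, S_p([2^p x, 2^p y)) = (−1)^{(p−1)/2} · p · S_p([2x, 2y)), where S_p([a, b)) denotes S_p(b) − S_p(a). -/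
open Finset


/- ### Digit-sum helpers -/

private lemma sd_bit (m b : ℕ) (hb : b < 2) :
    (Nat.digits 2 (2 * m + b)).sum = (Nat.digits 2 m).sum + b := by
  interval_cases b
  · rcases Nat.eq_zero_or_pos m with rfl | hm
    · simp
    · rw [add_zero, Nat.digits_def' (by norm_num) (by omega)]
      simp [Nat.mul_div_cancel_left _ (by norm_num : 0 < 2)]
  · rw [Nat.digits_def' (by norm_num) (by omega)]
    have h1 : (2 * m + 1) % 2 = 1 := by omega
    have h2 : (2 * m + 1) / 2 = m := by omega
    rw [h1, h2, List.sum_cons, Nat.add_comm]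

private lemma sd_split : ∀ (t q r : ℕ), r < 2 ^ t →
    (Nat.digits 2 (2 ^ t * q + r)).sum = (Nat.digits 2 q).sum + (Nat.digits 2 r).sum
  | 0, q, r, hr => by
    interval_cases r; simp
  | (t+1), q, r, hr => by
    have hr2 : r / 2 < 2 ^ t := by
      have : (2:ℕ) ^ (t+1) = 2 ^ t * 2 := by ring
      omega
    have h1 : 2 ^ (t+1) * q + r = 2 * (2 ^ t * q + r / 2) + r % 2 := by
      have := Nat.div_add_mod r 2
      ring_nf
      omega
    rw [h1, sd_bit _ _ (Nat.mod_lt _ (by norm_num)), sd_split t q (r / 2) hr2]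
    have h2 : (Nat.digits 2 r).sum = (Nat.digits 2 (r / 2)).sum + r % 2 := by
      conv_lhs => rw [← Nat.div_add_mod r 2]
      exact sd_bit _ _ (Nat.mod_lt _ (by norm_num))
    omega

/- ### Splitting a sum over `range (m * x)` -/

private lemma sum_range_mul {M : Type*} [AddCommMonoid M] (g : ℕ → M) (m : ℕ) :
    ∀ x, ∑ n ∈ Finset.range (m * x), g n
      = ∑ q ∈ Finset.range x, ∑ r ∈ Finset.range m, g (m * q + r)
  | 0 => by simp
  | (x+1) => by
    rw [Nat.mul_succ, Finset.sum_range_add, sum_range_mul g m x, Finset.sum_range_succ]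

/- ### The product formula  ∑_{r<2^t} (-1)^{s r} z^r = ∏_{k<t} (1 - z^{2^k})  -/

private lemma prod_formula {R : Type*} [CommRing R] (z : R) :
    ∀ t, ∑ r ∈ Finset.range (2 ^ t), (-1 : R) ^ (Nat.digits 2 r).sum * z ^ r
      = ∏ k ∈ Finset.range t, (1 - z ^ 2 ^ k)
  | 0 => by simp
  | (t+1) => by
    have h2 : (2:ℕ) ^ (t+1) = 2 * 2 ^ t := by ring
    rw [h2, sum_range_mul]
    have hq : ∀ q : ℕ, ∑ r ∈ Finset.range 2, (-1 : R) ^ (Nat.digits 2 (2 * q + r)).sum * z ^ (2 * q + r)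
        = (1 - z) * ((-1) ^ (Nat.digits 2 q).sum * (z ^ 2) ^ q) := by
      intro q
      have e0 := sd_bit q 0 (by norm_num)
      rw [add_zero] at e0
      rw [Finset.sum_range_succ, Finset.sum_range_one, add_zero, e0,
        sd_bit q 1 (by norm_num),
        pow_succ ((-1:R)) _, pow_succ z, pow_mul]
      ring
    rw [Finset.sum_congr rfl fun q _ => hq q, ← Finset.mul_sum, prod_formula (z ^ 2) t,
      Finset.prod_range_succ']
    have hk : ∀ k, (1 - (z ^ 2) ^ 2 ^ k) = 1 - z ^ 2 ^ (k + 1) := by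
      intro k
      rw [← pow_mul, pow_succ, mul_comm (2^k) 2]
    rw [Finset.prod_congr rfl fun k _ => hk k, pow_zero, pow_one]
    ring


private lemma sum_val (p : ℕ) [NeZero p] {M : Type*} [AddCommMonoid M] (f : ℕ → M) :
    ∑ j : ZMod p, f j.val = ∑ k ∈ Finset.range p, f k := by
  refine Finset.sum_nbij' (t := Finset.range p) (g := f) (fun j => j.val)
    (fun k => (k : ZMod p)) ?_ ?_ ?_ ?_ ?_
  · intro a _; exact Finset.mem_range.mpr (ZMod.val_lt a)
  · intro a _; exact Finset.mem_univ _
  · intro a _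
    simp [ZMod.natCast_val, ZMod.cast_id]
  · intro a ha
    exact ZMod.val_cast_of_lt (Finset.mem_range.mp ha)
  · intro a _; rfl

/-- For a primitive `p`-th root of unity `z` in `ℂ` (`p` prime),
`∏_{a ≠ 0} (1 - z^{a.val}) = p`. -/
private lemma prod_erase_zero (p : ℕ) (hp : p.Prime) [Fact p.Prime] {z : ℂ}
    (hprim : IsPrimitiveRoot z p) :
    ∏ a ∈ Finset.univ.erase (0 : ZMod p), (1 - z ^ a.val) = (p : ℂ) := by
  have h1 : ∏ a ∈ Finset.univ.erase (0 : ZMod p), (1 - z ^ a.val)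
      = ∏ k ∈ Finset.Ico 1 p, (1 - z ^ k) := by
    refine Finset.prod_nbij' (t := Finset.Ico 1 p) (g := fun k => 1 - z ^ k)
      (fun a => a.val) (fun k => (k : ZMod p)) ?_ ?_ ?_ ?_ ?_
    · intro a ha
      rw [Finset.mem_erase] at ha
      rw [Finset.mem_Ico]
      refine ⟨Nat.one_le_iff_ne_zero.mpr (fun h => ha.1 ?_), ZMod.val_lt a⟩
      exact (ZMod.val_eq_zero a).mp h
    · intro k hk
      rw [Finset.mem_Ico] at hk
      rw [Finset.mem_erase]
      constructor
      · intro h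
        replace h : ((k : ZMod p)) = 0 := h
        have := ZMod.val_cast_of_lt hk.2
        rw [h, ZMod.val_zero] at this
        omega
      · exact Finset.mem_univ _
    · intro a _; simp [ZMod.natCast_val, ZMod.cast_id]
    · intro k hk; exact ZMod.val_cast_of_lt (Finset.mem_Ico.mp hk).2
    · intro a _; rfl
  have himg : (Finset.Ico 1 p).image (z ^ ·) = primitiveRoots p ℂ := by
    apply Finset.eq_of_subset_of_card_le
    · intro μ hμ
      obtain ⟨k, hk, rfl⟩ := Finset.mem_image.mp hμ
      rw [Finset.mem_Ico] at hk
      rw [mem_primitiveRoots hp.pos]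
      apply hprim.pow_of_coprime
      exact Nat.Coprime.symm (hp.coprime_iff_not_dvd.mpr
        (fun h => absurd (Nat.le_of_dvd (by omega) h) (by omega)))
    · rw [hprim.card_primitiveRoots, Nat.totient_prime hp,
        Finset.card_image_of_injOn, Nat.card_Ico]
      intro i hi j hj hij
      exact hprim.injOn_pow (by simp at hi ⊢; omega) (by simp at hj ⊢; omega) hij
  have hinj : ∀ x ∈ Finset.Ico 1 p, ∀ y ∈ Finset.Ico 1 p, z ^ x = z ^ y → x = y := by
    intro i hi j hj hij
    exact hprim.injOn_pow (by simp at hi ⊢; omega) (by simp at hj ⊢; omega) hij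
  have h2 : ∏ k ∈ Finset.Ico 1 p, (1 - z ^ k)
      = ∏ μ ∈ primitiveRoots p ℂ, (1 - μ) := by
    rw [← himg, Finset.prod_image hinj]
  have h3 : Polynomial.eval 1 (Polynomial.cyclotomic p ℂ)
      = ∏ μ ∈ primitiveRoots p ℂ, (1 - μ) := by
    rw [Polynomial.cyclotomic_eq_prod_X_sub_primitiveRoots hprim, Polynomial.eval_prod]
    exact Finset.prod_congr rfl fun μ _ => by simp
  have h4 : Polynomial.eval 1 (Polynomial.cyclotomic p ℂ) = (p : ℂ) := by
    exact_mod_cast Polynomial.eval_one_cyclotomic_prime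
  rw [h1, h2, ← h3, h4]

private lemma orth (p : ℕ) (hp : p.Prime) [Fact p.Prime] {z : ℂ}
    (hprim : IsPrimitiveRoot z p) (m : ℕ) :
    ∑ j : ZMod p, z ^ (j.val * m) = if (m : ZMod p) = 0 then (p : ℂ) else 0 := by
  have hz : z ^ p = 1 := hprim.pow_eq_one
  have hzmod : ∀ n : ℕ, z ^ n = z ^ (n % p) := fun n => by
    conv_lhs => rw [← Nat.div_add_mod n p, pow_add, pow_mul, hz, one_pow, one_mul]
  split_ifs with h
  · obtain ⟨t, rfl⟩ := (ZMod.natCast_eq_zero_iff m p).mp h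
    have : ∀ j : ZMod p, z ^ (j.val * (p * t)) = 1 := by
      intro j
      rw [show j.val * (p * t) = p * (j.val * t) by ring, pow_mul, hz, one_pow]
    rw [Finset.sum_congr rfl fun j _ => this j, Finset.sum_const, Finset.card_univ,
      ZMod.card, nsmul_eq_mul, mul_one]
  · have key : ∀ j : ZMod p, z ^ (j.val * m) = z ^ ((j * (m : ZMod p)).val) := by
    -- (j * m).val = (j.val * m.val) % p, m.val = m % p
      intro j
      rw [ZMod.val_mul, ZMod.val_natCast, ← hzmod]
      rw [hzmod (j.val * m), hzmod (j.val * (m % p))]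
      congr 1
      exact (Nat.ModEq.mul_left j.val (Nat.mod_modEq m p)).symm
    rw [Finset.sum_congr rfl fun j _ => key j]
    have hbij := (Equiv.mulRight₀ ((m : ZMod p)) h).bijective
    rw [show (∑ j : ZMod p, z ^ (j * (m : ZMod p)).val) = ∑ j : ZMod p, z ^ j.val from
      Fintype.sum_bijective _ hbij _ _ (fun x => rfl)]
    rw [sum_val p (fun k => z ^ k)]
    exact hprim.geom_sum_eq_zero hp.one_lt



private theorem prod_block (p : ℕ) (hp : p.Prime) (hodd : Odd p)
    (horder : orderOf (2 : ZMod p) = (p - 1) / 2)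
    (hnosol : ¬ ∃ x : ℕ, (2 : ZMod p) ^ x = -1)
    {z : ℂ} (hz : z ^ p = 1) :
    ∏ k ∈ Finset.range p, (1 - z ^ 2 ^ k)
      = (-1) ^ ((p - 1) / 2) * (p : ℂ) * (1 - z) := by
  haveI : Fact p.Prime := ⟨hp⟩
  haveI : Fact (1 < p) := ⟨hp.one_lt⟩
  set d := (p - 1) / 2 with hd
  have hodd' := Nat.odd_iff.mp hodd
  have hp2 := hp.two_le
  have hp3 : 3 ≤ p := by omega
  have hpd : p = 2 * d + 1 := by omega
  have hd1 : 1 ≤ d := by omega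
  by_cases hz1 : z = 1
  · subst hz1
    rw [Finset.prod_eq_zero (Finset.mem_range.mpr hp.pos) (by simp)]
    simp
  have hord : orderOf z = p := by
    have h1 : orderOf z ∣ p := orderOf_dvd_of_pow_eq_one hz
    rcases (Nat.Prime.eq_one_or_self_of_dvd hp _ h1) with h | h
    · exact absurd (orderOf_eq_one_iff.mp h) hz1
    · exact h
  have hprim : IsPrimitiveRoot z p := hord ▸ IsPrimitiveRoot.orderOf z
  have hzmod : ∀ n : ℕ, z ^ n = z ^ (n % p) := fun n => by
    conv_lhs => rw [← Nat.div_add_mod n p, pow_add, pow_mul, hz, one_pow, one_mul]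
  have h2d : (2 : ZMod p) ^ d = 1 := by rw [← horder]; exact pow_orderOf_eq_one 2
  have htwo_ne : (2 : ZMod p) ≠ 0 := by
    intro h
    have h2 : ((2 : ℕ) : ZMod p) = 0 := by exact_mod_cast h
    have h3 := Nat.le_of_dvd (by norm_num) ((ZMod.natCast_eq_zero_iff 2 p).mp h2)
    omega
  have hpow_ne : ∀ k : ℕ, (2 : ZMod p) ^ k ≠ 0 := fun k => pow_ne_zero k htwo_ne
  have hval : ∀ k : ℕ, ((2 : ZMod p) ^ k).val = 2 ^ k % p := by
    intro k
    have h1 : ((2 : ZMod p)) ^ k = (((2 ^ k : ℕ)) : ZMod p) := by push_cast; ring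
    rw [h1, ZMod.val_natCast]
  have hphi : ∀ k : ℕ, 1 - z ^ 2 ^ k = 1 - z ^ ((2 : ZMod p) ^ k).val := by
    intro k; rw [hval, ← hzmod]
  have hper : ∀ k : ℕ, ((2 : ZMod p) ^ k) = (2 : ZMod p) ^ (k % d) := by
    intro k
    conv_lhs => rw [← Nat.div_add_mod k d, pow_add, pow_mul, h2d, one_pow, one_mul]
  set A : ℂ := ∏ k ∈ Finset.range d, (1 - z ^ ((2 : ZMod p) ^ k).val) with hA
  -- split the product over `range p` as `A * A * (1 - z)`
  have hsplit : ∏ k ∈ Finset.range p, (1 - z ^ 2 ^ k) = A * A * (1 - z) := by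
    rw [Finset.prod_congr rfl fun k _ => hphi k]
    rw [show Finset.range p = Finset.range ((d + d) + 1) by congr 1; omega]
    rw [Finset.prod_range_succ, Finset.prod_range_add]
    have e1 : ∀ k, (1 : ℂ) - z ^ ((2 : ZMod p) ^ (d + k)).val
        = 1 - z ^ ((2 : ZMod p) ^ k).val := by
      intro k
      rw [hper (d + k), Nat.add_mod_left, ← hper k]
    have e2 : (1 : ℂ) - z ^ ((2 : ZMod p) ^ (d + d)).val = 1 - z := by
      rw [hper (d + d), show (d + d) % d = 0 by rw [Nat.add_mod_left, Nat.mod_self],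
        pow_zero, ZMod.val_one, pow_one]
    rw [Finset.prod_congr rfl fun k _ => e1 k, e2, hA]
  -- the set S of powers of 2
  set S : Finset (ZMod p) := (Finset.range d).image (fun k => (2 : ZMod p) ^ k) with hS
  have hinj : ∀ i ∈ Finset.range d, ∀ j ∈ Finset.range d,
      (2 : ZMod p) ^ i = (2 : ZMod p) ^ j → i = j := by
    intro i hi j hj hij
    rw [Finset.mem_range] at hi hj
    by_contra hne
    wlog hlt : i < j generalizing i j
    · exact this j hj i hi hij.symm (Ne.symm hne) (by omega)
    have h1 : (2 : ZMod p) ^ i * (2 : ZMod p) ^ (j - i) = (2 : ZMod p) ^ i * 1 := by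
      rw [mul_one, ← pow_add, show i + (j - i) = j by omega]
      exact hij.symm
    have h2 : (2 : ZMod p) ^ (j - i) = 1 := mul_left_cancel₀ (hpow_ne i) h1
    have h3 := orderOf_le_of_pow_eq_one (show 0 < j - i by omega) h2
    rw [horder] at h3
    omega
  have hScard : S.card = d := by
    rw [hS, Finset.card_image_of_injOn, Finset.card_range]
    intro i hi j hj hij
    exact hinj i (by simpa using hi) j (by simpa using hj) hij
  have hclosed : ∀ a ∈ S, 2 * a ∈ S := by
    intro a ha
    obtain ⟨k, hk, rfl⟩ := Finset.mem_image.mp ha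
    rw [Finset.mem_range] at hk
    rcases Nat.lt_or_ge (k + 1) d with h | h
    · exact Finset.mem_image.mpr ⟨k + 1, Finset.mem_range.mpr h, by rw [pow_succ]; ring⟩
    · refine Finset.mem_image.mpr ⟨0, Finset.mem_range.mpr (by omega), ?_⟩
      have hkd : k + 1 = d := by omega
      rw [pow_zero, ← h2d, ← hkd, pow_succ]
      ring
  have hsum0 : ∑ a ∈ S, a = 0 := by
    have himg : S.image (fun a => 2 * a) = S := by
      apply Finset.eq_of_subset_of_card_le
      · intro b hb
        obtain ⟨a, ha, rfl⟩ := Finset.mem_image.mp hb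
        exact hclosed a ha
      · rw [Finset.card_image_of_injective _ (mul_right_injective₀ htwo_ne)]
    have h1 : ∑ b ∈ S.image (fun a => 2 * a), b = ∑ a ∈ S, 2 * a :=
      Finset.sum_image (fun x _ y _ h => mul_left_cancel₀ htwo_ne h)
    rw [himg] at h1
    have h2 : ∑ a ∈ S, 2 * a = 2 * ∑ a ∈ S, a := by rw [Finset.mul_sum]
    have h3 : (∑ a ∈ S, a) = 2 * ∑ a ∈ S, a := by rw [← h2, ← h1]
    linear_combination -h3
  set T : Finset (ZMod p) := S.image (fun a => -a) with hT
  have hTcard : T.card = d := by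
    rw [hT, Finset.card_image_of_injective _ neg_injective, hScard]
  have hdisj : Disjoint S T := by
    rw [Finset.disjoint_left]
    intro a haS haT
    obtain ⟨b, hbS, hba⟩ := Finset.mem_image.mp haT
    obtain ⟨i, hi, rfl⟩ := Finset.mem_image.mp haS
    obtain ⟨j, hj, rfl⟩ := Finset.mem_image.mp hbS
    rw [Finset.mem_range] at hi hj
    apply hnosol
    refine ⟨i + (d - j), ?_⟩
    rw [pow_add, ← hba, neg_mul, ← pow_add, show j + (d - j) = d by omega, h2d]
  have hunion : S ∪ T = Finset.univ.erase (0 : ZMod p) := by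
    apply Finset.eq_of_subset_of_card_le
    · intro a ha
      rcases Finset.mem_union.mp ha with h | h
      · obtain ⟨k, _, rfl⟩ := Finset.mem_image.mp h
        exact Finset.mem_erase.mpr ⟨hpow_ne k, Finset.mem_univ _⟩
      · obtain ⟨b, hb, rfl⟩ := Finset.mem_image.mp h
        obtain ⟨k, _, rfl⟩ := Finset.mem_image.mp hb
        exact Finset.mem_erase.mpr ⟨neg_ne_zero.mpr (hpow_ne k), Finset.mem_univ _⟩
    · rw [Finset.card_union_of_disjoint hdisj, hScard, hTcard,
        Finset.card_erase_of_mem (Finset.mem_univ _), Finset.card_univ, ZMod.card]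
      omega
  have hprodST : (∏ a ∈ S, (1 - z ^ a.val)) * (∏ a ∈ T, (1 - z ^ a.val)) = (p : ℂ) := by
    rw [← Finset.prod_union hdisj, hunion]
    exact prod_erase_zero p hp hprim
  have hAS : A = ∏ a ∈ S, (1 - z ^ a.val) := by
    rw [hA, hS, Finset.prod_image hinj]
  have hsumval : (∑ a ∈ S, (-a).val) % p = 0 := by
    have hcast : ((∑ a ∈ S, (-a).val : ℕ) : ZMod p) = 0 := by
      push_cast
      rw [Finset.sum_congr rfl (fun a _ => by rw [ZMod.natCast_val, ZMod.cast_id])]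
      rw [Finset.sum_neg_distrib, hsum0, neg_zero]
    have hdvd : p ∣ ∑ a ∈ S, (-a).val := (ZMod.natCast_eq_zero_iff _ p).mp hcast
    obtain ⟨t, ht⟩ := hdvd
    simp [ht, Nat.mul_mod_right]
  have hTprod : ∏ a ∈ T, (1 - z ^ a.val) = (-1) ^ d * A := by
    rw [hT, Finset.prod_image (fun x _ y _ h => neg_injective h)]
    have hterm : ∀ a ∈ S, (1 : ℂ) - z ^ (-a).val = (-(z ^ (-a).val)) * (1 - z ^ a.val) := by
      intro a ha
      have ha0 : a ≠ 0 := by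
        obtain ⟨k, _, rfl⟩ := Finset.mem_image.mp ha
        exact hpow_ne k
      have hvs : (-a).val + a.val = p := by
        rw [ZMod.neg_val, if_neg ha0]
        have h1 := ZMod.val_lt a
        have h2 : a.val ≠ 0 := fun h => ha0 ((ZMod.val_eq_zero a).mp h)
        omega
      have hzz : z ^ (-a).val * z ^ a.val = 1 := by rw [← pow_add, hvs, hz]
      linear_combination -hzz
    rw [Finset.prod_congr rfl hterm, Finset.prod_mul_distrib, ← hAS]
    congr 1
    have h1 : ∀ a ∈ S, -(z ^ (-a).val) = (-1) * z ^ (-a).val := fun a _ => by ring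
    rw [Finset.prod_congr rfl h1, Finset.prod_mul_distrib, Finset.prod_const, hScard,
      Finset.prod_pow_eq_pow_sum]
    rw [hzmod (∑ a ∈ S, (-a).val), hsumval, pow_zero, mul_one]
  have hA2 : A * A = (-1) ^ d * (p : ℂ) := by
    have h1 : A * ((-1) ^ d * A) = (p : ℂ) := by
      rw [← hTprod, hAS]
      exact hprodST
    have h2 : ((-1 : ℂ) ^ d) * ((-1 : ℂ) ^ d) = 1 := by
      rw [← pow_add]
      exact Even.neg_one_pow ⟨d, rfl⟩
    linear_combination ((-1 : ℂ) ^ d) * h1 - A * A * h2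
  rw [hsplit, hA2]

private theorem F_eq (p : ℕ) (hp : p.Prime) (hodd : Odd p)
    (horder : orderOf (2 : ZMod p) = (p - 1) / 2)
    (hnosol : ¬ ∃ x : ℕ, (2 : ZMod p) ^ x = -1) (a : ZMod p) :
    (∑ r ∈ Finset.range (2 ^ p), if ((r : ZMod p)) = a
        then (-1 : ℤ) ^ (Nat.digits 2 r).sum else 0)
      = (-1) ^ ((p - 1) / 2) * (p : ℤ) *
        (if a = 0 then 1 else if a = 1 then -1 else 0) := by
  haveI : Fact p.Prime := ⟨hp⟩
  have hprim : IsPrimitiveRoot (Complex.exp (2 * Real.pi * Complex.I / p)) p :=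
    Complex.isPrimitiveRoot_exp p hp.ne_zero
  set ζ : ℂ := Complex.exp (2 * Real.pi * Complex.I / p) with hζ
  have hzp : ζ ^ p = 1 := hprim.pow_eq_one
  have hp0 : (p : ℂ) ≠ 0 := Nat.cast_ne_zero.mpr hp.ne_zero
  set c : ℂ := (-1) ^ ((p - 1) / 2) * (p : ℂ) with hc
  set L : ℂ := ∑ r ∈ Finset.range (2 ^ p), if ((r : ZMod p)) = a
      then (-1 : ℂ) ^ (Nat.digits 2 r).sum else 0 with hL
  set R : ℂ := if a = 0 then 1 else if a = 1 then (-1 : ℂ) else 0 with hR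
  have horthr : ∀ r : ℕ, (if ((r : ZMod p)) = a then (p : ℂ) else 0)
      = ∑ j : ZMod p, ζ ^ (j.val * ((-a).val + r)) := by
    intro r
    have hiff : ((((-a).val + r : ℕ) : ZMod p) = 0) ↔ ((r : ZMod p) = a) := by
      push_cast [ZMod.natCast_val, ZMod.cast_id]
      constructor
      · intro h; linear_combination h
      · intro h; rw [h]; ring
    rw [orth p hp hprim ((-a).val + r), if_congr hiff rfl rfl]
  have key : (p : ℂ) * L = (p : ℂ) * (c * R) := by
    have step1 : (p : ℂ) * L = ∑ r ∈ Finset.range (2 ^ p),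
        (-1 : ℂ) ^ (Nat.digits 2 r).sum * ∑ j : ZMod p, ζ ^ (j.val * ((-a).val + r)) := by
      rw [hL, Finset.mul_sum]
      refine Finset.sum_congr rfl fun r _ => ?_
      rw [← horthr r]
      split_ifs <;> ring
    have step2 : (p : ℂ) * L = ∑ j : ZMod p,
        ζ ^ (j.val * (-a).val) * ∏ k ∈ Finset.range p, (1 - (ζ ^ j.val) ^ 2 ^ k) := by
      rw [step1]
      simp only [Finset.mul_sum]
      rw [Finset.sum_comm]
      refine Finset.sum_congr rfl fun j _ => ?_
      rw [← prod_formula (ζ ^ j.val) p, Finset.mul_sum]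
      refine Finset.sum_congr rfl fun r _ => ?_
      rw [Nat.mul_add, pow_add, pow_mul]
      ring
    have step3 : (p : ℂ) * L = c * ((∑ j : ZMod p, ζ ^ (j.val * (-a).val))
        - ∑ j : ZMod p, ζ ^ (j.val * ((-a).val + 1))) := by
      rw [step2]
      have hterm : ∀ j : ZMod p, ζ ^ (j.val * (-a).val)
            * ∏ k ∈ Finset.range p, (1 - (ζ ^ j.val) ^ 2 ^ k)
          = c * (ζ ^ (j.val * (-a).val) - ζ ^ (j.val * ((-a).val + 1))) := by
        intro j
        have hz1 : (ζ ^ j.val) ^ p = 1 := by rw [← pow_mul, mul_comm, pow_mul, hzp, one_pow]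
        rw [prod_block p hp hodd horder hnosol hz1, ← hc]
        have he : ζ ^ (j.val * ((-a).val + 1)) = ζ ^ (j.val * (-a).val) * ζ ^ j.val := by
          rw [Nat.mul_add, mul_one, pow_add]
        rw [he]; ring
      rw [Finset.sum_congr rfl fun j _ => hterm j, ← Finset.mul_sum, Finset.sum_sub_distrib]
    rw [step3, orth p hp hprim ((-a).val), orth p hp hprim ((-a).val + 1)]
    have hc1 : ((((-a).val : ℕ)) : ZMod p) = -a := by rw [ZMod.natCast_val, ZMod.cast_id]
    have hc2 : ((((-a).val + 1 : ℕ)) : ZMod p) = -a + 1 := by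
      push_cast [ZMod.natCast_val, ZMod.cast_id]; ring
    rw [if_congr (show (((((-a).val : ℕ)) : ZMod p) = 0) ↔ a = 0 by rw [hc1, neg_eq_zero]) rfl rfl,
      if_congr (show (((((-a).val + 1 : ℕ)) : ZMod p) = 0) ↔ a = 1 by rw [hc2, neg_add_eq_zero]) rfl rfl,
      hR]
    by_cases h0 : a = 0 <;> by_cases h1 : a = 1
    · exfalso; rw [h0] at h1; exact zero_ne_one h1
    · rw [if_pos h0, if_neg h1, if_pos h0]; ring
    · rw [if_neg h0, if_pos h1, if_neg h0, if_pos h1]; ring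
    · rw [if_neg h0, if_neg h1, if_neg h0, if_neg h1]; ring
  have hLcR : L = c * R := mul_left_cancel₀ hp0 key
  have h1 : ((∑ r ∈ Finset.range (2 ^ p), if ((r : ZMod p)) = a
      then (-1 : ℤ) ^ (Nat.digits 2 r).sum else 0 : ℤ) : ℂ) = L := by
    rw [hL, Int.cast_sum]
    refine Finset.sum_congr rfl fun r _ => ?_
    split_ifs <;> push_cast <;> ring
  have h2 : (((-1 : ℤ) ^ ((p - 1) / 2) * (p : ℤ)
      * (if a = 0 then 1 else if a = 1 then -1 else 0) : ℤ) : ℂ) = c * R := by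
    rw [hc, hR]
    split_ifs <;> push_cast <;> ring
  have hfin := hLcR
  rw [← h1, ← h2] at hfin
  exact_mod_cast hfin

private theorem newman_block (p : ℕ) (hp : p.Prime) (hodd : Odd p)
    (horder : orderOf (2 : ZMod p) = (p - 1) / 2)
    (hnosol : ¬ ∃ x : ℕ, (2 : ZMod p) ^ x = -1) (x : ℕ) :
    newmanSum p (2 ^ p * x) = (-1) ^ ((p - 1) / 2) * (p : ℤ) * newmanSum p (2 * x) := by
  haveI : Fact p.Prime := ⟨hp⟩
  have hp2 := hp.two_le
  have hodd' := Nat.odd_iff.mp hodd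
  have h2d : (2 : ZMod p) ^ ((p - 1) / 2) = 1 := by
    rw [← horder]; exact pow_orderOf_eq_one 2
  have h2p : (2 : ZMod p) ^ p = 2 := by
    have h : (2 : ZMod p) ^ p = ((2 : ZMod p) ^ ((p - 1) / 2)) ^ 2 * 2 := by
      rw [← pow_mul, ← pow_succ]
      congr 1
      omega
    rw [h, h2d, one_pow, one_mul]
  unfold newmanSum
  rw [sum_range_mul, sum_range_mul, Finset.mul_sum]
  refine Finset.sum_congr rfl fun q _ => ?_
  have hL : (∑ r ∈ Finset.range (2 ^ p), if p ∣ 2 ^ p * q + r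
        then (-1 : ℤ) ^ (Nat.digits 2 (2 ^ p * q + r)).sum else 0)
      = (-1 : ℤ) ^ (Nat.digits 2 q).sum *
        (∑ r ∈ Finset.range (2 ^ p), if ((r : ZMod p)) = -((2 * q : ℕ) : ZMod p)
          then (-1 : ℤ) ^ (Nat.digits 2 r).sum else 0) := by
    rw [Finset.mul_sum]
    refine Finset.sum_congr rfl fun r hr => ?_
    rw [Finset.mem_range] at hr
    rw [sd_split p q r hr]
    have hcond : (p ∣ 2 ^ p * q + r) ↔ ((r : ZMod p)) = -((2 * q : ℕ) : ZMod p) := by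
      rw [← ZMod.natCast_eq_zero_iff]
      push_cast [h2p]
      constructor
      · intro h; linear_combination h
      · intro h; linear_combination h
    rw [if_congr hcond rfl rfl]
    split_ifs
    · rw [pow_add]
    · ring
  rw [hL, F_eq p hp hodd horder hnosol (-((2 * q : ℕ) : ZMod p))]
  rw [Finset.sum_range_succ, Finset.sum_range_one, add_zero]
  have e0 := sd_bit q 0 (by norm_num)
  rw [add_zero] at e0
  rw [e0, sd_bit q 1 (by norm_num)]
  have hc1 : (-((2 * q : ℕ) : ZMod p) = 0) ↔ p ∣ 2 * q := by
    rw [neg_eq_zero, ZMod.natCast_eq_zero_iff]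
  have hc2 : (-((2 * q : ℕ) : ZMod p) = 1) ↔ p ∣ 2 * q + 1 := by
    rw [← ZMod.natCast_eq_zero_iff]
    push_cast
    constructor
    · intro h; linear_combination -h
    · intro h; linear_combination -h
  by_cases h1 : p ∣ 2 * q <;> by_cases h2 : p ∣ 2 * q + 1
  · exfalso
    have h3 := Nat.dvd_sub h2 h1
    simp only [Nat.add_sub_cancel_left] at h3
    have := Nat.le_of_dvd (by norm_num) h3
    omega
  · rw [if_pos (hc1.mpr h1), if_pos h1, if_neg h2]; ring
  · rw [if_neg (fun h => h1 (hc1.mp h)), if_pos (hc2.mpr h2), if_neg h1, if_pos h2, pow_succ]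
    ring
  · rw [if_neg (fun h => h1 (hc1.mp h)), if_neg (fun h => h2 (hc2.mp h)), if_neg h1, if_neg h2]
    ring


/-- If 2 is a semiprimitive root of an odd prime `p`, then
`S_p([2^p x, 2^p y)) = (-1)^{(p-1)/2} p · S_p([2x, 2y))` for all `x ≤ y`,
where `S_p([a,b)) = S_p(b) - S_p(a)`. -/
theorem newmanSum_interval_prime_semiprimitiveRoot
    (p : ℕ) (hp : p.Prime) (hodd : Odd p)
    (horder : orderOf (2 : ZMod p) = (p - 1) / 2)
    (hnosol : ¬ ∃ x : ℕ, (2 : ZMod p) ^ x = -1) :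
    ∀ x y : ℕ, x ≤ y →
      newmanSum p (2 ^ p * y) - newmanSum p (2 ^ p * x) =
        (-1) ^ ((p - 1) / 2) * p * (newmanSum p (2 * y) - newmanSum p (2 * x)) := by
  intro x y _
  rw [newman_block p hp hodd horder hnosol y, newman_block p hp hodd horder hnosol x]
  ring
end

section
/- Let p be an odd prime such that 2 is either a primitive root modulo p, or a semiprimitive root of p (i.e., 2 has multiplicative order (p−1)/2 modulo p and 2^x ≡ −1 (mod p) has no solution). Then S_p(x) = O(x^{ln p / ((p−1) ln 2)}); that is, there exists a constant C > 0 such that |S_p(x)| ≤ C · x^{ln p / ((p−1) ln 2)} for all natural numbers x ≥ 1. -/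
open Real

open Finset

noncomputable section NS

/-- binary digit sum -/
def sdig_s4 (n : ℕ) : ℕ := (Nat.digits 2 n).sum

lemma sdig_two_mul (m : ℕ) : sdig_s4 (2*m) = sdig_s4 m := by
  rcases Nat.eq_zero_or_pos m with rfl | hm
  · simp [sdig_s4]
  · rw [sdig_s4, Nat.digits_def' (by norm_num) (by omega)]
    simp [Nat.mul_div_cancel_left _ (by norm_num : 0 < 2), Nat.mul_mod_right, sdig_s4]

lemma sdig_two_mul_add_one (m : ℕ) : sdig_s4 (2*m+1) = sdig_s4 m + 1 := by
  rw [sdig_s4, Nat.digits_def' (by norm_num) (by omega)]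
  have h1 : (2*m+1) % 2 = 1 := by omega
  have h2 : (2*m+1) / 2 = m := by omega
  rw [h1, h2]
  simp [sdig_s4, Nat.add_comm]

variable (p : ℕ)

def om : ℂ := Complex.exp (2 * Real.pi * Complex.I / p)

def ee (a : ZMod p) : ℂ := om p ^ a.val

def ff (t : ZMod p) (x : ℕ) : ℂ :=
  ∑ n ∈ range x, (-1 : ℂ)^(sdig_s4 n) * ee p (t * (n : ZMod p))

variable (hp : p.Prime)
include hp

lemma hom : IsPrimitiveRoot (om p) p := Complex.isPrimitiveRoot_exp p hp.ne_zero

lemma om_pow_p : om p ^ p = 1 := (hom p hp).pow_eq_one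

lemma norm_om : ‖om p‖ = 1 := by
  simp [om, Complex.norm_exp]


lemma norm_ee (a : ZMod p) : ‖ee p a‖ = 1 := by
  rw [ee, norm_pow, norm_om p hp, one_pow]

lemma ee_zero : ee p 0 = 1 := by
  haveI : NeZero p := ⟨hp.ne_zero⟩
  simp [ee]

lemma om_pow_mod (n : ℕ) : om p ^ (n % p) = om p ^ n := by
  conv_rhs => rw [← Nat.div_add_mod n p]
  rw [pow_add, pow_mul, om_pow_p p hp, one_pow, one_mul]

lemma ee_add (a b : ZMod p) : ee p (a + b) = ee p a * ee p b := by
  haveI : NeZero p := ⟨hp.ne_zero⟩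
  rw [ee, ee, ee, ZMod.val_add, ← pow_add]
  exact om_pow_mod p hp _


omit hp in
lemma ff_succ (t : ZMod p) (n : ℕ) :
    ff p t (n+1) = ff p t n + (-1 : ℂ)^(sdig_s4 n) * ee p (t * (n : ZMod p)) :=
  Finset.sum_range_succ _ _

lemma ff_two_mul (t : ZMod p) (y : ℕ) :
    ff p t (2*y) = (1 - ee p t) * ff p (2*t) y := by
  induction y with
  | zero => simp [ff]
  | succ y ih =>
    have h2 : 2*(y+1) = (2*y+1)+1 := by ring
    rw [h2, ff_succ, ff_succ, ih, ff_succ, sdig_two_mul, sdig_two_mul_add_one]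
    have c1 : ((2*y : ℕ) : ZMod p) = 2 * (y : ZMod p) := by push_cast; ring
    have c2 : ((2*y+1 : ℕ) : ZMod p) = 2 * (y : ZMod p) + 1 := by push_cast; ring
    rw [c1, c2]
    have e1 : t * (2 * (y : ZMod p)) = 2*t*(y:ZMod p) := by ring
    have e2 : t * (2 * (y : ZMod p) + 1) = t + 2*t*(y:ZMod p) := by ring
    rw [e1, e2, ee_add p hp]
    ring

lemma ff_step (t : ZMod p) (x : ℕ) :
    ‖ff p t x‖ ≤ ‖1 - ee p t‖ * ‖ff p (2*t) (x/2)‖ + 1 := by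
  rcases Nat.even_or_odd x with ⟨y, hy⟩ | ⟨y, hy⟩
  · rw [show x = 2*y by omega, show 2*y/2 = y by omega, ff_two_mul p hp, norm_mul]
    linarith
  · rw [show x = 2*y+1 by omega, show (2*y+1)/2 = y by omega, ff_succ p]
    calc ‖ff p t (2*y) + (-1:ℂ)^(sdig_s4 (2*y)) * ee p (t * ((2*y:ℕ) : ZMod p))‖
        ≤ ‖ff p t (2*y)‖ + ‖(-1:ℂ)^(sdig_s4 (2*y)) * ee p (t * ((2*y:ℕ) : ZMod p))‖ :=
          norm_add_le _ _
      _ ≤ ‖1 - ee p t‖ * ‖ff p (2*t) y‖ + 1 := by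
          rw [ff_two_mul p hp, norm_mul, norm_mul, norm_pow, norm_neg, norm_one, one_pow,
            norm_ee p hp, one_mul]

lemma norm_ff_le (t : ZMod p) (x : ℕ) : ‖ff p t x‖ ≤ x := by
  calc ‖ff p t x‖ ≤ ∑ n ∈ Finset.range x, ‖(-1 : ℂ)^(sdig_s4 n) * ee p (t * (n : ZMod p))‖ :=
        norm_sum_le _ _
    _ = ∑ n ∈ Finset.range x, 1 := by
        refine Finset.sum_congr rfl fun n _ => ?_
        rw [norm_mul, norm_pow, norm_neg, norm_one, one_pow, norm_ee p hp, one_mul]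
    _ = x := by simp

lemma norm_one_sub_ee_le (a : ZMod p) : ‖1 - ee p a‖ ≤ 2 := by
  calc ‖1 - ee p a‖ ≤ ‖(1:ℂ)‖ + ‖ee p a‖ := norm_sub_le _ _
    _ = 2 := by rw [norm_one, norm_ee p hp]; norm_num

lemma ff_iterate (t : ZMod p) (k x : ℕ) :
    ‖ff p t x‖ ≤ (∏ j ∈ Finset.range k, ‖1 - ee p (2^j * t)‖) * ‖ff p (2^k * t) (x / 2^k)‖
      + 2^k - 1 := by
  induction k generalizing t x with
  | zero => simp
  | succ k ih =>
    have h1 := ih t x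
    have h2 := ff_step p hp (2^k * t) (x / 2^k)
    have hd : x / 2^k / 2 = x / 2^(k+1) := by
      rw [Nat.div_div_eq_div_mul, pow_succ]
    rw [hd] at h2
    have hprodle : (∏ j ∈ Finset.range k, ‖1 - ee p (2^j * t)‖) ≤ 2^k := by
      calc (∏ j ∈ Finset.range k, ‖1 - ee p (2^j * t)‖)
          ≤ ∏ j ∈ Finset.range k, 2 :=
            Finset.prod_le_prod (fun j _ => norm_nonneg _) (fun j _ => norm_one_sub_ee_le p hp _)
        _ = 2^k := by simp
    have hpnn : (0:ℝ) ≤ ∏ j ∈ Finset.range k, ‖1 - ee p (2^j * t)‖ :=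
      Finset.prod_nonneg fun j _ => norm_nonneg _
    have hprod : (∏ j ∈ Finset.range (k+1), ‖1 - ee p (2^j * t)‖)
        = (∏ j ∈ Finset.range k, ‖1 - ee p (2^j * t)‖) * ‖1 - ee p (2^k * t)‖ :=
      Finset.prod_range_succ _ _
    have harg : 2 * (2^k * t) = 2^(k+1) * t := by ring
    rw [harg] at h2
    rw [hprod]
    calc ‖ff p t x‖
        ≤ (∏ j ∈ Finset.range k, ‖1 - ee p (2^j * t)‖) * ‖ff p (2^k * t) (x / 2^k)‖ + 2^k - 1 := h1
      _ ≤ (∏ j ∈ Finset.range k, ‖1 - ee p (2^j * t)‖) *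
            (‖1 - ee p (2^k * t)‖ * ‖ff p (2^(k+1) * t) (x / 2^(k+1))‖ + 1) + 2^k - 1 := by
          gcongr
      _ = (∏ j ∈ Finset.range k, ‖1 - ee p (2^j * t)‖) * ‖1 - ee p (2^k * t)‖ *
            ‖ff p (2^(k+1) * t) (x / 2^(k+1))‖
            + ((∏ j ∈ Finset.range k, ‖1 - ee p (2^j * t)‖) + 2^k) - 1 := by ring
      _ ≤ (∏ j ∈ Finset.range k, ‖1 - ee p (2^j * t)‖) * ‖1 - ee p (2^k * t)‖ *
            ‖ff p (2^(k+1) * t) (x / 2^(k+1))‖ + 2^(k+1) - 1 := by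
          have h2k : (2:ℝ)^(k+1) = 2^k + 2^k := by ring
          linarith


lemma prod_one_sub_om [NeZero p] :
    ∏ a ∈ (Finset.univ : Finset (ZMod p)).erase 0, (1 - ee p a) = (p : ℂ) := by
  have hpos : 0 < p := hp.pos
  have himg : (Finset.range p).image (fun i => om p ^ i) = Polynomial.nthRootsFinset p (1 : ℂ) := by
    apply Finset.eq_of_subset_of_card_le
    · intro z hz
      simp only [Finset.mem_image, Finset.mem_range] at hz
      obtain ⟨i, _, rfl⟩ := hz
      rw [Polynomial.mem_nthRootsFinset hpos, ← pow_mul, mul_comm, pow_mul, om_pow_p p hp,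
        one_pow]
    · rw [(hom p hp).card_nthRootsFinset,
        Finset.card_image_of_injOn (by simpa using (hom p hp).injOn_pow), Finset.card_range]
  have h1 : (Polynomial.X^p - 1 : Polynomial ℂ) =
      ∏ i ∈ Finset.range p, (Polynomial.X - Polynomial.C (om p ^ i)) := by
    rw [Polynomial.X_pow_sub_one_eq_prod hpos (hom p hp), ← himg,
      Finset.prod_image (by simpa using (hom p hp).injOn_pow)]
  have h0mem : (0:ℕ) ∈ Finset.range p := Finset.mem_range.2 hpos
  rw [← Finset.mul_prod_erase _ _ h0mem] at h1
  have hgeom : (∑ i ∈ Finset.range p, (Polynomial.X:Polynomial ℂ)^i) * (Polynomial.X - 1)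
      = Polynomial.X^p - 1 := geom_sum_mul _ _
  have hX1 : (Polynomial.X - 1 : Polynomial ℂ) ≠ 0 := by
    intro hc
    have := congrArg (Polynomial.eval 2) hc
    norm_num at this
  have hkey : ∏ i ∈ (Finset.range p).erase 0, (Polynomial.X - Polynomial.C (om p ^ i))
      = ∑ i ∈ Finset.range p, (Polynomial.X:Polynomial ℂ)^i := by
    apply mul_left_cancel₀ hX1
    rw [mul_comm (Polynomial.X - 1) (∑ i ∈ Finset.range p, (Polynomial.X:Polynomial ℂ)^i), hgeom]
    rw [h1]
    norm_num
  have heval := congrArg (Polynomial.eval 1) hkey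
  rw [Polynomial.eval_prod, Polynomial.eval_finset_sum] at heval
  simp only [Polynomial.eval_sub, Polynomial.eval_X, Polynomial.eval_C, Polynomial.eval_pow,
    one_pow] at heval
  rw [Finset.sum_const, Finset.card_range, nsmul_eq_mul, mul_one] at heval
  rw [← heval]
  refine Finset.prod_nbij' (fun a => a.val) (fun i => (i : ZMod p)) ?_ ?_ ?_ ?_ ?_
  · intro a ha
    rw [Finset.mem_erase] at ha ⊢
    constructor
    · simpa [ZMod.val_eq_zero] using ha.1
    · exact Finset.mem_range.2 (ZMod.val_lt a)
  · intro i hi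
    rw [Finset.mem_erase, Finset.mem_range] at hi
    rw [Finset.mem_erase]
    refine ⟨?_, Finset.mem_univ _⟩
    rw [Ne, ZMod.natCast_eq_zero_iff]
    intro hdvd
    exact hi.1 (Nat.eq_zero_of_dvd_of_lt hdvd hi.2)
  · intro a _
    exact ZMod.natCast_rightInverse a
  · intro i hi
    rw [Finset.mem_erase, Finset.mem_range] at hi
    exact ZMod.val_natCast_of_lt hi.2
  · intro a _
    rfl


lemma prod_norm_one_sub_ee [NeZero p] :
    ∏ a ∈ (Finset.univ : Finset (ZMod p)).erase 0, ‖1 - ee p a‖ = (p : ℝ) := by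
  rw [← norm_prod, prod_one_sub_om p hp]
  simp

omit hp in
lemma two_ne_zero'' (hodd : Odd p) (hp : p.Prime) : (2 : ZMod p) ≠ 0 := by
  haveI : NeZero p := ⟨hp.ne_zero⟩
  have : ((2:ℕ) : ZMod p) = (2 : ZMod p) := by norm_cast
  rw [← this, Ne, ZMod.natCast_eq_zero_iff]
  intro hdvd
  have := (Nat.prime_dvd_prime_iff_eq hp Nat.prime_two).mp hdvd
  rw [this] at hodd
  exact (Nat.not_odd_iff_even.mpr even_two) hodd

lemma pow2_inj (hodd : Odd p) {a b : ℕ} (ha : a < orderOf (2 : ZMod p))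
    (hb : b < orderOf (2 : ZMod p)) (hab : (2:ZMod p)^a = 2^b) : a = b := by
  haveI : NeZero p := ⟨hp.ne_zero⟩
  haveI : Fact p.Prime := ⟨hp⟩
  have h2 : IsUnit (2 : ZMod p) := (two_ne_zero'' p hodd hp).isUnit
  set u := h2.unit with hu
  have hcoe : (u : ZMod p) = 2 := h2.unit_spec
  have hord : orderOf u = orderOf (2 : ZMod p) := by rw [← hcoe, orderOf_units]
  have hab' : u^a = u^b := by
    apply Units.ext
    push_cast [hcoe]
    exact hab
  exact pow_injOn_Iio_orderOf (by simpa [hord] using ha) (by simpa [hord] using hb) hab'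

lemma norm_one_sub_ee_neg (a : ZMod p) : ‖1 - ee p (-a)‖ = ‖1 - ee p a‖ := by
  have h : ee p (-a) * ee p a = 1 := by
    rw [← ee_add p hp, neg_add_cancel, ee_zero p hp]
  have h2 : 1 - ee p (-a) = ee p (-a) * (ee p a - 1) := by
    rw [mul_sub, h, mul_one]
  rw [h2, norm_mul, norm_ee p hp, one_mul, norm_sub_rev]

lemma orbit_prod [NeZero p] (hodd : Odd p) (t : ZMod p) (ht : t ≠ 0)
    (h : orderOf (2 : ZMod p) = p - 1 ∨
      (orderOf (2 : ZMod p) = (p - 1) / 2 ∧ ¬ ∃ x : ℕ, (2 : ZMod p) ^ x = -1)) :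
    ∏ j ∈ Finset.range (orderOf (2:ZMod p)), ‖1 - ee p (2^j * t)‖
      = (p : ℝ) ^ ((orderOf (2:ZMod p) : ℝ)/((p:ℝ)-1)) := by
  haveI : Fact p.Prime := ⟨hp⟩
  obtain ⟨m, hm⟩ := hodd
  have hpne2 : p ≠ 2 := by rintro rfl; omega
  have hp3 : 3 ≤ p := by have := hp.two_le; omega
  set d := orderOf (2 : ZMod p) with hd
  have h2 : (2 : ZMod p) ≠ 0 := two_ne_zero'' p ⟨m, hm⟩ hp
  have hcard0 : ((Finset.univ : Finset (ZMod p)).erase 0).card = p - 1 := by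
    rw [Finset.card_erase_of_mem (Finset.mem_univ _), Finset.card_univ, ZMod.card]
  have hinj : ∀ x ∈ Finset.range d, ∀ y ∈ Finset.range d,
      (2:ZMod p)^x * t = (2:ZMod p)^y * t → x = y := by
    intro a ha b hb hab
    rw [Finset.mem_range] at ha hb
    exact pow2_inj p hp ⟨m, hm⟩ ha hb (mul_right_cancel₀ ht hab)
  obtain ⟨S, hSdef⟩ : ∃ S, S = (Finset.range d).image (fun k => (2:ZMod p)^k * t) := ⟨_, rfl⟩
  have hprodS : ∏ j ∈ Finset.range d, ‖1 - ee p (2^j * t)‖ = ∏ a ∈ S, ‖1 - ee p a‖ := by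
    rw [hSdef, Finset.prod_image hinj]
  have hScard : S.card = d := by
    rw [hSdef, Finset.card_image_of_injOn, Finset.card_range]
    intro a ha b hb hab
    exact hinj a ha b hb hab
  have hSsub : S ⊆ (Finset.univ : Finset (ZMod p)).erase 0 := by
    intro a ha
    rw [hSdef, Finset.mem_image] at ha
    obtain ⟨k, _, rfl⟩ := ha
    rw [Finset.mem_erase]
    exact ⟨mul_ne_zero (pow_ne_zero _ h2) ht, Finset.mem_univ _⟩
  rcases h with hprim | ⟨hd2, hno⟩
  · -- primitive case
    have hSeq : S = (Finset.univ : Finset (ZMod p)).erase 0 :=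
      Finset.eq_of_subset_of_card_le hSsub (by rw [hcard0, hScard, ← hprim])
    rw [hprodS, hSeq, prod_norm_one_sub_ee p hp]
    have hdc : (d : ℝ) = (p:ℝ) - 1 := by
      rw [hprim]
      push_cast [Nat.cast_sub hp.one_le]
      ring
    have hp1 : (1:ℝ) < p := by exact_mod_cast hp.one_lt
    rw [hdc, div_self (by linarith), Real.rpow_one]
  · -- semiprimitive case
    obtain ⟨T, hTdef⟩ : ∃ T, T = S.image (fun a => -a) := ⟨_, rfl⟩
    have hTcard : T.card = d := by
      rw [hTdef, Finset.card_image_of_injective _ neg_injective, hScard]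
    have hTsub : T ⊆ (Finset.univ : Finset (ZMod p)).erase 0 := by
      intro a ha
      rw [hTdef, Finset.mem_image] at ha
      obtain ⟨b, hb, rfl⟩ := ha
      have := Finset.mem_erase.mp (hSsub hb)
      rw [Finset.mem_erase]
      exact ⟨neg_ne_zero.mpr this.1, Finset.mem_univ _⟩
    have hdisj : Disjoint S T := by
      rw [Finset.disjoint_left]
      intro a haS haT
      rw [hSdef, Finset.mem_image] at haS
      rw [hTdef, Finset.mem_image] at haT
      obtain ⟨k, hk, hka⟩ := haS
      obtain ⟨b, hbS, hba⟩ := haT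
      rw [hSdef, Finset.mem_image] at hbS
      obtain ⟨j, hj, rfl⟩ := hbS
      rw [Finset.mem_range] at hk hj
      have heq : (2:ZMod p)^k * t = -((2:ZMod p)^j * t) := by rw [hka, ← hba]
      have heq2 : (2:ZMod p)^k = -(2:ZMod p)^j := by
        have h3 : (2:ZMod p)^k * t = (-(2:ZMod p)^j) * t := by rw [heq]; ring
        exact mul_right_cancel₀ ht h3
      apply hno
      refine ⟨k + (d - j), ?_⟩
      have hjd : j + (d - j) = d := by omega
      have h4 : (2:ZMod p)^(k + (d-j)) = (2:ZMod p)^k * (2:ZMod p)^(d-j) := pow_add _ _ _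
      rw [h4, heq2, neg_mul, ← pow_add, hjd, hd, pow_orderOf_eq_one]
    have hd0 : 0 < d := by rw [hd2]; omega
    have hunion : S ∪ T = (Finset.univ : Finset (ZMod p)).erase 0 := by
      apply Finset.eq_of_subset_of_card_le (Finset.union_subset hSsub hTsub)
      rw [Finset.card_union_of_disjoint hdisj, hScard, hTcard, hcard0, hd2]
      omega
    have hTprod : ∏ a ∈ T, ‖1 - ee p a‖ = ∏ a ∈ S, ‖1 - ee p a‖ := by
      rw [hTdef, Finset.prod_image (fun a _ b _ hab => neg_injective hab)]
      exact Finset.prod_congr rfl fun a _ => norm_one_sub_ee_neg p hp a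
    have hsq : (∏ a ∈ S, ‖1 - ee p a‖)^2 = (p:ℝ) := by
      have hh := prod_norm_one_sub_ee p hp
      rw [← hunion, Finset.prod_union hdisj, hTprod, ← sq] at hh
      exact hh
    have hnn : 0 ≤ ∏ a ∈ S, ‖1 - ee p a‖ := Finset.prod_nonneg fun a _ => norm_nonneg _
    have hval : ∏ a ∈ S, ‖1 - ee p a‖ = Real.sqrt p := by
      rw [← Real.sqrt_sq hnn, hsq]
    have hexp : ((d:ℝ))/((p:ℝ)-1) = 1/2 := by
      have hpe : p - 1 = 2 * d := by omega
      have hre : (p:ℝ) - 1 = 2 * d := by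
        have hcast := congrArg (Nat.cast : ℕ → ℝ) hpe
        push_cast [Nat.cast_sub hp.one_le] at hcast
        linarith
      have hd0' : (0:ℝ) < d := by exact_mod_cast hd0
      rw [hre, div_eq_div_iff (by linarith) (by norm_num)]
      ring
    rw [hprodS, hval, hexp, Real.sqrt_eq_rpow]


lemma ff_zero_bound (x : ℕ) : ‖ff p 0 x‖ ≤ 1 := by
  have := ff_step p hp 0 x
  rwa [ee_zero p hp, sub_self, norm_zero, zero_mul, zero_add] at this

lemma ff_main [NeZero p] (hodd : Odd p)
    (h : orderOf (2 : ZMod p) = p - 1 ∨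
      (orderOf (2 : ZMod p) = (p - 1) / 2 ∧ ¬ ∃ x : ℕ, (2 : ZMod p) ^ x = -1)) :
    ∃ C : ℝ, 0 < C ∧ ∀ t : ZMod p, t ≠ 0 → ∀ x : ℕ, 1 ≤ x →
      ‖ff p t x‖ ≤ C * (x:ℝ) ^ (Real.log p / (((p:ℝ)-1) * Real.log 2)) := by
  obtain ⟨m, hm⟩ := hodd
  have hpne2 : p ≠ 2 := by rintro rfl; omega
  have hp3 : 3 ≤ p := by have := hp.two_le; omega
  have hp1 : (1:ℝ) < p := by exact_mod_cast hp.one_lt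
  set α := Real.log p / (((p:ℝ)-1) * Real.log 2) with hα
  set d := orderOf (2 : ZMod p) with hd
  have hd0 : 0 < d := by
    rcases h with h1 | ⟨h1, _⟩ <;> rw [← hd] at * <;> omega
  set q := (p : ℝ) ^ ((d : ℝ)/((p:ℝ)-1)) with hq
  have hα0 : 0 < α := by
    apply div_pos (Real.log_pos hp1)
    apply mul_pos (by linarith) (Real.log_pos one_lt_two)
  have hq1 : 1 < q := by
    rw [hq]
    rw [Real.one_lt_rpow_iff_of_pos (by linarith)]
    refine Or.inl ⟨hp1, ?_⟩
    have hdr : (0:ℝ) < d := by exact_mod_cast hd0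
    exact div_pos hdr (by linarith)
  have hq0 : 0 < q := by linarith
  -- key: (2^d)^α = q
  have hkey : ((2:ℝ)^d) ^ α = q := by
    rw [← Real.rpow_natCast 2 d, ← Real.rpow_mul (by norm_num : (0:ℝ) ≤ 2), hq,
      Real.rpow_def_of_pos (by norm_num : (0:ℝ) < 2),
      Real.rpow_def_of_pos (by linarith : (0:ℝ) < (p:ℝ))]
    congr 1
    have hlog2 : Real.log 2 ≠ 0 := (Real.log_pos one_lt_two).ne'
    have hpm1 : ((p:ℝ)-1) ≠ 0 := by linarith
    rw [hα]
    field_simp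
  have hiter : ∀ t : ZMod p, t ≠ 0 → ∀ x : ℕ,
      ‖ff p t x‖ ≤ q * ‖ff p t (x / 2^d)‖ + 2^d - 1 := by
    intro t ht x
    have h1 := ff_iterate p hp t d x
    have h2 : (2:ZMod p)^d * t = t := by
      rw [hd, pow_orderOf_eq_one, one_mul]
    rw [h2] at h1
    rwa [orbit_prod p hp ⟨m, hm⟩ t ht h] at h1
  set D := (2:ℝ)^d / (q - 1) with hD
  have hD0 : 0 < D := by
    apply div_pos (by positivity) (by linarith)
  set C := (2:ℝ)^d + D with hC
  have hC0 : 0 < C := by positivity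
  have main : ∀ x : ℕ, ∀ t : ZMod p, t ≠ 0 → 1 ≤ x →
      ‖ff p t x‖ ≤ C * (x:ℝ)^α - D := by
    intro x
    induction x using Nat.strong_induction_on with
    | _ x ih =>
      intro t ht hx1
      have hxα1 : (1:ℝ) ≤ (x:ℝ)^α := by
        apply Real.one_le_rpow (by exact_mod_cast hx1) hα0.le
      rcases Nat.lt_or_ge x (2^d) with hlt | hge
      · -- base case
        have hb : ‖ff p t x‖ ≤ (x:ℝ) := norm_ff_le p hp t x
        have hx2 : (x:ℝ) ≤ (2:ℝ)^d := by
          have : (x:ℝ) ≤ ((2^d : ℕ):ℝ) := by exact_mod_cast hlt.le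
          simpa using this
        have : C * (x:ℝ)^α - D ≥ C - D := by nlinarith
        have hCD : C - D = (2:ℝ)^d := by rw [hC]; ring
        linarith
      · -- inductive step
        set y := x / 2^d with hy
        have h2d1 : 1 < 2^d := Nat.one_lt_two_pow_iff.mpr hd0.ne'
        have hy1 : 1 ≤ y := (Nat.one_le_div_iff (by omega)).mpr hge
        have hylt : y < x := Nat.div_lt_self (by omega) h2d1
        have hih := ih y hylt t ht hy1
        have hstep := hiter t ht x
        have hyx : (y:ℝ) ≤ (x:ℝ) / (2:ℝ)^d := by
          have := Nat.cast_div_le (α := ℝ) (m := x) (n := 2^d)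
          simpa using this
        have hyα : (y:ℝ)^α ≤ ((x:ℝ)/(2:ℝ)^d)^α := by
          apply Real.rpow_le_rpow (by positivity) hyx hα0.le
        have hdiv : ((x:ℝ)/(2:ℝ)^d)^α = (x:ℝ)^α / q := by
          rw [Real.div_rpow (by positivity) (by positivity), hkey]
        have hfin : q * ((x:ℝ)^α / q) = (x:ℝ)^α := by
          field_simp
        have hq1' : q - 1 ≠ 0 := by linarith
        have hqD : q * D - D = 2^d := by
          have h5 : (q - 1) * D = 2^d := by
            rw [hD, mul_comm, div_mul_cancel₀ _ hq1']
          linear_combination h5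
        have h6 : (y:ℝ)^α ≤ (x:ℝ)^α / q := hdiv ▸ hyα
        calc ‖ff p t x‖ ≤ q * ‖ff p t y‖ + 2^d - 1 := hstep
          _ ≤ q * (C * (y:ℝ)^α - D) + 2^d - 1 := by gcongr
          _ ≤ q * (C * ((x:ℝ)^α / q) - D) + 2^d - 1 := by gcongr
          _ = C * (q * ((x:ℝ)^α / q)) - (q * D - D) - D + 2^d - 1 := by ring
          _ = C * (x:ℝ)^α - (q * D - D) - D + 2^d - 1 := by rw [hfin]
          _ ≤ C * (x:ℝ)^α - D := by rw [hqD]; linarith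
  refine ⟨C, hC0, fun t ht x hx => ?_⟩
  have := main x t ht hx
  linarith


lemma sum_ee_univ [NeZero p] : ∑ a : ZMod p, ee p a = 0 := by
  have h1 : ∑ a : ZMod p, ee p a = ∑ i ∈ Finset.range p, om p ^ i := by
    refine Finset.sum_nbij' (fun a => a.val) (fun i => (i : ZMod p)) ?_ ?_ ?_ ?_ ?_
    · intro a _; exact Finset.mem_range.2 (ZMod.val_lt a)
    · intro i _; exact Finset.mem_univ _
    · intro a _; exact ZMod.natCast_rightInverse a
    · intro i hi; exact ZMod.val_natCast_of_lt (Finset.mem_range.1 hi)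
    · intro a _; rfl
  rw [h1, (hom p hp).geom_sum_eq_zero hp.one_lt]

lemma sum_ee_mul [NeZero p] (c : ZMod p) :
    ∑ t : ZMod p, ee p (t * c) = if c = 0 then (p:ℂ) else 0 := by
  haveI : Fact p.Prime := ⟨hp⟩
  rcases eq_or_ne c 0 with rfl | hc
  · simp only [mul_zero, ee_zero p hp, if_pos rfl]
    rw [Finset.sum_const, Finset.card_univ, ZMod.card, nsmul_eq_mul, mul_one]
    simp
  · rw [if_neg hc]
    have h1 : ∑ t : ZMod p, ee p (t * c) = ∑ a : ZMod p, ee p a :=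
      Fintype.sum_equiv (Equiv.mulRight₀ c hc) _ _ (fun t => rfl)
    rw [h1, sum_ee_univ p hp]

lemma newman_eq [NeZero p] (x : ℕ) :
    ∑ t : ZMod p, ff p t x = (p:ℂ) * ((newmanSum p x : ℤ) : ℂ) := by
  have hswap : ∑ t : ZMod p, ff p t x
      = ∑ n ∈ Finset.range x, ∑ t : ZMod p, (-1:ℂ)^(sdig_s4 n) * ee p (t * (n : ZMod p)) := by
    rw [Finset.sum_comm]
    rfl
  rw [hswap]
  have hterm : ∀ n ∈ Finset.range x, ∑ t : ZMod p, (-1:ℂ)^(sdig_s4 n) * ee p (t * (n : ZMod p))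
      = (p:ℂ) * (if p ∣ n then (-1:ℂ)^(sdig_s4 n) else 0) := by
    intro n _
    rw [← Finset.mul_sum, sum_ee_mul p hp]
    by_cases hn : p ∣ n
    · rw [if_pos ((ZMod.natCast_eq_zero_iff n p).mpr hn), if_pos hn]
      ring
    · rw [if_neg (fun hc => hn ((ZMod.natCast_eq_zero_iff n p).mp hc)), if_neg hn]
      ring
  rw [Finset.sum_congr rfl hterm, ← Finset.mul_sum]
  congr 1
  rw [newmanSum]
  push_cast [sdig_s4]
  rfl

end NS

/-- If 2 is a primitive or a semiprimitive root of an odd prime `p`, then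
`S_p(x) = O(x^{ln p / ((p-1) ln 2)})`. -/
theorem newmanSum_isBigO
    (p : ℕ) (hp : p.Prime) (hodd : Odd p)
    (h : orderOf (2 : ZMod p) = p - 1 ∨
      (orderOf (2 : ZMod p) = (p - 1) / 2 ∧ ¬ ∃ x : ℕ, (2 : ZMod p) ^ x = -1)) :
    ∃ C : ℝ, 0 < C ∧ ∀ x : ℕ, 1 ≤ x →
      |(newmanSum p x : ℝ)| ≤ C * (x : ℝ) ^ (Real.log p / ((p - 1) * Real.log 2)) := by
  haveI : NeZero p := ⟨hp.ne_zero⟩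
  obtain ⟨m, hm⟩ := hodd
  have hpne2 : p ≠ 2 := by rintro rfl; omega
  have hp3 : 3 ≤ p := by have := hp.two_le; omega
  have hp1 : (1:ℝ) < p := by exact_mod_cast hp.one_lt
  obtain ⟨C, hC0, hC⟩ := ff_main p hp ⟨m, hm⟩ h
  refine ⟨1 + p * C, by positivity, fun x hx => ?_⟩
  set α := Real.log p / (((p:ℝ) - 1) * Real.log 2) with hα
  have hα0 : 0 < α := by
    apply div_pos (Real.log_pos hp1)
    apply mul_pos (by linarith) (Real.log_pos one_lt_two)
  have hxα1 : (1:ℝ) ≤ (x:ℝ)^α :=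
    Real.one_le_rpow (by exact_mod_cast hx) hα0.le
  have hxα0 : (0:ℝ) < (x:ℝ)^α := by linarith
  have hsum := newman_eq p hp x
  have h1 : ‖∑ t : ZMod p, ff p t x‖ = (p:ℝ) * |(newmanSum p x : ℝ)| := by
    rw [hsum, norm_mul]
    congr 1
    · simp
    · have : ((newmanSum p x : ℤ) : ℂ) = (((newmanSum p x : ℤ) : ℝ) : ℂ) := by push_cast; ring
      rw [this, Complex.norm_real, Real.norm_eq_abs]
  have h2 : ‖∑ t : ZMod p, ff p t x‖ ≤ ∑ t : ZMod p, ‖ff p t x‖ := norm_sum_le _ _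
  have h3 : ∑ t : ZMod p, ‖ff p t x‖
      = ‖ff p 0 x‖ + ∑ t ∈ (Finset.univ : Finset (ZMod p)).erase 0, ‖ff p t x‖ :=
    (Finset.add_sum_erase _ _ (Finset.mem_univ 0)).symm
  have h4 : ∑ t ∈ (Finset.univ : Finset (ZMod p)).erase 0, ‖ff p t x‖
      ≤ ∑ t ∈ (Finset.univ : Finset (ZMod p)).erase 0, C * (x:ℝ)^α := by
    refine Finset.sum_le_sum fun t ht => ?_
    exact hC t (Finset.mem_erase.mp ht).1 x hx
  have h5 : ∑ t ∈ (Finset.univ : Finset (ZMod p)).erase 0, C * (x:ℝ)^α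
      = ((p:ℝ) - 1) * (C * (x:ℝ)^α) := by
    rw [Finset.sum_const, Finset.card_erase_of_mem (Finset.mem_univ _), Finset.card_univ,
      ZMod.card, nsmul_eq_mul]
    congr 1
    push_cast [Nat.cast_sub hp.one_le]
    ring
  have h0 : ‖ff p 0 x‖ ≤ 1 := ff_zero_bound p hp x
  have hfinal : (p:ℝ) * |(newmanSum p x : ℝ)| ≤ 1 + ((p:ℝ) - 1) * (C * (x:ℝ)^α) := by
    rw [← h1]
    calc ‖∑ t : ZMod p, ff p t x‖ ≤ ∑ t : ZMod p, ‖ff p t x‖ := h2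
      _ = ‖ff p 0 x‖ + ∑ t ∈ (Finset.univ : Finset (ZMod p)).erase 0, ‖ff p t x‖ := h3
      _ ≤ 1 + ((p:ℝ) - 1) * (C * (x:ℝ)^α) := by
          have := h4.trans (le_of_eq h5)
          linarith
  have habs : (0:ℝ) ≤ |(newmanSum p x : ℝ)| := abs_nonneg _
  nlinarith [mul_pos hC0 hxα0]
end

section
/- For every natural number x, S_17(2^17 · x) = 34 · S_17(2^9 · x) − 17 · S_17(2 · x). -/
/-- Sign function. -/
def gsgn (n : ℕ) : ℤ := (-1) ^ (Nat.digits 2 n).sum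

lemma gsgn_two_mul_add (n b : ℕ) (hb : b < 2) : gsgn (2 * n + b) = (-1) ^ b * gsgn n := by
  rcases Nat.eq_zero_or_pos (2 * n + b) with h | h
  · have hn : n = 0 := by omega
    have hb0 : b = 0 := by omega
    simp [hn, hb0, gsgn]
  · unfold gsgn
    rw [Nat.digits_def' (by norm_num : 1 < 2) h]
    have h1 : (2 * n + b) % 2 = b := by omega
    have h2 : (2 * n + b) / 2 = n := by omega
    rw [h1, h2, List.sum_cons, pow_add]

lemma gsgn_split (k q r : ℕ) (h : r < 2 ^ k) : gsgn (2 ^ k * q + r) = gsgn q * gsgn r := by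
  induction k generalizing r with
  | zero =>
    have hr : r = 0 := by omega
    simp [hr, gsgn]
  | succ k ih =>
    have hr2 : r / 2 < 2 ^ k := by
      have h2 : 2 ^ (k + 1) = 2 * 2 ^ k := by ring
      omega
    have key : 2 ^ (k + 1) * q + r = 2 * (2 ^ k * q + r / 2) + r % 2 := by
      have h2 : 2 ^ (k + 1) * q = 2 * (2 ^ k * q) := by ring
      omega
    have keyr : r = 2 * (r / 2) + r % 2 := by omega
    rw [key, gsgn_two_mul_add _ _ (Nat.mod_lt _ (by norm_num)), ih _ hr2]
    nth_rewrite 3 [keyr]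
    rw [gsgn_two_mul_add _ _ (Nat.mod_lt _ (by norm_num))]
    ring

/-- Block sum of signs over residue class `j` mod 17, for `r < 2^k`. -/
def blockSum (k j : ℕ) : ℤ :=
  ∑ r ∈ Finset.range (2 ^ k), if r % 17 = j then gsgn r else 0

lemma gsgn_one : gsgn 1 = -1 := by simp [gsgn]

lemma blockSum_succ (k j : ℕ) (hj : j < 17) :
    blockSum (k + 1) j = blockSum k j - blockSum k ((j + 17 - 2 ^ k % 17) % 17) := by
  unfold blockSum
  have h2 : 2 ^ (k + 1) = 2 ^ k + 2 ^ k := by ring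
  rw [h2, Finset.sum_range_add]
  have : ∀ r ∈ Finset.range (2 ^ k),
      (if (2 ^ k + r) % 17 = j then gsgn (2 ^ k + r) else 0)
        = -(if r % 17 = (j + 17 - 2 ^ k % 17) % 17 then gsgn r else 0) := by
    intro r hr
    rw [Finset.mem_range] at hr
    have hg : gsgn (2 ^ k + r) = -gsgn r := by
      have := gsgn_split k 1 r hr
      rw [mul_one] at this
      rw [this, gsgn_one]; ring
    have hcond : (2 ^ k + r) % 17 = j ↔ r % 17 = (j + 17 - 2 ^ k % 17) % 17 := by omega
    by_cases hc : (2 ^ k + r) % 17 = j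
    · rw [if_pos hc, if_pos (hcond.mp hc), hg]
    · rw [if_neg hc, if_neg (fun hh => hc (hcond.mpr hh))]; ring
  rw [Finset.sum_congr rfl this, Finset.sum_neg_distrib]
  ring

lemma bs_0_0 : blockSum 0 0 = 1 := by simp [blockSum, gsgn]
lemma bs_0_1 : blockSum 0 1 = 0 := by simp [blockSum, gsgn]
lemma bs_0_2 : blockSum 0 2 = 0 := by simp [blockSum, gsgn]
lemma bs_0_3 : blockSum 0 3 = 0 := by simp [blockSum, gsgn]
lemma bs_0_4 : blockSum 0 4 = 0 := by simp [blockSum, gsgn]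
lemma bs_0_5 : blockSum 0 5 = 0 := by simp [blockSum, gsgn]
lemma bs_0_6 : blockSum 0 6 = 0 := by simp [blockSum, gsgn]
lemma bs_0_7 : blockSum 0 7 = 0 := by simp [blockSum, gsgn]
lemma bs_0_8 : blockSum 0 8 = 0 := by simp [blockSum, gsgn]
lemma bs_0_9 : blockSum 0 9 = 0 := by simp [blockSum, gsgn]
lemma bs_0_10 : blockSum 0 10 = 0 := by simp [blockSum, gsgn]
lemma bs_0_11 : blockSum 0 11 = 0 := by simp [blockSum, gsgn]
lemma bs_0_12 : blockSum 0 12 = 0 := by simp [blockSum, gsgn]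
lemma bs_0_13 : blockSum 0 13 = 0 := by simp [blockSum, gsgn]
lemma bs_0_14 : blockSum 0 14 = 0 := by simp [blockSum, gsgn]
lemma bs_0_15 : blockSum 0 15 = 0 := by simp [blockSum, gsgn]
lemma bs_0_16 : blockSum 0 16 = 0 := by simp [blockSum, gsgn]
lemma bs_1_0 : blockSum 1 0 = (1) := by
  rw [show (1:ℕ) = 0+1 from rfl, blockSum_succ 0 0 (by norm_num)]
  norm_num [bs_0_0, bs_0_16]
lemma bs_1_1 : blockSum 1 1 = (-1) := by
  rw [show (1:ℕ) = 0+1 from rfl, blockSum_succ 0 1 (by norm_num)]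
  norm_num [bs_0_1, bs_0_0]
lemma bs_1_2 : blockSum 1 2 = (0) := by
  rw [show (1:ℕ) = 0+1 from rfl, blockSum_succ 0 2 (by norm_num)]
  norm_num [bs_0_2, bs_0_1]
lemma bs_1_3 : blockSum 1 3 = (0) := by
  rw [show (1:ℕ) = 0+1 from rfl, blockSum_succ 0 3 (by norm_num)]
  norm_num [bs_0_3, bs_0_2]
lemma bs_1_4 : blockSum 1 4 = (0) := by
  rw [show (1:ℕ) = 0+1 from rfl, blockSum_succ 0 4 (by norm_num)]
  norm_num [bs_0_4, bs_0_3]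
lemma bs_1_5 : blockSum 1 5 = (0) := by
  rw [show (1:ℕ) = 0+1 from rfl, blockSum_succ 0 5 (by norm_num)]
  norm_num [bs_0_5, bs_0_4]
lemma bs_1_6 : blockSum 1 6 = (0) := by
  rw [show (1:ℕ) = 0+1 from rfl, blockSum_succ 0 6 (by norm_num)]
  norm_num [bs_0_6, bs_0_5]
lemma bs_1_7 : blockSum 1 7 = (0) := by
  rw [show (1:ℕ) = 0+1 from rfl, blockSum_succ 0 7 (by norm_num)]
  norm_num [bs_0_7, bs_0_6]
lemma bs_1_8 : blockSum 1 8 = (0) := by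
  rw [show (1:ℕ) = 0+1 from rfl, blockSum_succ 0 8 (by norm_num)]
  norm_num [bs_0_8, bs_0_7]
lemma bs_1_9 : blockSum 1 9 = (0) := by
  rw [show (1:ℕ) = 0+1 from rfl, blockSum_succ 0 9 (by norm_num)]
  norm_num [bs_0_9, bs_0_8]
lemma bs_1_10 : blockSum 1 10 = (0) := by
  rw [show (1:ℕ) = 0+1 from rfl, blockSum_succ 0 10 (by norm_num)]
  norm_num [bs_0_10, bs_0_9]
lemma bs_1_11 : blockSum 1 11 = (0) := by
  rw [show (1:ℕ) = 0+1 from rfl, blockSum_succ 0 11 (by norm_num)]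
  norm_num [bs_0_11, bs_0_10]
lemma bs_1_12 : blockSum 1 12 = (0) := by
  rw [show (1:ℕ) = 0+1 from rfl, blockSum_succ 0 12 (by norm_num)]
  norm_num [bs_0_12, bs_0_11]
lemma bs_1_13 : blockSum 1 13 = (0) := by
  rw [show (1:ℕ) = 0+1 from rfl, blockSum_succ 0 13 (by norm_num)]
  norm_num [bs_0_13, bs_0_12]
lemma bs_1_14 : blockSum 1 14 = (0) := by
  rw [show (1:ℕ) = 0+1 from rfl, blockSum_succ 0 14 (by norm_num)]
  norm_num [bs_0_14, bs_0_13]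
lemma bs_1_15 : blockSum 1 15 = (0) := by
  rw [show (1:ℕ) = 0+1 from rfl, blockSum_succ 0 15 (by norm_num)]
  norm_num [bs_0_15, bs_0_14]
lemma bs_1_16 : blockSum 1 16 = (0) := by
  rw [show (1:ℕ) = 0+1 from rfl, blockSum_succ 0 16 (by norm_num)]
  norm_num [bs_0_16, bs_0_15]
lemma bs_2_0 : blockSum 2 0 = (1) := by
  rw [show (2:ℕ) = 1+1 from rfl, blockSum_succ 1 0 (by norm_num)]
  norm_num [bs_1_0, bs_1_15]
lemma bs_2_1 : blockSum 2 1 = (-1) := by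
  rw [show (2:ℕ) = 1+1 from rfl, blockSum_succ 1 1 (by norm_num)]
  norm_num [bs_1_1, bs_1_16]
lemma bs_2_2 : blockSum 2 2 = (-1) := by
  rw [show (2:ℕ) = 1+1 from rfl, blockSum_succ 1 2 (by norm_num)]
  norm_num [bs_1_2, bs_1_0]
lemma bs_2_3 : blockSum 2 3 = (1) := by
  rw [show (2:ℕ) = 1+1 from rfl, blockSum_succ 1 3 (by norm_num)]
  norm_num [bs_1_3, bs_1_1]
lemma bs_2_4 : blockSum 2 4 = (0) := by
  rw [show (2:ℕ) = 1+1 from rfl, blockSum_succ 1 4 (by norm_num)]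
  norm_num [bs_1_4, bs_1_2]
lemma bs_2_5 : blockSum 2 5 = (0) := by
  rw [show (2:ℕ) = 1+1 from rfl, blockSum_succ 1 5 (by norm_num)]
  norm_num [bs_1_5, bs_1_3]
lemma bs_2_6 : blockSum 2 6 = (0) := by
  rw [show (2:ℕ) = 1+1 from rfl, blockSum_succ 1 6 (by norm_num)]
  norm_num [bs_1_6, bs_1_4]
lemma bs_2_7 : blockSum 2 7 = (0) := by
  rw [show (2:ℕ) = 1+1 from rfl, blockSum_succ 1 7 (by norm_num)]
  norm_num [bs_1_7, bs_1_5]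
lemma bs_2_8 : blockSum 2 8 = (0) := by
  rw [show (2:ℕ) = 1+1 from rfl, blockSum_succ 1 8 (by norm_num)]
  norm_num [bs_1_8, bs_1_6]
lemma bs_2_9 : blockSum 2 9 = (0) := by
  rw [show (2:ℕ) = 1+1 from rfl, blockSum_succ 1 9 (by norm_num)]
  norm_num [bs_1_9, bs_1_7]
lemma bs_2_10 : blockSum 2 10 = (0) := by
  rw [show (2:ℕ) = 1+1 from rfl, blockSum_succ 1 10 (by norm_num)]
  norm_num [bs_1_10, bs_1_8]
lemma bs_2_11 : blockSum 2 11 = (0) := by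
  rw [show (2:ℕ) = 1+1 from rfl, blockSum_succ 1 11 (by norm_num)]
  norm_num [bs_1_11, bs_1_9]
lemma bs_2_12 : blockSum 2 12 = (0) := by
  rw [show (2:ℕ) = 1+1 from rfl, blockSum_succ 1 12 (by norm_num)]
  norm_num [bs_1_12, bs_1_10]
lemma bs_2_13 : blockSum 2 13 = (0) := by
  rw [show (2:ℕ) = 1+1 from rfl, blockSum_succ 1 13 (by norm_num)]
  norm_num [bs_1_13, bs_1_11]
lemma bs_2_14 : blockSum 2 14 = (0) := by
  rw [show (2:ℕ) = 1+1 from rfl, blockSum_succ 1 14 (by norm_num)]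
  norm_num [bs_1_14, bs_1_12]
lemma bs_2_15 : blockSum 2 15 = (0) := by
  rw [show (2:ℕ) = 1+1 from rfl, blockSum_succ 1 15 (by norm_num)]
  norm_num [bs_1_15, bs_1_13]
lemma bs_2_16 : blockSum 2 16 = (0) := by
  rw [show (2:ℕ) = 1+1 from rfl, blockSum_succ 1 16 (by norm_num)]
  norm_num [bs_1_16, bs_1_14]
lemma bs_3_0 : blockSum 3 0 = (1) := by
  rw [show (3:ℕ) = 2+1 from rfl, blockSum_succ 2 0 (by norm_num)]
  norm_num [bs_2_0, bs_2_13]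
lemma bs_3_1 : blockSum 3 1 = (-1) := by
  rw [show (3:ℕ) = 2+1 from rfl, blockSum_succ 2 1 (by norm_num)]
  norm_num [bs_2_1, bs_2_14]
lemma bs_3_2 : blockSum 3 2 = (-1) := by
  rw [show (3:ℕ) = 2+1 from rfl, blockSum_succ 2 2 (by norm_num)]
  norm_num [bs_2_2, bs_2_15]
lemma bs_3_3 : blockSum 3 3 = (1) := by
  rw [show (3:ℕ) = 2+1 from rfl, blockSum_succ 2 3 (by norm_num)]
  norm_num [bs_2_3, bs_2_16]
lemma bs_3_4 : blockSum 3 4 = (-1) := by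
  rw [show (3:ℕ) = 2+1 from rfl, blockSum_succ 2 4 (by norm_num)]
  norm_num [bs_2_4, bs_2_0]
lemma bs_3_5 : blockSum 3 5 = (1) := by
  rw [show (3:ℕ) = 2+1 from rfl, blockSum_succ 2 5 (by norm_num)]
  norm_num [bs_2_5, bs_2_1]
lemma bs_3_6 : blockSum 3 6 = (1) := by
  rw [show (3:ℕ) = 2+1 from rfl, blockSum_succ 2 6 (by norm_num)]
  norm_num [bs_2_6, bs_2_2]
lemma bs_3_7 : blockSum 3 7 = (-1) := by
  rw [show (3:ℕ) = 2+1 from rfl, blockSum_succ 2 7 (by norm_num)]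
  norm_num [bs_2_7, bs_2_3]
lemma bs_3_8 : blockSum 3 8 = (0) := by
  rw [show (3:ℕ) = 2+1 from rfl, blockSum_succ 2 8 (by norm_num)]
  norm_num [bs_2_8, bs_2_4]
lemma bs_3_9 : blockSum 3 9 = (0) := by
  rw [show (3:ℕ) = 2+1 from rfl, blockSum_succ 2 9 (by norm_num)]
  norm_num [bs_2_9, bs_2_5]
lemma bs_3_10 : blockSum 3 10 = (0) := by
  rw [show (3:ℕ) = 2+1 from rfl, blockSum_succ 2 10 (by norm_num)]
  norm_num [bs_2_10, bs_2_6]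
lemma bs_3_11 : blockSum 3 11 = (0) := by
  rw [show (3:ℕ) = 2+1 from rfl, blockSum_succ 2 11 (by norm_num)]
  norm_num [bs_2_11, bs_2_7]
lemma bs_3_12 : blockSum 3 12 = (0) := by
  rw [show (3:ℕ) = 2+1 from rfl, blockSum_succ 2 12 (by norm_num)]
  norm_num [bs_2_12, bs_2_8]
lemma bs_3_13 : blockSum 3 13 = (0) := by
  rw [show (3:ℕ) = 2+1 from rfl, blockSum_succ 2 13 (by norm_num)]
  norm_num [bs_2_13, bs_2_9]
lemma bs_3_14 : blockSum 3 14 = (0) := by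
  rw [show (3:ℕ) = 2+1 from rfl, blockSum_succ 2 14 (by norm_num)]
  norm_num [bs_2_14, bs_2_10]
lemma bs_3_15 : blockSum 3 15 = (0) := by
  rw [show (3:ℕ) = 2+1 from rfl, blockSum_succ 2 15 (by norm_num)]
  norm_num [bs_2_15, bs_2_11]
lemma bs_3_16 : blockSum 3 16 = (0) := by
  rw [show (3:ℕ) = 2+1 from rfl, blockSum_succ 2 16 (by norm_num)]
  norm_num [bs_2_16, bs_2_12]
lemma bs_4_0 : blockSum 4 0 = (1) := by
  rw [show (4:ℕ) = 3+1 from rfl, blockSum_succ 3 0 (by norm_num)]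
  norm_num [bs_3_0, bs_3_9]
lemma bs_4_1 : blockSum 4 1 = (-1) := by
  rw [show (4:ℕ) = 3+1 from rfl, blockSum_succ 3 1 (by norm_num)]
  norm_num [bs_3_1, bs_3_10]
lemma bs_4_2 : blockSum 4 2 = (-1) := by
  rw [show (4:ℕ) = 3+1 from rfl, blockSum_succ 3 2 (by norm_num)]
  norm_num [bs_3_2, bs_3_11]
lemma bs_4_3 : blockSum 4 3 = (1) := by
  rw [show (4:ℕ) = 3+1 from rfl, blockSum_succ 3 3 (by norm_num)]
  norm_num [bs_3_3, bs_3_12]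
lemma bs_4_4 : blockSum 4 4 = (-1) := by
  rw [show (4:ℕ) = 3+1 from rfl, blockSum_succ 3 4 (by norm_num)]
  norm_num [bs_3_4, bs_3_13]
lemma bs_4_5 : blockSum 4 5 = (1) := by
  rw [show (4:ℕ) = 3+1 from rfl, blockSum_succ 3 5 (by norm_num)]
  norm_num [bs_3_5, bs_3_14]
lemma bs_4_6 : blockSum 4 6 = (1) := by
  rw [show (4:ℕ) = 3+1 from rfl, blockSum_succ 3 6 (by norm_num)]
  norm_num [bs_3_6, bs_3_15]
lemma bs_4_7 : blockSum 4 7 = (-1) := by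
  rw [show (4:ℕ) = 3+1 from rfl, blockSum_succ 3 7 (by norm_num)]
  norm_num [bs_3_7, bs_3_16]
lemma bs_4_8 : blockSum 4 8 = (-1) := by
  rw [show (4:ℕ) = 3+1 from rfl, blockSum_succ 3 8 (by norm_num)]
  norm_num [bs_3_8, bs_3_0]
lemma bs_4_9 : blockSum 4 9 = (1) := by
  rw [show (4:ℕ) = 3+1 from rfl, blockSum_succ 3 9 (by norm_num)]
  norm_num [bs_3_9, bs_3_1]
lemma bs_4_10 : blockSum 4 10 = (1) := by
  rw [show (4:ℕ) = 3+1 from rfl, blockSum_succ 3 10 (by norm_num)]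
  norm_num [bs_3_10, bs_3_2]
lemma bs_4_11 : blockSum 4 11 = (-1) := by
  rw [show (4:ℕ) = 3+1 from rfl, blockSum_succ 3 11 (by norm_num)]
  norm_num [bs_3_11, bs_3_3]
lemma bs_4_12 : blockSum 4 12 = (1) := by
  rw [show (4:ℕ) = 3+1 from rfl, blockSum_succ 3 12 (by norm_num)]
  norm_num [bs_3_12, bs_3_4]
lemma bs_4_13 : blockSum 4 13 = (-1) := by
  rw [show (4:ℕ) = 3+1 from rfl, blockSum_succ 3 13 (by norm_num)]
  norm_num [bs_3_13, bs_3_5]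
lemma bs_4_14 : blockSum 4 14 = (-1) := by
  rw [show (4:ℕ) = 3+1 from rfl, blockSum_succ 3 14 (by norm_num)]
  norm_num [bs_3_14, bs_3_6]
lemma bs_4_15 : blockSum 4 15 = (1) := by
  rw [show (4:ℕ) = 3+1 from rfl, blockSum_succ 3 15 (by norm_num)]
  norm_num [bs_3_15, bs_3_7]
lemma bs_4_16 : blockSum 4 16 = (0) := by
  rw [show (4:ℕ) = 3+1 from rfl, blockSum_succ 3 16 (by norm_num)]
  norm_num [bs_3_16, bs_3_8]
lemma bs_5_0 : blockSum 5 0 = (2) := by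
  rw [show (5:ℕ) = 4+1 from rfl, blockSum_succ 4 0 (by norm_num)]
  norm_num [bs_4_0, bs_4_1]
lemma bs_5_1 : blockSum 5 1 = (0) := by
  rw [show (5:ℕ) = 4+1 from rfl, blockSum_succ 4 1 (by norm_num)]
  norm_num [bs_4_1, bs_4_2]
lemma bs_5_2 : blockSum 5 2 = (-2) := by
  rw [show (5:ℕ) = 4+1 from rfl, blockSum_succ 4 2 (by norm_num)]
  norm_num [bs_4_2, bs_4_3]
lemma bs_5_3 : blockSum 5 3 = (2) := by
  rw [show (5:ℕ) = 4+1 from rfl, blockSum_succ 4 3 (by norm_num)]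
  norm_num [bs_4_3, bs_4_4]
lemma bs_5_4 : blockSum 5 4 = (-2) := by
  rw [show (5:ℕ) = 4+1 from rfl, blockSum_succ 4 4 (by norm_num)]
  norm_num [bs_4_4, bs_4_5]
lemma bs_5_5 : blockSum 5 5 = (0) := by
  rw [show (5:ℕ) = 4+1 from rfl, blockSum_succ 4 5 (by norm_num)]
  norm_num [bs_4_5, bs_4_6]
lemma bs_5_6 : blockSum 5 6 = (2) := by
  rw [show (5:ℕ) = 4+1 from rfl, blockSum_succ 4 6 (by norm_num)]
  norm_num [bs_4_6, bs_4_7]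
lemma bs_5_7 : blockSum 5 7 = (0) := by
  rw [show (5:ℕ) = 4+1 from rfl, blockSum_succ 4 7 (by norm_num)]
  norm_num [bs_4_7, bs_4_8]
lemma bs_5_8 : blockSum 5 8 = (-2) := by
  rw [show (5:ℕ) = 4+1 from rfl, blockSum_succ 4 8 (by norm_num)]
  norm_num [bs_4_8, bs_4_9]
lemma bs_5_9 : blockSum 5 9 = (0) := by
  rw [show (5:ℕ) = 4+1 from rfl, blockSum_succ 4 9 (by norm_num)]
  norm_num [bs_4_9, bs_4_10]
lemma bs_5_10 : blockSum 5 10 = (2) := by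
  rw [show (5:ℕ) = 4+1 from rfl, blockSum_succ 4 10 (by norm_num)]
  norm_num [bs_4_10, bs_4_11]
lemma bs_5_11 : blockSum 5 11 = (-2) := by
  rw [show (5:ℕ) = 4+1 from rfl, blockSum_succ 4 11 (by norm_num)]
  norm_num [bs_4_11, bs_4_12]
lemma bs_5_12 : blockSum 5 12 = (2) := by
  rw [show (5:ℕ) = 4+1 from rfl, blockSum_succ 4 12 (by norm_num)]
  norm_num [bs_4_12, bs_4_13]
lemma bs_5_13 : blockSum 5 13 = (0) := by
  rw [show (5:ℕ) = 4+1 from rfl, blockSum_succ 4 13 (by norm_num)]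
  norm_num [bs_4_13, bs_4_14]
lemma bs_5_14 : blockSum 5 14 = (-2) := by
  rw [show (5:ℕ) = 4+1 from rfl, blockSum_succ 4 14 (by norm_num)]
  norm_num [bs_4_14, bs_4_15]
lemma bs_5_15 : blockSum 5 15 = (1) := by
  rw [show (5:ℕ) = 4+1 from rfl, blockSum_succ 4 15 (by norm_num)]
  norm_num [bs_4_15, bs_4_16]
lemma bs_5_16 : blockSum 5 16 = (-1) := by
  rw [show (5:ℕ) = 4+1 from rfl, blockSum_succ 4 16 (by norm_num)]
  norm_num [bs_4_16, bs_4_0]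
lemma bs_6_0 : blockSum 6 0 = (4) := by
  rw [show (6:ℕ) = 5+1 from rfl, blockSum_succ 5 0 (by norm_num)]
  norm_num [bs_5_0, bs_5_2]
lemma bs_6_1 : blockSum 6 1 = (-2) := by
  rw [show (6:ℕ) = 5+1 from rfl, blockSum_succ 5 1 (by norm_num)]
  norm_num [bs_5_1, bs_5_3]
lemma bs_6_2 : blockSum 6 2 = (0) := by
  rw [show (6:ℕ) = 5+1 from rfl, blockSum_succ 5 2 (by norm_num)]
  norm_num [bs_5_2, bs_5_4]
lemma bs_6_3 : blockSum 6 3 = (2) := by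
  rw [show (6:ℕ) = 5+1 from rfl, blockSum_succ 5 3 (by norm_num)]
  norm_num [bs_5_3, bs_5_5]
lemma bs_6_4 : blockSum 6 4 = (-4) := by
  rw [show (6:ℕ) = 5+1 from rfl, blockSum_succ 5 4 (by norm_num)]
  norm_num [bs_5_4, bs_5_6]
lemma bs_6_5 : blockSum 6 5 = (0) := by
  rw [show (6:ℕ) = 5+1 from rfl, blockSum_succ 5 5 (by norm_num)]
  norm_num [bs_5_5, bs_5_7]
lemma bs_6_6 : blockSum 6 6 = (4) := by
  rw [show (6:ℕ) = 5+1 from rfl, blockSum_succ 5 6 (by norm_num)]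
  norm_num [bs_5_6, bs_5_8]
lemma bs_6_7 : blockSum 6 7 = (0) := by
  rw [show (6:ℕ) = 5+1 from rfl, blockSum_succ 5 7 (by norm_num)]
  norm_num [bs_5_7, bs_5_9]
lemma bs_6_8 : blockSum 6 8 = (-4) := by
  rw [show (6:ℕ) = 5+1 from rfl, blockSum_succ 5 8 (by norm_num)]
  norm_num [bs_5_8, bs_5_10]
lemma bs_6_9 : blockSum 6 9 = (2) := by
  rw [show (6:ℕ) = 5+1 from rfl, blockSum_succ 5 9 (by norm_num)]
  norm_num [bs_5_9, bs_5_11]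
lemma bs_6_10 : blockSum 6 10 = (0) := by
  rw [show (6:ℕ) = 5+1 from rfl, blockSum_succ 5 10 (by norm_num)]
  norm_num [bs_5_10, bs_5_12]
lemma bs_6_11 : blockSum 6 11 = (-2) := by
  rw [show (6:ℕ) = 5+1 from rfl, blockSum_succ 5 11 (by norm_num)]
  norm_num [bs_5_11, bs_5_13]
lemma bs_6_12 : blockSum 6 12 = (4) := by
  rw [show (6:ℕ) = 5+1 from rfl, blockSum_succ 5 12 (by norm_num)]
  norm_num [bs_5_12, bs_5_14]
lemma bs_6_13 : blockSum 6 13 = (-1) := by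
  rw [show (6:ℕ) = 5+1 from rfl, blockSum_succ 5 13 (by norm_num)]
  norm_num [bs_5_13, bs_5_15]
lemma bs_6_14 : blockSum 6 14 = (-1) := by
  rw [show (6:ℕ) = 5+1 from rfl, blockSum_succ 5 14 (by norm_num)]
  norm_num [bs_5_14, bs_5_16]
lemma bs_6_15 : blockSum 6 15 = (-1) := by
  rw [show (6:ℕ) = 5+1 from rfl, blockSum_succ 5 15 (by norm_num)]
  norm_num [bs_5_15, bs_5_0]
lemma bs_6_16 : blockSum 6 16 = (-1) := by
  rw [show (6:ℕ) = 5+1 from rfl, blockSum_succ 5 16 (by norm_num)]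
  norm_num [bs_5_16, bs_5_1]
lemma bs_7_0 : blockSum 7 0 = (8) := by
  rw [show (7:ℕ) = 6+1 from rfl, blockSum_succ 6 0 (by norm_num)]
  norm_num [bs_6_0, bs_6_4]
lemma bs_7_1 : blockSum 7 1 = (-2) := by
  rw [show (7:ℕ) = 6+1 from rfl, blockSum_succ 6 1 (by norm_num)]
  norm_num [bs_6_1, bs_6_5]
lemma bs_7_2 : blockSum 7 2 = (-4) := by
  rw [show (7:ℕ) = 6+1 from rfl, blockSum_succ 6 2 (by norm_num)]
  norm_num [bs_6_2, bs_6_6]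
lemma bs_7_3 : blockSum 7 3 = (2) := by
  rw [show (7:ℕ) = 6+1 from rfl, blockSum_succ 6 3 (by norm_num)]
  norm_num [bs_6_3, bs_6_7]
lemma bs_7_4 : blockSum 7 4 = (0) := by
  rw [show (7:ℕ) = 6+1 from rfl, blockSum_succ 6 4 (by norm_num)]
  norm_num [bs_6_4, bs_6_8]
lemma bs_7_5 : blockSum 7 5 = (-2) := by
  rw [show (7:ℕ) = 6+1 from rfl, blockSum_succ 6 5 (by norm_num)]
  norm_num [bs_6_5, bs_6_9]
lemma bs_7_6 : blockSum 7 6 = (4) := by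
  rw [show (7:ℕ) = 6+1 from rfl, blockSum_succ 6 6 (by norm_num)]
  norm_num [bs_6_6, bs_6_10]
lemma bs_7_7 : blockSum 7 7 = (2) := by
  rw [show (7:ℕ) = 6+1 from rfl, blockSum_succ 6 7 (by norm_num)]
  norm_num [bs_6_7, bs_6_11]
lemma bs_7_8 : blockSum 7 8 = (-8) := by
  rw [show (7:ℕ) = 6+1 from rfl, blockSum_succ 6 8 (by norm_num)]
  norm_num [bs_6_8, bs_6_12]
lemma bs_7_9 : blockSum 7 9 = (3) := by
  rw [show (7:ℕ) = 6+1 from rfl, blockSum_succ 6 9 (by norm_num)]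
  norm_num [bs_6_9, bs_6_13]
lemma bs_7_10 : blockSum 7 10 = (1) := by
  rw [show (7:ℕ) = 6+1 from rfl, blockSum_succ 6 10 (by norm_num)]
  norm_num [bs_6_10, bs_6_14]
lemma bs_7_11 : blockSum 7 11 = (-1) := by
  rw [show (7:ℕ) = 6+1 from rfl, blockSum_succ 6 11 (by norm_num)]
  norm_num [bs_6_11, bs_6_15]
lemma bs_7_12 : blockSum 7 12 = (5) := by
  rw [show (7:ℕ) = 6+1 from rfl, blockSum_succ 6 12 (by norm_num)]
  norm_num [bs_6_12, bs_6_16]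
lemma bs_7_13 : blockSum 7 13 = (-5) := by
  rw [show (7:ℕ) = 6+1 from rfl, blockSum_succ 6 13 (by norm_num)]
  norm_num [bs_6_13, bs_6_0]
lemma bs_7_14 : blockSum 7 14 = (1) := by
  rw [show (7:ℕ) = 6+1 from rfl, blockSum_succ 6 14 (by norm_num)]
  norm_num [bs_6_14, bs_6_1]
lemma bs_7_15 : blockSum 7 15 = (-1) := by
  rw [show (7:ℕ) = 6+1 from rfl, blockSum_succ 6 15 (by norm_num)]
  norm_num [bs_6_15, bs_6_2]
lemma bs_7_16 : blockSum 7 16 = (-3) := by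
  rw [show (7:ℕ) = 6+1 from rfl, blockSum_succ 6 16 (by norm_num)]
  norm_num [bs_6_16, bs_6_3]
lemma bs_8_0 : blockSum 8 0 = (16) := by
  rw [show (8:ℕ) = 7+1 from rfl, blockSum_succ 7 0 (by norm_num)]
  norm_num [bs_7_0, bs_7_8]
lemma bs_8_1 : blockSum 8 1 = (-5) := by
  rw [show (8:ℕ) = 7+1 from rfl, blockSum_succ 7 1 (by norm_num)]
  norm_num [bs_7_1, bs_7_9]
lemma bs_8_2 : blockSum 8 2 = (-5) := by
  rw [show (8:ℕ) = 7+1 from rfl, blockSum_succ 7 2 (by norm_num)]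
  norm_num [bs_7_2, bs_7_10]
lemma bs_8_3 : blockSum 8 3 = (3) := by
  rw [show (8:ℕ) = 7+1 from rfl, blockSum_succ 7 3 (by norm_num)]
  norm_num [bs_7_3, bs_7_11]
lemma bs_8_4 : blockSum 8 4 = (-5) := by
  rw [show (8:ℕ) = 7+1 from rfl, blockSum_succ 7 4 (by norm_num)]
  norm_num [bs_7_4, bs_7_12]
lemma bs_8_5 : blockSum 8 5 = (3) := by
  rw [show (8:ℕ) = 7+1 from rfl, blockSum_succ 7 5 (by norm_num)]
  norm_num [bs_7_5, bs_7_13]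
lemma bs_8_6 : blockSum 8 6 = (3) := by
  rw [show (8:ℕ) = 7+1 from rfl, blockSum_succ 7 6 (by norm_num)]
  norm_num [bs_7_6, bs_7_14]
lemma bs_8_7 : blockSum 8 7 = (3) := by
  rw [show (8:ℕ) = 7+1 from rfl, blockSum_succ 7 7 (by norm_num)]
  norm_num [bs_7_7, bs_7_15]
lemma bs_8_8 : blockSum 8 8 = (-5) := by
  rw [show (8:ℕ) = 7+1 from rfl, blockSum_succ 7 8 (by norm_num)]
  norm_num [bs_7_8, bs_7_16]
lemma bs_8_9 : blockSum 8 9 = (-5) := by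
  rw [show (8:ℕ) = 7+1 from rfl, blockSum_succ 7 9 (by norm_num)]
  norm_num [bs_7_9, bs_7_0]
lemma bs_8_10 : blockSum 8 10 = (3) := by
  rw [show (8:ℕ) = 7+1 from rfl, blockSum_succ 7 10 (by norm_num)]
  norm_num [bs_7_10, bs_7_1]
lemma bs_8_11 : blockSum 8 11 = (3) := by
  rw [show (8:ℕ) = 7+1 from rfl, blockSum_succ 7 11 (by norm_num)]
  norm_num [bs_7_11, bs_7_2]
lemma bs_8_12 : blockSum 8 12 = (3) := by
  rw [show (8:ℕ) = 7+1 from rfl, blockSum_succ 7 12 (by norm_num)]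
  norm_num [bs_7_12, bs_7_3]
lemma bs_8_13 : blockSum 8 13 = (-5) := by
  rw [show (8:ℕ) = 7+1 from rfl, blockSum_succ 7 13 (by norm_num)]
  norm_num [bs_7_13, bs_7_4]
lemma bs_8_14 : blockSum 8 14 = (3) := by
  rw [show (8:ℕ) = 7+1 from rfl, blockSum_succ 7 14 (by norm_num)]
  norm_num [bs_7_14, bs_7_5]
lemma bs_8_15 : blockSum 8 15 = (-5) := by
  rw [show (8:ℕ) = 7+1 from rfl, blockSum_succ 7 15 (by norm_num)]
  norm_num [bs_7_15, bs_7_6]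
lemma bs_8_16 : blockSum 8 16 = (-5) := by
  rw [show (8:ℕ) = 7+1 from rfl, blockSum_succ 7 16 (by norm_num)]
  norm_num [bs_7_16, bs_7_7]
lemma bs_9_0 : blockSum 9 0 = (21) := by
  rw [show (9:ℕ) = 8+1 from rfl, blockSum_succ 8 0 (by norm_num)]
  norm_num [bs_8_0, bs_8_16]
lemma bs_9_1 : blockSum 9 1 = (-21) := by
  rw [show (9:ℕ) = 8+1 from rfl, blockSum_succ 8 1 (by norm_num)]
  norm_num [bs_8_1, bs_8_0]
lemma bs_9_2 : blockSum 9 2 = (0) := by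
  rw [show (9:ℕ) = 8+1 from rfl, blockSum_succ 8 2 (by norm_num)]
  norm_num [bs_8_2, bs_8_1]
lemma bs_9_3 : blockSum 9 3 = (8) := by
  rw [show (9:ℕ) = 8+1 from rfl, blockSum_succ 8 3 (by norm_num)]
  norm_num [bs_8_3, bs_8_2]
lemma bs_9_4 : blockSum 9 4 = (-8) := by
  rw [show (9:ℕ) = 8+1 from rfl, blockSum_succ 8 4 (by norm_num)]
  norm_num [bs_8_4, bs_8_3]
lemma bs_9_5 : blockSum 9 5 = (8) := by
  rw [show (9:ℕ) = 8+1 from rfl, blockSum_succ 8 5 (by norm_num)]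
  norm_num [bs_8_5, bs_8_4]
lemma bs_9_6 : blockSum 9 6 = (0) := by
  rw [show (9:ℕ) = 8+1 from rfl, blockSum_succ 8 6 (by norm_num)]
  norm_num [bs_8_6, bs_8_5]
lemma bs_9_7 : blockSum 9 7 = (0) := by
  rw [show (9:ℕ) = 8+1 from rfl, blockSum_succ 8 7 (by norm_num)]
  norm_num [bs_8_7, bs_8_6]
lemma bs_9_8 : blockSum 9 8 = (-8) := by
  rw [show (9:ℕ) = 8+1 from rfl, blockSum_succ 8 8 (by norm_num)]
  norm_num [bs_8_8, bs_8_7]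
lemma bs_9_9 : blockSum 9 9 = (0) := by
  rw [show (9:ℕ) = 8+1 from rfl, blockSum_succ 8 9 (by norm_num)]
  norm_num [bs_8_9, bs_8_8]
lemma bs_9_10 : blockSum 9 10 = (8) := by
  rw [show (9:ℕ) = 8+1 from rfl, blockSum_succ 8 10 (by norm_num)]
  norm_num [bs_8_10, bs_8_9]
lemma bs_9_11 : blockSum 9 11 = (0) := by
  rw [show (9:ℕ) = 8+1 from rfl, blockSum_succ 8 11 (by norm_num)]
  norm_num [bs_8_11, bs_8_10]
lemma bs_9_12 : blockSum 9 12 = (0) := by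
  rw [show (9:ℕ) = 8+1 from rfl, blockSum_succ 8 12 (by norm_num)]
  norm_num [bs_8_12, bs_8_11]
lemma bs_9_13 : blockSum 9 13 = (-8) := by
  rw [show (9:ℕ) = 8+1 from rfl, blockSum_succ 8 13 (by norm_num)]
  norm_num [bs_8_13, bs_8_12]
lemma bs_9_14 : blockSum 9 14 = (8) := by
  rw [show (9:ℕ) = 8+1 from rfl, blockSum_succ 8 14 (by norm_num)]
  norm_num [bs_8_14, bs_8_13]
lemma bs_9_15 : blockSum 9 15 = (-8) := by
  rw [show (9:ℕ) = 8+1 from rfl, blockSum_succ 8 15 (by norm_num)]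
  norm_num [bs_8_15, bs_8_14]
lemma bs_9_16 : blockSum 9 16 = (0) := by
  rw [show (9:ℕ) = 8+1 from rfl, blockSum_succ 8 16 (by norm_num)]
  norm_num [bs_8_16, bs_8_15]
lemma bs_10_0 : blockSum 10 0 = (29) := by
  rw [show (10:ℕ) = 9+1 from rfl, blockSum_succ 9 0 (by norm_num)]
  norm_num [bs_9_0, bs_9_15]
lemma bs_10_1 : blockSum 10 1 = (-21) := by
  rw [show (10:ℕ) = 9+1 from rfl, blockSum_succ 9 1 (by norm_num)]
  norm_num [bs_9_1, bs_9_16]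
lemma bs_10_2 : blockSum 10 2 = (-21) := by
  rw [show (10:ℕ) = 9+1 from rfl, blockSum_succ 9 2 (by norm_num)]
  norm_num [bs_9_2, bs_9_0]
lemma bs_10_3 : blockSum 10 3 = (29) := by
  rw [show (10:ℕ) = 9+1 from rfl, blockSum_succ 9 3 (by norm_num)]
  norm_num [bs_9_3, bs_9_1]
lemma bs_10_4 : blockSum 10 4 = (-8) := by
  rw [show (10:ℕ) = 9+1 from rfl, blockSum_succ 9 4 (by norm_num)]
  norm_num [bs_9_4, bs_9_2]
lemma bs_10_5 : blockSum 10 5 = (0) := by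
  rw [show (10:ℕ) = 9+1 from rfl, blockSum_succ 9 5 (by norm_num)]
  norm_num [bs_9_5, bs_9_3]
lemma bs_10_6 : blockSum 10 6 = (8) := by
  rw [show (10:ℕ) = 9+1 from rfl, blockSum_succ 9 6 (by norm_num)]
  norm_num [bs_9_6, bs_9_4]
lemma bs_10_7 : blockSum 10 7 = (-8) := by
  rw [show (10:ℕ) = 9+1 from rfl, blockSum_succ 9 7 (by norm_num)]
  norm_num [bs_9_7, bs_9_5]
lemma bs_10_8 : blockSum 10 8 = (-8) := by
  rw [show (10:ℕ) = 9+1 from rfl, blockSum_succ 9 8 (by norm_num)]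
  norm_num [bs_9_8, bs_9_6]
lemma bs_10_9 : blockSum 10 9 = (0) := by
  rw [show (10:ℕ) = 9+1 from rfl, blockSum_succ 9 9 (by norm_num)]
  norm_num [bs_9_9, bs_9_7]
lemma bs_10_10 : blockSum 10 10 = (16) := by
  rw [show (10:ℕ) = 9+1 from rfl, blockSum_succ 9 10 (by norm_num)]
  norm_num [bs_9_10, bs_9_8]
lemma bs_10_11 : blockSum 10 11 = (0) := by
  rw [show (10:ℕ) = 9+1 from rfl, blockSum_succ 9 11 (by norm_num)]
  norm_num [bs_9_11, bs_9_9]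
lemma bs_10_12 : blockSum 10 12 = (-8) := by
  rw [show (10:ℕ) = 9+1 from rfl, blockSum_succ 9 12 (by norm_num)]
  norm_num [bs_9_12, bs_9_10]
lemma bs_10_13 : blockSum 10 13 = (-8) := by
  rw [show (10:ℕ) = 9+1 from rfl, blockSum_succ 9 13 (by norm_num)]
  norm_num [bs_9_13, bs_9_11]
lemma bs_10_14 : blockSum 10 14 = (8) := by
  rw [show (10:ℕ) = 9+1 from rfl, blockSum_succ 9 14 (by norm_num)]
  norm_num [bs_9_14, bs_9_12]
lemma bs_10_15 : blockSum 10 15 = (0) := by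
  rw [show (10:ℕ) = 9+1 from rfl, blockSum_succ 9 15 (by norm_num)]
  norm_num [bs_9_15, bs_9_13]
lemma bs_10_16 : blockSum 10 16 = (-8) := by
  rw [show (10:ℕ) = 9+1 from rfl, blockSum_succ 9 16 (by norm_num)]
  norm_num [bs_9_16, bs_9_14]
lemma bs_11_0 : blockSum 11 0 = (37) := by
  rw [show (11:ℕ) = 10+1 from rfl, blockSum_succ 10 0 (by norm_num)]
  norm_num [bs_10_0, bs_10_13]
lemma bs_11_1 : blockSum 11 1 = (-29) := by
  rw [show (11:ℕ) = 10+1 from rfl, blockSum_succ 10 1 (by norm_num)]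
  norm_num [bs_10_1, bs_10_14]
lemma bs_11_2 : blockSum 11 2 = (-21) := by
  rw [show (11:ℕ) = 10+1 from rfl, blockSum_succ 10 2 (by norm_num)]
  norm_num [bs_10_2, bs_10_15]
lemma bs_11_3 : blockSum 11 3 = (37) := by
  rw [show (11:ℕ) = 10+1 from rfl, blockSum_succ 10 3 (by norm_num)]
  norm_num [bs_10_3, bs_10_16]
lemma bs_11_4 : blockSum 11 4 = (-37) := by
  rw [show (11:ℕ) = 10+1 from rfl, blockSum_succ 10 4 (by norm_num)]
  norm_num [bs_10_4, bs_10_0]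
lemma bs_11_5 : blockSum 11 5 = (21) := by
  rw [show (11:ℕ) = 10+1 from rfl, blockSum_succ 10 5 (by norm_num)]
  norm_num [bs_10_5, bs_10_1]
lemma bs_11_6 : blockSum 11 6 = (29) := by
  rw [show (11:ℕ) = 10+1 from rfl, blockSum_succ 10 6 (by norm_num)]
  norm_num [bs_10_6, bs_10_2]
lemma bs_11_7 : blockSum 11 7 = (-37) := by
  rw [show (11:ℕ) = 10+1 from rfl, blockSum_succ 10 7 (by norm_num)]
  norm_num [bs_10_7, bs_10_3]
lemma bs_11_8 : blockSum 11 8 = (0) := by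
  rw [show (11:ℕ) = 10+1 from rfl, blockSum_succ 10 8 (by norm_num)]
  norm_num [bs_10_8, bs_10_4]
lemma bs_11_9 : blockSum 11 9 = (0) := by
  rw [show (11:ℕ) = 10+1 from rfl, blockSum_succ 10 9 (by norm_num)]
  norm_num [bs_10_9, bs_10_5]
lemma bs_11_10 : blockSum 11 10 = (8) := by
  rw [show (11:ℕ) = 10+1 from rfl, blockSum_succ 10 10 (by norm_num)]
  norm_num [bs_10_10, bs_10_6]
lemma bs_11_11 : blockSum 11 11 = (8) := by
  rw [show (11:ℕ) = 10+1 from rfl, blockSum_succ 10 11 (by norm_num)]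
  norm_num [bs_10_11, bs_10_7]
lemma bs_11_12 : blockSum 11 12 = (0) := by
  rw [show (11:ℕ) = 10+1 from rfl, blockSum_succ 10 12 (by norm_num)]
  norm_num [bs_10_12, bs_10_8]
lemma bs_11_13 : blockSum 11 13 = (-8) := by
  rw [show (11:ℕ) = 10+1 from rfl, blockSum_succ 10 13 (by norm_num)]
  norm_num [bs_10_13, bs_10_9]
lemma bs_11_14 : blockSum 11 14 = (-8) := by
  rw [show (11:ℕ) = 10+1 from rfl, blockSum_succ 10 14 (by norm_num)]
  norm_num [bs_10_14, bs_10_10]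
lemma bs_11_15 : blockSum 11 15 = (0) := by
  rw [show (11:ℕ) = 10+1 from rfl, blockSum_succ 10 15 (by norm_num)]
  norm_num [bs_10_15, bs_10_11]
lemma bs_11_16 : blockSum 11 16 = (0) := by
  rw [show (11:ℕ) = 10+1 from rfl, blockSum_succ 10 16 (by norm_num)]
  norm_num [bs_10_16, bs_10_12]
lemma bs_12_0 : blockSum 12 0 = (37) := by
  rw [show (12:ℕ) = 11+1 from rfl, blockSum_succ 11 0 (by norm_num)]
  norm_num [bs_11_0, bs_11_9]
lemma bs_12_1 : blockSum 12 1 = (-37) := by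
  rw [show (12:ℕ) = 11+1 from rfl, blockSum_succ 11 1 (by norm_num)]
  norm_num [bs_11_1, bs_11_10]
lemma bs_12_2 : blockSum 12 2 = (-29) := by
  rw [show (12:ℕ) = 11+1 from rfl, blockSum_succ 11 2 (by norm_num)]
  norm_num [bs_11_2, bs_11_11]
lemma bs_12_3 : blockSum 12 3 = (37) := by
  rw [show (12:ℕ) = 11+1 from rfl, blockSum_succ 11 3 (by norm_num)]
  norm_num [bs_11_3, bs_11_12]
lemma bs_12_4 : blockSum 12 4 = (-29) := by
  rw [show (12:ℕ) = 11+1 from rfl, blockSum_succ 11 4 (by norm_num)]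
  norm_num [bs_11_4, bs_11_13]
lemma bs_12_5 : blockSum 12 5 = (29) := by
  rw [show (12:ℕ) = 11+1 from rfl, blockSum_succ 11 5 (by norm_num)]
  norm_num [bs_11_5, bs_11_14]
lemma bs_12_6 : blockSum 12 6 = (29) := by
  rw [show (12:ℕ) = 11+1 from rfl, blockSum_succ 11 6 (by norm_num)]
  norm_num [bs_11_6, bs_11_15]
lemma bs_12_7 : blockSum 12 7 = (-37) := by
  rw [show (12:ℕ) = 11+1 from rfl, blockSum_succ 11 7 (by norm_num)]
  norm_num [bs_11_7, bs_11_16]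
lemma bs_12_8 : blockSum 12 8 = (-37) := by
  rw [show (12:ℕ) = 11+1 from rfl, blockSum_succ 11 8 (by norm_num)]
  norm_num [bs_11_8, bs_11_0]
lemma bs_12_9 : blockSum 12 9 = (29) := by
  rw [show (12:ℕ) = 11+1 from rfl, blockSum_succ 11 9 (by norm_num)]
  norm_num [bs_11_9, bs_11_1]
lemma bs_12_10 : blockSum 12 10 = (29) := by
  rw [show (12:ℕ) = 11+1 from rfl, blockSum_succ 11 10 (by norm_num)]
  norm_num [bs_11_10, bs_11_2]
lemma bs_12_11 : blockSum 12 11 = (-29) := by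
  rw [show (12:ℕ) = 11+1 from rfl, blockSum_succ 11 11 (by norm_num)]
  norm_num [bs_11_11, bs_11_3]
lemma bs_12_12 : blockSum 12 12 = (37) := by
  rw [show (12:ℕ) = 11+1 from rfl, blockSum_succ 11 12 (by norm_num)]
  norm_num [bs_11_12, bs_11_4]
lemma bs_12_13 : blockSum 12 13 = (-29) := by
  rw [show (12:ℕ) = 11+1 from rfl, blockSum_succ 11 13 (by norm_num)]
  norm_num [bs_11_13, bs_11_5]
lemma bs_12_14 : blockSum 12 14 = (-37) := by
  rw [show (12:ℕ) = 11+1 from rfl, blockSum_succ 11 14 (by norm_num)]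
  norm_num [bs_11_14, bs_11_6]
lemma bs_12_15 : blockSum 12 15 = (37) := by
  rw [show (12:ℕ) = 11+1 from rfl, blockSum_succ 11 15 (by norm_num)]
  norm_num [bs_11_15, bs_11_7]
lemma bs_12_16 : blockSum 12 16 = (0) := by
  rw [show (12:ℕ) = 11+1 from rfl, blockSum_succ 11 16 (by norm_num)]
  norm_num [bs_11_16, bs_11_8]
lemma bs_13_0 : blockSum 13 0 = (74) := by
  rw [show (13:ℕ) = 12+1 from rfl, blockSum_succ 12 0 (by norm_num)]
  norm_num [bs_12_0, bs_12_1]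
lemma bs_13_1 : blockSum 13 1 = (-8) := by
  rw [show (13:ℕ) = 12+1 from rfl, blockSum_succ 12 1 (by norm_num)]
  norm_num [bs_12_1, bs_12_2]
lemma bs_13_2 : blockSum 13 2 = (-66) := by
  rw [show (13:ℕ) = 12+1 from rfl, blockSum_succ 12 2 (by norm_num)]
  norm_num [bs_12_2, bs_12_3]
lemma bs_13_3 : blockSum 13 3 = (66) := by
  rw [show (13:ℕ) = 12+1 from rfl, blockSum_succ 12 3 (by norm_num)]
  norm_num [bs_12_3, bs_12_4]
lemma bs_13_4 : blockSum 13 4 = (-58) := by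
  rw [show (13:ℕ) = 12+1 from rfl, blockSum_succ 12 4 (by norm_num)]
  norm_num [bs_12_4, bs_12_5]
lemma bs_13_5 : blockSum 13 5 = (0) := by
  rw [show (13:ℕ) = 12+1 from rfl, blockSum_succ 12 5 (by norm_num)]
  norm_num [bs_12_5, bs_12_6]
lemma bs_13_6 : blockSum 13 6 = (66) := by
  rw [show (13:ℕ) = 12+1 from rfl, blockSum_succ 12 6 (by norm_num)]
  norm_num [bs_12_6, bs_12_7]
lemma bs_13_7 : blockSum 13 7 = (0) := by
  rw [show (13:ℕ) = 12+1 from rfl, blockSum_succ 12 7 (by norm_num)]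
  norm_num [bs_12_7, bs_12_8]
lemma bs_13_8 : blockSum 13 8 = (-66) := by
  rw [show (13:ℕ) = 12+1 from rfl, blockSum_succ 12 8 (by norm_num)]
  norm_num [bs_12_8, bs_12_9]
lemma bs_13_9 : blockSum 13 9 = (0) := by
  rw [show (13:ℕ) = 12+1 from rfl, blockSum_succ 12 9 (by norm_num)]
  norm_num [bs_12_9, bs_12_10]
lemma bs_13_10 : blockSum 13 10 = (58) := by
  rw [show (13:ℕ) = 12+1 from rfl, blockSum_succ 12 10 (by norm_num)]
  norm_num [bs_12_10, bs_12_11]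
lemma bs_13_11 : blockSum 13 11 = (-66) := by
  rw [show (13:ℕ) = 12+1 from rfl, blockSum_succ 12 11 (by norm_num)]
  norm_num [bs_12_11, bs_12_12]
lemma bs_13_12 : blockSum 13 12 = (66) := by
  rw [show (13:ℕ) = 12+1 from rfl, blockSum_succ 12 12 (by norm_num)]
  norm_num [bs_12_12, bs_12_13]
lemma bs_13_13 : blockSum 13 13 = (8) := by
  rw [show (13:ℕ) = 12+1 from rfl, blockSum_succ 12 13 (by norm_num)]
  norm_num [bs_12_13, bs_12_14]
lemma bs_13_14 : blockSum 13 14 = (-74) := by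
  rw [show (13:ℕ) = 12+1 from rfl, blockSum_succ 12 14 (by norm_num)]
  norm_num [bs_12_14, bs_12_15]
lemma bs_13_15 : blockSum 13 15 = (37) := by
  rw [show (13:ℕ) = 12+1 from rfl, blockSum_succ 12 15 (by norm_num)]
  norm_num [bs_12_15, bs_12_16]
lemma bs_13_16 : blockSum 13 16 = (-37) := by
  rw [show (13:ℕ) = 12+1 from rfl, blockSum_succ 12 16 (by norm_num)]
  norm_num [bs_12_16, bs_12_0]
lemma bs_14_0 : blockSum 14 0 = (140) := by
  rw [show (14:ℕ) = 13+1 from rfl, blockSum_succ 13 0 (by norm_num)]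
  norm_num [bs_13_0, bs_13_2]
lemma bs_14_1 : blockSum 14 1 = (-74) := by
  rw [show (14:ℕ) = 13+1 from rfl, blockSum_succ 13 1 (by norm_num)]
  norm_num [bs_13_1, bs_13_3]
lemma bs_14_2 : blockSum 14 2 = (-8) := by
  rw [show (14:ℕ) = 13+1 from rfl, blockSum_succ 13 2 (by norm_num)]
  norm_num [bs_13_2, bs_13_4]
lemma bs_14_3 : blockSum 14 3 = (66) := by
  rw [show (14:ℕ) = 13+1 from rfl, blockSum_succ 13 3 (by norm_num)]
  norm_num [bs_13_3, bs_13_5]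
lemma bs_14_4 : blockSum 14 4 = (-124) := by
  rw [show (14:ℕ) = 13+1 from rfl, blockSum_succ 13 4 (by norm_num)]
  norm_num [bs_13_4, bs_13_6]
lemma bs_14_5 : blockSum 14 5 = (0) := by
  rw [show (14:ℕ) = 13+1 from rfl, blockSum_succ 13 5 (by norm_num)]
  norm_num [bs_13_5, bs_13_7]
lemma bs_14_6 : blockSum 14 6 = (132) := by
  rw [show (14:ℕ) = 13+1 from rfl, blockSum_succ 13 6 (by norm_num)]
  norm_num [bs_13_6, bs_13_8]
lemma bs_14_7 : blockSum 14 7 = (0) := by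
  rw [show (14:ℕ) = 13+1 from rfl, blockSum_succ 13 7 (by norm_num)]
  norm_num [bs_13_7, bs_13_9]
lemma bs_14_8 : blockSum 14 8 = (-124) := by
  rw [show (14:ℕ) = 13+1 from rfl, blockSum_succ 13 8 (by norm_num)]
  norm_num [bs_13_8, bs_13_10]
lemma bs_14_9 : blockSum 14 9 = (66) := by
  rw [show (14:ℕ) = 13+1 from rfl, blockSum_succ 13 9 (by norm_num)]
  norm_num [bs_13_9, bs_13_11]
lemma bs_14_10 : blockSum 14 10 = (-8) := by
  rw [show (14:ℕ) = 13+1 from rfl, blockSum_succ 13 10 (by norm_num)]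
  norm_num [bs_13_10, bs_13_12]
lemma bs_14_11 : blockSum 14 11 = (-74) := by
  rw [show (14:ℕ) = 13+1 from rfl, blockSum_succ 13 11 (by norm_num)]
  norm_num [bs_13_11, bs_13_13]
lemma bs_14_12 : blockSum 14 12 = (140) := by
  rw [show (14:ℕ) = 13+1 from rfl, blockSum_succ 13 12 (by norm_num)]
  norm_num [bs_13_12, bs_13_14]
lemma bs_14_13 : blockSum 14 13 = (-29) := by
  rw [show (14:ℕ) = 13+1 from rfl, blockSum_succ 13 13 (by norm_num)]
  norm_num [bs_13_13, bs_13_15]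
lemma bs_14_14 : blockSum 14 14 = (-37) := by
  rw [show (14:ℕ) = 13+1 from rfl, blockSum_succ 13 14 (by norm_num)]
  norm_num [bs_13_14, bs_13_16]
lemma bs_14_15 : blockSum 14 15 = (-37) := by
  rw [show (14:ℕ) = 13+1 from rfl, blockSum_succ 13 15 (by norm_num)]
  norm_num [bs_13_15, bs_13_0]
lemma bs_14_16 : blockSum 14 16 = (-29) := by
  rw [show (14:ℕ) = 13+1 from rfl, blockSum_succ 13 16 (by norm_num)]
  norm_num [bs_13_16, bs_13_1]
lemma bs_15_0 : blockSum 15 0 = (264) := by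
  rw [show (15:ℕ) = 14+1 from rfl, blockSum_succ 14 0 (by norm_num)]
  norm_num [bs_14_0, bs_14_4]
lemma bs_15_1 : blockSum 15 1 = (-74) := by
  rw [show (15:ℕ) = 14+1 from rfl, blockSum_succ 14 1 (by norm_num)]
  norm_num [bs_14_1, bs_14_5]
lemma bs_15_2 : blockSum 15 2 = (-140) := by
  rw [show (15:ℕ) = 14+1 from rfl, blockSum_succ 14 2 (by norm_num)]
  norm_num [bs_14_2, bs_14_6]
lemma bs_15_3 : blockSum 15 3 = (66) := by
  rw [show (15:ℕ) = 14+1 from rfl, blockSum_succ 14 3 (by norm_num)]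
  norm_num [bs_14_3, bs_14_7]
lemma bs_15_4 : blockSum 15 4 = (0) := by
  rw [show (15:ℕ) = 14+1 from rfl, blockSum_succ 14 4 (by norm_num)]
  norm_num [bs_14_4, bs_14_8]
lemma bs_15_5 : blockSum 15 5 = (-66) := by
  rw [show (15:ℕ) = 14+1 from rfl, blockSum_succ 14 5 (by norm_num)]
  norm_num [bs_14_5, bs_14_9]
lemma bs_15_6 : blockSum 15 6 = (140) := by
  rw [show (15:ℕ) = 14+1 from rfl, blockSum_succ 14 6 (by norm_num)]
  norm_num [bs_14_6, bs_14_10]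
lemma bs_15_7 : blockSum 15 7 = (74) := by
  rw [show (15:ℕ) = 14+1 from rfl, blockSum_succ 14 7 (by norm_num)]
  norm_num [bs_14_7, bs_14_11]
lemma bs_15_8 : blockSum 15 8 = (-264) := by
  rw [show (15:ℕ) = 14+1 from rfl, blockSum_succ 14 8 (by norm_num)]
  norm_num [bs_14_8, bs_14_12]
lemma bs_15_9 : blockSum 15 9 = (95) := by
  rw [show (15:ℕ) = 14+1 from rfl, blockSum_succ 14 9 (by norm_num)]
  norm_num [bs_14_9, bs_14_13]
lemma bs_15_10 : blockSum 15 10 = (29) := by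
  rw [show (15:ℕ) = 14+1 from rfl, blockSum_succ 14 10 (by norm_num)]
  norm_num [bs_14_10, bs_14_14]
lemma bs_15_11 : blockSum 15 11 = (-37) := by
  rw [show (15:ℕ) = 14+1 from rfl, blockSum_succ 14 11 (by norm_num)]
  norm_num [bs_14_11, bs_14_15]
lemma bs_15_12 : blockSum 15 12 = (169) := by
  rw [show (15:ℕ) = 14+1 from rfl, blockSum_succ 14 12 (by norm_num)]
  norm_num [bs_14_12, bs_14_16]
lemma bs_15_13 : blockSum 15 13 = (-169) := by
  rw [show (15:ℕ) = 14+1 from rfl, blockSum_succ 14 13 (by norm_num)]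
  norm_num [bs_14_13, bs_14_0]
lemma bs_15_14 : blockSum 15 14 = (37) := by
  rw [show (15:ℕ) = 14+1 from rfl, blockSum_succ 14 14 (by norm_num)]
  norm_num [bs_14_14, bs_14_1]
lemma bs_15_15 : blockSum 15 15 = (-29) := by
  rw [show (15:ℕ) = 14+1 from rfl, blockSum_succ 14 15 (by norm_num)]
  norm_num [bs_14_15, bs_14_2]
lemma bs_15_16 : blockSum 15 16 = (-95) := by
  rw [show (15:ℕ) = 14+1 from rfl, blockSum_succ 14 16 (by norm_num)]
  norm_num [bs_14_16, bs_14_3]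
lemma bs_16_0 : blockSum 16 0 = (528) := by
  rw [show (16:ℕ) = 15+1 from rfl, blockSum_succ 15 0 (by norm_num)]
  norm_num [bs_15_0, bs_15_8]
lemma bs_16_1 : blockSum 16 1 = (-169) := by
  rw [show (16:ℕ) = 15+1 from rfl, blockSum_succ 15 1 (by norm_num)]
  norm_num [bs_15_1, bs_15_9]
lemma bs_16_2 : blockSum 16 2 = (-169) := by
  rw [show (16:ℕ) = 15+1 from rfl, blockSum_succ 15 2 (by norm_num)]
  norm_num [bs_15_2, bs_15_10]
lemma bs_16_3 : blockSum 16 3 = (103) := by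
  rw [show (16:ℕ) = 15+1 from rfl, blockSum_succ 15 3 (by norm_num)]
  norm_num [bs_15_3, bs_15_11]
lemma bs_16_4 : blockSum 16 4 = (-169) := by
  rw [show (16:ℕ) = 15+1 from rfl, blockSum_succ 15 4 (by norm_num)]
  norm_num [bs_15_4, bs_15_12]
lemma bs_16_5 : blockSum 16 5 = (103) := by
  rw [show (16:ℕ) = 15+1 from rfl, blockSum_succ 15 5 (by norm_num)]
  norm_num [bs_15_5, bs_15_13]
lemma bs_16_6 : blockSum 16 6 = (103) := by
  rw [show (16:ℕ) = 15+1 from rfl, blockSum_succ 15 6 (by norm_num)]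
  norm_num [bs_15_6, bs_15_14]
lemma bs_16_7 : blockSum 16 7 = (103) := by
  rw [show (16:ℕ) = 15+1 from rfl, blockSum_succ 15 7 (by norm_num)]
  norm_num [bs_15_7, bs_15_15]
lemma bs_16_8 : blockSum 16 8 = (-169) := by
  rw [show (16:ℕ) = 15+1 from rfl, blockSum_succ 15 8 (by norm_num)]
  norm_num [bs_15_8, bs_15_16]
lemma bs_16_9 : blockSum 16 9 = (-169) := by
  rw [show (16:ℕ) = 15+1 from rfl, blockSum_succ 15 9 (by norm_num)]
  norm_num [bs_15_9, bs_15_0]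
lemma bs_16_10 : blockSum 16 10 = (103) := by
  rw [show (16:ℕ) = 15+1 from rfl, blockSum_succ 15 10 (by norm_num)]
  norm_num [bs_15_10, bs_15_1]
lemma bs_16_11 : blockSum 16 11 = (103) := by
  rw [show (16:ℕ) = 15+1 from rfl, blockSum_succ 15 11 (by norm_num)]
  norm_num [bs_15_11, bs_15_2]
lemma bs_16_12 : blockSum 16 12 = (103) := by
  rw [show (16:ℕ) = 15+1 from rfl, blockSum_succ 15 12 (by norm_num)]
  norm_num [bs_15_12, bs_15_3]
lemma bs_16_13 : blockSum 16 13 = (-169) := by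
  rw [show (16:ℕ) = 15+1 from rfl, blockSum_succ 15 13 (by norm_num)]
  norm_num [bs_15_13, bs_15_4]
lemma bs_16_14 : blockSum 16 14 = (103) := by
  rw [show (16:ℕ) = 15+1 from rfl, blockSum_succ 15 14 (by norm_num)]
  norm_num [bs_15_14, bs_15_5]
lemma bs_16_15 : blockSum 16 15 = (-169) := by
  rw [show (16:ℕ) = 15+1 from rfl, blockSum_succ 15 15 (by norm_num)]
  norm_num [bs_15_15, bs_15_6]
lemma bs_16_16 : blockSum 16 16 = (-169) := by
  rw [show (16:ℕ) = 15+1 from rfl, blockSum_succ 15 16 (by norm_num)]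
  norm_num [bs_15_16, bs_15_7]
lemma bs_17_0 : blockSum 17 0 = (697) := by
  rw [show (17:ℕ) = 16+1 from rfl, blockSum_succ 16 0 (by norm_num)]
  norm_num [bs_16_0, bs_16_16]
lemma bs_17_1 : blockSum 17 1 = (-697) := by
  rw [show (17:ℕ) = 16+1 from rfl, blockSum_succ 16 1 (by norm_num)]
  norm_num [bs_16_1, bs_16_0]
lemma bs_17_2 : blockSum 17 2 = (0) := by
  rw [show (17:ℕ) = 16+1 from rfl, blockSum_succ 16 2 (by norm_num)]
  norm_num [bs_16_2, bs_16_1]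
lemma bs_17_3 : blockSum 17 3 = (272) := by
  rw [show (17:ℕ) = 16+1 from rfl, blockSum_succ 16 3 (by norm_num)]
  norm_num [bs_16_3, bs_16_2]
lemma bs_17_4 : blockSum 17 4 = (-272) := by
  rw [show (17:ℕ) = 16+1 from rfl, blockSum_succ 16 4 (by norm_num)]
  norm_num [bs_16_4, bs_16_3]
lemma bs_17_5 : blockSum 17 5 = (272) := by
  rw [show (17:ℕ) = 16+1 from rfl, blockSum_succ 16 5 (by norm_num)]
  norm_num [bs_16_5, bs_16_4]
lemma bs_17_6 : blockSum 17 6 = (0) := by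
  rw [show (17:ℕ) = 16+1 from rfl, blockSum_succ 16 6 (by norm_num)]
  norm_num [bs_16_6, bs_16_5]
lemma bs_17_7 : blockSum 17 7 = (0) := by
  rw [show (17:ℕ) = 16+1 from rfl, blockSum_succ 16 7 (by norm_num)]
  norm_num [bs_16_7, bs_16_6]
lemma bs_17_8 : blockSum 17 8 = (-272) := by
  rw [show (17:ℕ) = 16+1 from rfl, blockSum_succ 16 8 (by norm_num)]
  norm_num [bs_16_8, bs_16_7]
lemma bs_17_9 : blockSum 17 9 = (0) := by
  rw [show (17:ℕ) = 16+1 from rfl, blockSum_succ 16 9 (by norm_num)]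
  norm_num [bs_16_9, bs_16_8]
lemma bs_17_10 : blockSum 17 10 = (272) := by
  rw [show (17:ℕ) = 16+1 from rfl, blockSum_succ 16 10 (by norm_num)]
  norm_num [bs_16_10, bs_16_9]
lemma bs_17_11 : blockSum 17 11 = (0) := by
  rw [show (17:ℕ) = 16+1 from rfl, blockSum_succ 16 11 (by norm_num)]
  norm_num [bs_16_11, bs_16_10]
lemma bs_17_12 : blockSum 17 12 = (0) := by
  rw [show (17:ℕ) = 16+1 from rfl, blockSum_succ 16 12 (by norm_num)]
  norm_num [bs_16_12, bs_16_11]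
lemma bs_17_13 : blockSum 17 13 = (-272) := by
  rw [show (17:ℕ) = 16+1 from rfl, blockSum_succ 16 13 (by norm_num)]
  norm_num [bs_16_13, bs_16_12]
lemma bs_17_14 : blockSum 17 14 = (272) := by
  rw [show (17:ℕ) = 16+1 from rfl, blockSum_succ 16 14 (by norm_num)]
  norm_num [bs_16_14, bs_16_13]
lemma bs_17_15 : blockSum 17 15 = (-272) := by
  rw [show (17:ℕ) = 16+1 from rfl, blockSum_succ 16 15 (by norm_num)]
  norm_num [bs_16_15, bs_16_14]
lemma bs_17_16 : blockSum 17 16 = (0) := by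
  rw [show (17:ℕ) = 16+1 from rfl, blockSum_succ 16 16 (by norm_num)]
  norm_num [bs_16_16, bs_16_15]

lemma blockSum_key (j : ℕ) (hj : j < 17) :
    blockSum 17 j = 34 * blockSum 9 j - 17 * blockSum 1 j := by
  interval_cases j <;> norm_num [bs_17_0, bs_17_1, bs_17_2, bs_17_3, bs_17_4, bs_17_5, bs_17_6, bs_17_7, bs_17_8, bs_17_9, bs_17_10, bs_17_11, bs_17_12, bs_17_13, bs_17_14, bs_17_15, bs_17_16, bs_9_0, bs_9_1, bs_9_2, bs_9_3, bs_9_4, bs_9_5, bs_9_6, bs_9_7, bs_9_8, bs_9_9, bs_9_10, bs_9_11, bs_9_12, bs_9_13, bs_9_14, bs_9_15, bs_9_16, bs_1_0, bs_1_1, bs_1_2, bs_1_3, bs_1_4, bs_1_5, bs_1_6, bs_1_7, bs_1_8, bs_1_9, bs_1_10, bs_1_11, bs_1_12, bs_1_13, bs_1_14, bs_1_15, bs_1_16]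

lemma newman_eq_s6 (k x : ℕ) :
    newmanSum 17 (2 ^ k * x)
      = ∑ q ∈ Finset.range x, gsgn q * blockSum k ((17 - 2 ^ k * q % 17) % 17) := by
  induction x with
  | zero => simp [newmanSum]
  | succ x ih =>
    rw [Nat.mul_succ]
    unfold newmanSum at ih ⊢
    rw [Finset.sum_range_add, ih, Finset.sum_range_succ]
    congr 1
    unfold blockSum
    rw [Finset.mul_sum]
    apply Finset.sum_congr rfl
    intro r hr
    rw [Finset.mem_range] at hr
    have hcond : (17 ∣ 2 ^ k * x + r) ↔ r % 17 = (17 - 2 ^ k * x % 17) % 17 := by omega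
    by_cases hc : 17 ∣ 2 ^ k * x + r
    · rw [if_pos hc, if_pos (hcond.mp hc)]
      show gsgn (2 ^ k * x + r) = gsgn x * gsgn r
      exact gsgn_split k x r hr
    · rw [if_neg hc, if_neg (fun hh => hc (hcond.mpr hh)), mul_zero]

lemma mod_17_17 (q : ℕ) : 2 ^ 17 * q % 17 = 2 * q % 17 := by
  have : (2:ℕ) ^ 17 * q = 131072 * q := by norm_num
  rw [this]; omega

lemma mod_17_9 (q : ℕ) : 2 ^ 9 * q % 17 = 2 * q % 17 := by
  have : (2:ℕ) ^ 9 * q = 512 * q := by norm_num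
  rw [this]; omega

/-- `S₁₇(2¹⁷ x) = 34 S₁₇(2⁹ x) - 17 S₁₇(2 x)` for all natural `x`. -/
theorem newmanSum_seventeen (x : ℕ) :
    newmanSum 17 (2 ^ 17 * x) = 34 * newmanSum 17 (2 ^ 9 * x) - 17 * newmanSum 17 (2 * x) := by
  have h1 : (2:ℕ) * x = 2 ^ 1 * x := by ring
  rw [h1, newman_eq_s6 17 x, newman_eq_s6 9 x, newman_eq_s6 1 x]
  simp only [mod_17_17, mod_17_9, pow_one]
  rw [Finset.mul_sum, Finset.mul_sum, ← Finset.sum_sub_distrib]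
  apply Finset.sum_congr rfl
  intro q _
  have hj : (17 - 2 * q % 17) % 17 < 17 := Nat.mod_lt _ (by norm_num)
  rw [blockSum_key _ hj]
  ring
end

section
/- Let p be a prime such that 2 is a primitive root modulo p. Then S_p(2^p) = p. -/
open Finset Polynomial

lemma digits_sum_step (m : ℕ) (hm : 0 < m) :
    (Nat.digits 2 m).sum = m % 2 + (Nat.digits 2 (m / 2)).sum := by
  rw [Nat.digits_def' (by norm_num : (1:ℕ) < 2) hm]
  simp

lemma sum_digits_two_pow_add (k n : ℕ) (h : n < 2 ^ k) :
    (Nat.digits 2 (2 ^ k + n)).sum = (Nat.digits 2 n).sum + 1 := by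
  induction k generalizing n with
  | zero =>
    interval_cases n
    simp
  | succ k ih =>
    have e1 : (2 ^ (k+1) + n) % 2 = n % 2 := by omega
    have e2 : (2 ^ (k+1) + n) / 2 = 2 ^ k + n / 2 := by omega
    have hlt : n / 2 < 2 ^ k := by
      have : 2 ^ (k+1) = 2 * 2 ^ k := by ring
      omega
    rw [digits_sum_step _ (by positivity), e1, e2, ih _ hlt]
    rcases Nat.eq_zero_or_pos n with rfl | hn
    · simp
    · rw [digits_sum_step n hn]; ring

lemma signed_sum_eq_prod (z : ℂ) (k : ℕ) :
    ∑ n ∈ range (2 ^ k), (-1 : ℂ) ^ (Nat.digits 2 n).sum * z ^ n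
      = ∏ i ∈ range k, (1 - z ^ (2 ^ i)) := by
  induction k with
  | zero => simp
  | succ k ih =>
    have hsplit : (2 : ℕ) ^ (k+1) = 2 ^ k + 2 ^ k := by ring
    rw [hsplit, Finset.range_add, Finset.sum_union, Finset.sum_map,
      Finset.prod_range_succ, ← ih]
    · have : ∀ n ∈ range (2 ^ k),
          (-1 : ℂ) ^ (Nat.digits 2 (addLeftEmbedding (2^k) n)).sum * z ^ (addLeftEmbedding (2^k) n)
            = -(z ^ (2^k)) * ((-1 : ℂ) ^ (Nat.digits 2 n).sum * z ^ n) := by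
        intro n hn
        simp only [addLeftEmbedding_apply]
        rw [sum_digits_two_pow_add k n (Finset.mem_range.1 hn), pow_add, pow_succ]
        ring
      rw [Finset.sum_congr rfl this, ← Finset.mul_sum]
      ring
    · simp [Finset.disjoint_left, addLeftEmbedding_apply]
      intro a ha b hb
      omega

lemma prod_one_sub_zeta (p : ℕ) (hp : 1 < p) {ζ : ℂ} (hζ : IsPrimitiveRoot ζ p) :
    ∏ m ∈ Ico 1 p, (1 - ζ ^ m) = p := by
  have h0 : 0 < p := by omega
  have horder : orderOf ζ = p := (hζ.eq_orderOf).symm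
  have hinj : Set.InjOn (fun i => ζ ^ i) (range p) := by
    intro a ha b hb hab
    exact pow_injOn_Iio_orderOf (by simpa [horder] using Finset.mem_range.1 (by simpa using ha))
      (by simpa [horder] using Finset.mem_range.1 (by simpa using hb)) hab
  have himage : nthRootsFinset p (1 : ℂ) = (range p).image (fun i => ζ ^ i) := by
    symm
    apply Finset.eq_of_subset_of_card_le
    · intro x hx
      simp only [Finset.mem_image, Finset.mem_range] at hx
      obtain ⟨i, _, rfl⟩ := hx
      rw [Polynomial.mem_nthRootsFinset h0, ← pow_mul, mul_comm, pow_mul, hζ.pow_eq_one, one_pow]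
    · rw [hζ.card_nthRootsFinset, Finset.card_image_of_injOn hinj, Finset.card_range]
  have hprod : (X : ℂ[X]) ^ p - 1 = ∏ i ∈ range p, (X - C (ζ ^ i)) := by
    rw [X_pow_sub_one_eq_prod h0 hζ, himage, Finset.prod_image hinj]
  have hrange : range p = insert 0 (Ico 1 p) := by
    ext x; simp only [Finset.mem_range, Finset.mem_insert, Finset.mem_Ico]; omega
  rw [hrange, Finset.prod_insert (by simp)] at hprod
  have hgeom : (∑ i ∈ range p, (X : ℂ[X]) ^ i) * (X - 1) = X ^ p - 1 := geom_sum_mul _ _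
  have hcancel : (∑ i ∈ range p, (X : ℂ[X]) ^ i) = ∏ i ∈ Ico 1 p, (X - C (ζ ^ i)) := by
    have hX1 : (X : ℂ[X]) - 1 ≠ 0 := by
      rw [(by simp : (1 : ℂ[X]) = C 1)]
      exact X_sub_C_ne_zero 1
    apply mul_right_cancel₀ hX1
    rw [hgeom, hprod]
    simp only [pow_zero, map_one]
    ring
  have := congrArg (Polynomial.eval 1) hcancel
  simp only [eval_prod, eval_sub, eval_pow, eval_X, eval_one, eval_C, eval_finset_sum,
    one_pow, Finset.sum_const, Finset.card_range, nsmul_eq_mul, mul_one] at this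
  exact this.symm

lemma orbit_prod_s8 (p : ℕ) [NeZero p] (hp : p.Prime) (h2 : orderOf (2 : ZMod p) = p - 1)
    (c : ZMod p) (hc : c ≠ 0) (f : ZMod p → ℂ) :
    ∏ i ∈ range (p - 1), f ((2 : ZMod p) ^ i * c) = ∏ a ∈ univ.erase (0 : ZMod p), f a := by
  haveI : Fact p.Prime := ⟨hp⟩
  have h2ne : (2 : ZMod p) ≠ 0 := by
    intro h
    rw [h] at h2
    have h1 : orderOf (0 : ZMod p) = 0 := by
      rw [orderOf_eq_zero_iff']
      intro n hn hpow
      rw [zero_pow hn.ne'] at hpow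
      exact zero_ne_one (α := ZMod p) hpow
    have h3 : (0:ℕ) = p - 1 := h1 ▸ h2
    have := hp.two_le
    omega
  have hinj : Set.InjOn (fun i => (2 : ZMod p) ^ i * c) (range (p - 1)) := by
    intro a ha b hb hab
    simp only at hab
    have : (2 : ZMod p) ^ a = 2 ^ b := mul_right_cancel₀ hc hab
    exact pow_injOn_Iio_orderOf (by simpa [h2] using Finset.mem_range.1 (by simpa using ha))
      (by simpa [h2] using Finset.mem_range.1 (by simpa using hb)) this
  have himg : (range (p - 1)).image (fun i => (2 : ZMod p) ^ i * c) = univ.erase 0 := by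
    apply Finset.eq_of_subset_of_card_le
    · intro x hx
      simp only [Finset.mem_image, Finset.mem_range] at hx
      obtain ⟨i, _, rfl⟩ := hx
      exact Finset.mem_erase.2 ⟨mul_ne_zero (pow_ne_zero _ h2ne) hc, Finset.mem_univ _⟩
    · rw [Finset.card_erase_of_mem (Finset.mem_univ _), Finset.card_univ, ZMod.card,
        Finset.card_image_of_injOn hinj, Finset.card_range]
  rw [← himg, Finset.prod_image hinj]

lemma erase_prod_val (p : ℕ) [NeZero p] (g : ℕ → ℂ) :
    ∏ a ∈ univ.erase (0 : ZMod p), g a.val = ∏ m ∈ Ico 1 p, g m := by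
  refine Finset.prod_nbij' (fun a => a.val) (fun m => (m : ZMod p)) ?_ ?_ ?_ ?_ ?_
  · intro a ha
    rw [Finset.mem_Ico]
    exact ⟨Nat.one_le_iff_ne_zero.2 fun h => (Finset.mem_erase.1 ha).1 ((ZMod.val_eq_zero a).1 h),
      ZMod.val_lt a⟩
  · intro m hm
    rw [Finset.mem_Ico] at hm
    refine Finset.mem_erase.2 ⟨fun h => ?_, Finset.mem_univ _⟩
    have := (ZMod.natCast_eq_zero_iff m p).1 h
    have := Nat.le_of_dvd (by omega) this
    omega
  · intro a _
    simp [ZMod.natCast_val, ZMod.cast_id]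
  · intro m hm
    rw [Finset.mem_Ico] at hm
    exact ZMod.val_natCast_of_lt hm.2
  · intro a _
    rfl

/-- If 2 is a primitive root of a prime `p`, then `S_p(2^p) = p`. -/
theorem newmanSum_pow_self (p : ℕ) (hp : p.Prime) (h2 : orderOf (2 : ZMod p) = p - 1) :
    newmanSum p (2 ^ p) = p := by
  haveI : NeZero p := ⟨hp.pos.ne'⟩
  have hp1 : 1 < p := hp.one_lt
  set ζ := Complex.exp (2 * Real.pi * Complex.I / p) with hζdef
  have hζ : IsPrimitiveRoot ζ p := Complex.isPrimitiveRoot_exp p hp.pos.ne'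
  have hmod : ∀ m : ℕ, ζ ^ (m % p) = ζ ^ m := by
    intro m
    conv_rhs => rw [← Nat.div_add_mod m p]
    rw [pow_add, pow_mul, hζ.pow_eq_one, one_pow, one_mul]
  have hval : ∀ m : ℕ, ζ ^ ((m : ZMod p)).val = ζ ^ m := by
    intro m
    rw [ZMod.val_natCast, hmod]
  have horth : ∀ n : ℕ, ∑ j ∈ range p, (ζ ^ j) ^ n = if p ∣ n then (p : ℂ) else 0 := by
    intro n
    have hc : ∀ j ∈ range p, (ζ ^ j) ^ n = (ζ ^ n) ^ j := fun j _ => pow_right_comm ζ j n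
    rw [Finset.sum_congr rfl hc]
    by_cases hdvd : p ∣ n
    · rw [if_pos hdvd, hζ.pow_eq_one_iff_dvd n |>.2 hdvd]
      simp
    · rw [if_neg hdvd]
      exact (hζ.pow_of_coprime n ((hp.coprime_iff_not_dvd.2 hdvd).symm)).geom_sum_eq_zero hp1
  have hkey : ∀ j ∈ Ico 1 p, ∏ i ∈ range p, (1 - (ζ ^ j) ^ (2 ^ i)) = (p : ℂ) * (1 - ζ ^ j) := by
    intro j hj
    rw [Finset.mem_Ico] at hj
    have hjc : ((j : ZMod p)) ≠ 0 := by
      intro h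
      have h3 := Nat.le_of_dvd (by omega) ((ZMod.natCast_eq_zero_iff j p).1 h)
      omega
    have hfac : ∀ i ∈ range p,
        (1 : ℂ) - (ζ ^ j) ^ (2 ^ i) = 1 - ζ ^ (((2 : ZMod p) ^ i * (j : ZMod p)).val) := by
      intro i _
      rw [← pow_mul]
      congr 1
      rw [show ((2 : ZMod p) ^ i * (j : ZMod p)) = ((2 ^ i * j : ℕ) : ZMod p) by push_cast; ring,
        hval, mul_comm]
    rw [Finset.prod_congr rfl hfac,
      show range p = range (p - 1 + 1) by rw [Nat.sub_add_cancel hp1.le],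
      Finset.prod_range_succ, ← h2, pow_orderOf_eq_one, one_mul, h2,
      orbit_prod_s8 p hp h2 _ hjc (fun a => 1 - ζ ^ a.val),
      erase_prod_val p (fun m => 1 - ζ ^ m), prod_one_sub_zeta p hp1 hζ, hval]
  have hcast : (newmanSum p (2 ^ p) : ℂ)
      = ∑ n ∈ range (2 ^ p), (if p ∣ n then (-1 : ℂ) ^ (Nat.digits 2 n).sum else 0) := by
    rw [newmanSum]
    push_cast
    rfl
  have hIcoSum : ∑ j ∈ Ico 1 p, ζ ^ j = -1 := by
    have h0 : ∑ j ∈ range p, ζ ^ j = 0 := hζ.geom_sum_eq_zero hp1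
    rw [show range p = insert 0 (Ico 1 p) by ext x; simp [Finset.mem_range, Finset.mem_Ico]; omega,
      Finset.sum_insert (by simp)] at h0
    simpa using by linear_combination h0
  have main : (p : ℂ) * (newmanSum p (2 ^ p) : ℂ) = (p : ℂ) * (p : ℂ) := by
    rw [hcast, Finset.mul_sum]
    have step1 : ∀ n ∈ range (2 ^ p),
        (p : ℂ) * (if p ∣ n then (-1 : ℂ) ^ (Nat.digits 2 n).sum else 0)
          = ∑ j ∈ range p, (-1 : ℂ) ^ (Nat.digits 2 n).sum * (ζ ^ j) ^ n := by
      intro n _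
      rw [← Finset.mul_sum, horth n]
      by_cases h : p ∣ n <;> simp [h] <;> ring
    rw [Finset.sum_congr rfl step1, Finset.sum_comm]
    have step2 : ∀ j ∈ range p,
        ∑ n ∈ range (2 ^ p), (-1 : ℂ) ^ (Nat.digits 2 n).sum * (ζ ^ j) ^ n
          = ∏ i ∈ range p, (1 - (ζ ^ j) ^ (2 ^ i)) := fun j _ => signed_sum_eq_prod (ζ ^ j) p
    rw [Finset.sum_congr rfl step2, Finset.range_eq_Ico,
      Finset.sum_eq_sum_Ico_succ_bot hp.pos, ← Finset.range_eq_Ico, zero_add]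
    have hzero : ∏ i ∈ range p, (1 - (ζ ^ 0) ^ (2 ^ i)) = 0 := by
      apply Finset.prod_eq_zero (Finset.mem_range.2 hp.pos)
      simp
    rw [hzero, zero_add, Finset.sum_congr rfl hkey, ← Finset.mul_sum]
    congr 1
    rw [Finset.sum_sub_distrib, Finset.sum_const, Nat.card_Ico, hIcoSum]
    have : ((p - 1 : ℕ) : ℂ) = (p : ℂ) - 1 := by
      push_cast [Nat.cast_sub hp1.le]
      ring
    simp [this]
  have hpne : (p : ℂ) ≠ 0 := Nat.cast_ne_zero.2 hp.pos.ne'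
  exact_mod_cast mul_left_cancel₀ hpne main
end

section
/- Let p be an odd prime such that 2 is a semiprimitive root of p, i.e., 2 has multiplicative order (p−1)/2 modulo p and the congruence 2^x ≡ −1 (mod p) has no solution, and let ω be any primitive p-th root of unity in the complex numbers. Then ∏_{j=1}^{(p−1)/2} (1 − ω^{2^j})^2 = (−1)^{(p−1)/2} · p. -/
/-- If 2 is a semiprimitive root of an odd prime `p` and `ω` is a primitive `p`-th root
of unity in `ℂ`, then `∏_{j=1}^{(p-1)/2} (1 - ω^{2^j})² = (-1)^{(p-1)/2} · p`. -/
theorem prod_one_sub_pow_two_sq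
    (p : ℕ) (hp : p.Prime) (hodd : Odd p)
    (horder : orderOf (2 : ZMod p) = (p - 1) / 2)
    (hnosol : ¬ ∃ x : ℕ, (2 : ZMod p) ^ x = -1)
    (ω : ℂ) (hω : IsPrimitiveRoot ω p) :
    ∏ j ∈ Finset.Icc 1 ((p - 1) / 2), (1 - ω ^ (2 ^ j)) ^ 2 = (-1 : ℂ) ^ ((p - 1) / 2) * (p : ℂ) := by
  haveI : Fact p.Prime := ⟨hp⟩
  set m := (p - 1) / 2 with hmdef
  have hp2 : p ≠ 2 := by rintro rfl; exact (Nat.not_odd_iff_even.mpr (by decide)) hodd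
  have hp3 : 3 ≤ p := by have := hp.two_le; omega
  have hm2 : 2 * m = p - 1 := by obtain ⟨k, hk⟩ := hodd; omega
  -- basic facts about 2 in ZMod p
  have h2ne0 : (2 : ZMod p) ≠ 0 := by
    intro h
    have h' : ((2 : ℕ) : ZMod p) = 0 := by push_cast; exact h
    have := Nat.le_of_dvd (by norm_num) ((ZMod.natCast_eq_zero_iff 2 p).mp h')
    omega
  have h2m : (2 : ZMod p) ^ m = 1 := by rw [← horder]; exact pow_orderOf_eq_one _
  -- f : ZMod p → ℂ
  set f : ZMod p → ℂ := fun z => ω ^ z.val with hfdef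
  have hωmod : ∀ n : ℕ, ω ^ n = ω ^ (n % p) := by
    intro n
    conv_lhs => rw [← Nat.mod_add_div n p]
    rw [pow_add, pow_mul, hω.pow_eq_one, one_pow, mul_one]
  have f0 : f 0 = 1 := by simp [hfdef]
  have fadd : ∀ a b : ZMod p, f (a + b) = f a * f b := by
    intro a b
    simp only [hfdef]
    rw [← pow_add, ZMod.val_add, ← hωmod]
  have fsum : ∀ t : Finset (ZMod p), f (∑ s ∈ t, s) = ∏ s ∈ t, f s := by
    intro t
    induction t using Finset.induction_on with
    | empty => simpa using f0
    | insert _ _ hx ih =>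
      rw [Finset.sum_insert hx, Finset.prod_insert hx, fadd, ih]
  have fkey : ∀ j : ℕ, ω ^ (2 ^ j) = f ((2 : ZMod p) ^ j) := by
    intro j
    have h' : ((2 : ZMod p) ^ j) = ((2 ^ j : ℕ) : ZMod p) := by push_cast; ring
    rw [h', hfdef]
    simp only [ZMod.val_natCast]
    exact hωmod _
  -- the set S
  set S : Finset (ZMod p) := (Finset.Icc 1 m).image (fun j => (2 : ZMod p) ^ j) with hSdef
  have hinj : Set.InjOn (fun j => (2 : ZMod p) ^ j) (Finset.Icc 1 m) := by
    intro a ha b hb hab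
    simp only [Finset.coe_Icc, Set.mem_Icc] at ha hb
    have key : ∀ a b : ℕ, a ≤ b → 1 ≤ a → b ≤ m →
        (2 : ZMod p) ^ a = (2 : ZMod p) ^ b → a = b := by
      intro a b hle ha1 hbm hab
      have hpow : (2 : ZMod p) ^ a * (2 : ZMod p) ^ (b - a) = (2 : ZMod p) ^ a * 1 := by
        rw [mul_one, ← pow_add, show a + (b - a) = b by omega]
        exact hab.symm
      have h1 : (2 : ZMod p) ^ (b - a) = 1 :=
        mul_left_cancel₀ (pow_ne_zero _ h2ne0) hpow
      have hdvd : m ∣ b - a := by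
        rw [← horder]; exact orderOf_dvd_of_pow_eq_one h1
      have : b - a = 0 := Nat.eq_zero_of_dvd_of_lt hdvd (by omega)
      omega
    rcases le_total a b with h | h
    · exact key a b h ha.1 hb.2 hab
    · exact (key b a h hb.1 ha.2 hab.symm).symm
  have hScard : S.card = m := by
    rw [hSdef, Finset.card_image_of_injOn hinj, Nat.card_Icc]; omega
  -- sum over S is zero
  have hsumS : (∑ s ∈ S, s) = 0 := by
    set g : ℕ → ZMod p := fun j => 2 ^ (j + 1) with hgdef
    have hIcc : Finset.Icc 1 m = (Finset.range m).image (· + 1) := by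
      ext x
      simp only [Finset.mem_Icc, Finset.mem_image, Finset.mem_range]
      constructor
      · rintro ⟨h1, h2⟩; exact ⟨x - 1, by omega, by omega⟩
      · rintro ⟨y, hy, rfl⟩; omega
    have hrange : (∑ s ∈ S, s) = ∑ j ∈ Finset.range m, g j := by
      rw [hSdef, Finset.sum_image hinj, hIcc,
        Finset.sum_image (by intro a _ b _ h; have h' : a + 1 = b + 1 := h; omega)]
    have hgm : g m = g 0 := by
      simp only [hgdef]
      rw [pow_succ, h2m, one_mul, zero_add, pow_one]
    have h2sum : (2 : ZMod p) * ∑ j ∈ Finset.range m, g j = ∑ j ∈ Finset.range m, g j := by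
      rw [Finset.mul_sum]
      have step : ∀ j, (2 : ZMod p) * g j = g (j + 1) := by
        intro j; simp only [hgdef]; ring
      calc ∑ j ∈ Finset.range m, (2 : ZMod p) * g j
          = ∑ j ∈ Finset.range m, g (j + 1) := by simp only [step]
        _ = ∑ j ∈ Finset.range (m + 1), g j - g 0 := by
            rw [Finset.sum_range_succ' g m]; ring
        _ = ∑ j ∈ Finset.range m, g j := by
            rw [Finset.sum_range_succ, hgm]; ring
    rw [hrange]
    have := h2sum
    have h2' : (2 : ZMod p) = 1 + 1 := by ring
    rw [h2', add_mul, one_mul] at this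
    linear_combination this
  -- 0 not in S, -1 not expressible
  have h0S : (0 : ZMod p) ∉ S := by
    intro h
    rw [hSdef, Finset.mem_image] at h
    obtain ⟨j, _, hj⟩ := h
    exact pow_ne_zero j h2ne0 hj
  -- S and -S are disjoint
  set negS : Finset (ZMod p) := S.image (fun z => -z) with hnegSdef
  have hdisj : Disjoint S negS := by
    rw [Finset.disjoint_left]
    intro z hzS hzN
    rw [hnegSdef, Finset.mem_image] at hzN
    obtain ⟨w, hwS, hw⟩ := hzN
    rw [hSdef, Finset.mem_image] at hzS hwS
    obtain ⟨a, haI, ha⟩ := hzS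
    obtain ⟨b, hbI, hb⟩ := hwS
    simp only [Finset.mem_Icc] at haI hbI
    apply hnosol
    refine ⟨a + (m - b), ?_⟩
    rw [pow_add, ha, ← hw, ← hb, neg_mul, ← pow_add,
      show b + (m - b) = m by omega, h2m]
  have hnegcard : negS.card = m := by
    rw [hnegSdef, Finset.card_image_of_injective _ neg_injective, hScard]
  set T : Finset (ZMod p) := Finset.univ.erase 0 with hTdef
  have hTcard : T.card = p - 1 := by
    rw [hTdef, Finset.card_erase_of_mem (Finset.mem_univ _), Finset.card_univ, ZMod.card]
  have hsubT : S ∪ negS ⊆ T := by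
    intro z hz
    rw [Finset.mem_union] at hz
    rw [hTdef, Finset.mem_erase]
    refine ⟨?_, Finset.mem_univ _⟩
    rcases hz with hz | hz
    · rintro rfl; exact h0S hz
    · rintro rfl
      rw [hnegSdef, Finset.mem_image] at hz
      obtain ⟨w, hw, hw0⟩ := hz
      rw [neg_eq_zero] at hw0
      exact h0S (hw0 ▸ hw)
  have hunion : S ∪ negS = T := by
    apply Finset.eq_of_subset_of_card_le hsubT
    rw [Finset.card_union_of_disjoint hdisj, hScard, hnegcard, hTcard]
    omega
  -- the full product over nonzero residues equals p
  have hbig : ∏ z ∈ T, (1 - f z) = (p : ℂ) := by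
    have hp' : p - 1 + 1 = p := by omega
    have hω' : IsPrimitiveRoot ω ((p - 1) + 1) := by rwa [hp']
    have hprod := hω'.prod_one_sub_pow_eq_order
    have hcast : ((p - 1 : ℕ) : ℂ) + 1 = (p : ℂ) := by
      have h := congrArg (Nat.cast (R := ℂ)) hp'
      rwa [Nat.cast_add, Nat.cast_one] at h
    rw [hcast] at hprod
    rw [← hprod]
    apply Finset.prod_nbij' (fun z => z.val - 1) (fun k => ((k + 1 : ℕ) : ZMod p))
    · intro z hz
      rw [hTdef, Finset.mem_erase] at hz
      have h1 : z.val ≠ 0 := fun h => hz.1 ((ZMod.val_eq_zero z).mp h)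
      have h2 : z.val < p := ZMod.val_lt z
      rw [Finset.mem_range]; omega
    · intro k hk
      rw [Finset.mem_range] at hk
      rw [hTdef, Finset.mem_erase]
      refine ⟨?_, Finset.mem_univ _⟩
      intro h
      have := (ZMod.natCast_eq_zero_iff (k + 1) p).mp h
      have := Nat.le_of_dvd (by omega) this
      omega
    · intro z hz
      rw [hTdef, Finset.mem_erase] at hz
      have h1 : z.val ≠ 0 := fun h => hz.1 ((ZMod.val_eq_zero z).mp h)
      rw [show z.val - 1 + 1 = z.val by omega]
      exact ZMod.natCast_rightInverse z
    · intro k hk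
      rw [Finset.mem_range] at hk
      rw [ZMod.val_natCast, Nat.mod_eq_of_lt (by omega)]
      omega
    · intro z hz
      rw [hTdef, Finset.mem_erase] at hz
      have h1 : z.val ≠ 0 := fun h => hz.1 ((ZMod.val_eq_zero z).mp h)
      rw [show z.val - 1 + 1 = z.val by omega]
  have hinj' : ∀ a ∈ Finset.Icc 1 m, ∀ b ∈ Finset.Icc 1 m,
      (2 : ZMod p) ^ a = (2 : ZMod p) ^ b → a = b :=
    fun a ha b hb h => hinj (by simpa using ha) (by simpa using hb) h
  have hneginj : ∀ a ∈ S, ∀ b ∈ S, -a = -b → a = b := fun a _ b _ h => neg_injective h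
  set P : ℂ := ∏ s ∈ S, (1 - f s) with hPdef
  have hPsplit : (p : ℂ) = P * ∏ t ∈ negS, (1 - f t) := by
    rw [← hbig, ← hunion, Finset.prod_union hdisj]
  have hprodfneg : ∏ s ∈ S, f (-s) = 1 := by
    have h1 : ∏ t ∈ negS, f t = ∏ s ∈ S, f (-s) := by
      rw [hnegSdef]; exact Finset.prod_image hneginj
    have h2 : (∑ t ∈ negS, t) = 0 := by
      rw [hnegSdef, Finset.sum_image hneginj, Finset.sum_neg_distrib, hsumS, neg_zero]
    rw [← h1, ← fsum, h2, f0]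
  have hnegprod : ∏ t ∈ negS, (1 - f t) = (-1 : ℂ) ^ m * P := by
    rw [hnegSdef, Finset.prod_image hneginj]
    have hfneg : ∀ s : ZMod p, 1 - f (-s) = -f (-s) * (1 - f s) := by
      intro s
      have h1 : f (-s) * f s = 1 := by rw [← fadd, neg_add_cancel, f0]
      linear_combination -h1
    calc ∏ s ∈ S, (1 - f (-s))
        = ∏ s ∈ S, (-f (-s) * (1 - f s)) := Finset.prod_congr rfl fun s _ => hfneg s
      _ = (∏ s ∈ S, -f (-s)) * P := Finset.prod_mul_distrib
      _ = (-1 : ℂ) ^ m * P := by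
          congr 1
          have h1 : ∀ s : ZMod p, -f (-s) = (-1) * f (-s) := fun s => by ring
          simp_rw [h1]
          rw [Finset.prod_mul_distrib, Finset.prod_const, hScard, hprodfneg, mul_one]
  have hsq : ((-1 : ℂ) ^ m) * ((-1 : ℂ) ^ m) = 1 := by
    rw [← mul_pow]; norm_num
  have h1 : (p : ℂ) = (-1 : ℂ) ^ m * P ^ 2 := by
    rw [hPsplit, hnegprod]; ring
  have hPP : P ^ 2 = (-1 : ℂ) ^ m * p := by
    calc P ^ 2 = ((-1 : ℂ) ^ m * (-1 : ℂ) ^ m) * P ^ 2 := by rw [hsq, one_mul]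
      _ = (-1 : ℂ) ^ m * ((-1 : ℂ) ^ m * P ^ 2) := by ring
      _ = (-1 : ℂ) ^ m * p := by rw [← h1]
  calc ∏ j ∈ Finset.Icc 1 m, (1 - ω ^ 2 ^ j) ^ 2
      = (∏ j ∈ Finset.Icc 1 m, (1 - ω ^ 2 ^ j)) ^ 2 := by rw [← Finset.prod_pow]
    _ = P ^ 2 := by
        rw [hPdef, hSdef, Finset.prod_image hinj']
        exact congrArg (· ^ 2) (Finset.prod_congr rfl fun j _ => by rw [fkey j])
    _ = (-1 : ℂ) ^ m * p := hPP
end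

section
/- Let p be a prime such that 2 is a primitive root modulo p, let ω be any primitive p-th root of unity in the complex numbers, let k ≥ p be a natural number, and let l be an integer with 1 ≤ l ≤ p−1. Then ∏_{j=0}^{k−1} (1 − ω^{l·2^j}) = p · ∏_{j=0}^{k−p} (1 − ω^{l·2^j}). -/
/-- If 2 is a primitive root of a prime `p`, `ω` a primitive `p`-th root of unity in `ℂ`,
`k ≥ p` and `1 ≤ l ≤ p-1`, then
`∏_{j=0}^{k-1} (1 - ω^{l·2^j}) = p · ∏_{j=0}^{k-p} (1 - ω^{l·2^j})`. -/
theorem prod_one_sub_pow_shift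
    (p : ℕ) (hp : p.Prime) (h2 : orderOf (2 : ZMod p) = p - 1)
    (ω : ℂ) (hω : IsPrimitiveRoot ω p)
    (k : ℕ) (hk : p ≤ k)
    (l : ℕ) (hl1 : 1 ≤ l) (hl2 : l ≤ p - 1) :
    ∏ j ∈ Finset.range k, (1 - ω ^ (l * 2 ^ j)) =
      p * ∏ j ∈ Finset.range (k - p + 1), (1 - ω ^ (l * 2 ^ j)) := by
  haveI : Fact p.Prime := ⟨hp⟩
  have hp2 : 2 ≤ p := hp.two_le
  -- ω^a depends only on a mod p
  have hωmod : ∀ a : ℕ, ω ^ a = ω ^ (a % p) := by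
    intro a
    conv_lhs => rw [← Nat.div_add_mod a p]
    rw [pow_add, pow_mul, hω.pow_eq_one, one_pow, one_mul]
  -- 2^(p-1) ≡ 1 mod p
  have h2p : ((2 : ZMod p)) ^ (p - 1) = 1 := by rw [← h2, pow_orderOf_eq_one]
  -- periodicity of the factor
  have hper : ∀ j : ℕ, ω ^ (l * 2 ^ (p - 1 + j)) = ω ^ (l * 2 ^ j) := by
    intro j
    rw [hωmod (l * 2 ^ (p - 1 + j)), hωmod (l * 2 ^ j)]
    congr 1
    have hz : ((l * 2 ^ (p - 1 + j) : ℕ) : ZMod p) = ((l * 2 ^ j : ℕ) : ZMod p) := by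
      push_cast
      rw [pow_add, h2p, one_mul]
    have := congrArg ZMod.val hz
    simpa only [ZMod.val_natCast] using this
  -- l is nonzero mod p
  have hlne : ((l : ZMod p)) ≠ 0 := by
    rw [Ne, ZMod.natCast_eq_zero_iff]
    intro h
    have := Nat.le_of_dvd (by omega) h
    omega
  -- 2 is nonzero mod p
  have h2ne : ((2 : ZMod p)) ≠ 0 := by
    intro h
    rw [h, zero_pow (by omega : p - 1 ≠ 0)] at h2p
    exact zero_ne_one h2p
  -- the exponent map
  set e : ℕ → ℕ := fun j => ((l : ZMod p) * (2 : ZMod p) ^ j).val with he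
  have hfe : ∀ j, 1 - ω ^ (l * 2 ^ j) = 1 - ω ^ (e j) := by
    intro j
    rw [hωmod]
    congr 2
    have : ((l * 2 ^ j : ℕ) : ZMod p) = (l : ZMod p) * (2 : ZMod p) ^ j := by push_cast; ring
    rw [he]
    simp only [← this, ZMod.val_natCast]
  -- injectivity of e on range (p-1)
  have heinj : Set.InjOn e (Finset.range (p - 1)) := by
    intro i hi j hj hij
    simp only [Finset.coe_range, Set.mem_Iio] at hi hj
    have : (l : ZMod p) * (2 : ZMod p) ^ i = (l : ZMod p) * (2 : ZMod p) ^ j :=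
      ZMod.val_injective p hij
    have h2ij : (2 : ZMod p) ^ i = (2 : ZMod p) ^ j := mul_left_cancel₀ hlne this
    exact pow_injOn_Iio_orderOf (by rwa [Set.mem_Iio, h2]) (by rwa [Set.mem_Iio, h2]) h2ij
  -- values of e lie in Ico 1 p
  have hemem : ∀ j, e j ∈ Finset.Ico 1 p := by
    intro j
    rw [Finset.mem_Ico]
    constructor
    · rw [Nat.one_le_iff_ne_zero]
      intro h
      have : (l : ZMod p) * (2 : ZMod p) ^ j = 0 := by
        exact (ZMod.val_eq_zero _).mp h
      rcases mul_eq_zero.mp this with h' | h'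
      · exact hlne h'
      · exact h2ne (pow_eq_zero_iff'.mp h').1
    · exact ZMod.val_lt _
  -- image of e on range (p-1) is Ico 1 p
  have himg : Finset.image e (Finset.range (p - 1)) = Finset.Ico 1 p := by
    apply Finset.eq_of_subset_of_card_le
    · intro a ha
      rcases Finset.mem_image.mp ha with ⟨j, _, rfl⟩
      exact hemem j
    · rw [Nat.card_Ico, Finset.card_image_of_injOn heinj, Finset.card_range]
  -- the product over one period equals p
  have hperiod : ∏ j ∈ Finset.range (p - 1), (1 - ω ^ (l * 2 ^ j)) = p := by
    calc ∏ j ∈ Finset.range (p - 1), (1 - ω ^ (l * 2 ^ j))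
        = ∏ j ∈ Finset.range (p - 1), (1 - ω ^ (e j)) := by
          exact Finset.prod_congr rfl fun j _ => hfe j
      _ = ∏ a ∈ Finset.image e (Finset.range (p - 1)), (1 - ω ^ a) :=
          (Finset.prod_image (f := fun a => (1 : ℂ) - ω ^ a) fun i hi j hj h => heinj (Finset.mem_coe.mpr hi) (Finset.mem_coe.mpr hj) h).symm
      _ = ∏ a ∈ Finset.Ico 1 p, (1 - ω ^ a) := by rw [himg]
      _ = ∏ j ∈ Finset.range (p - 1), (1 - ω ^ (j + 1)) := by
          rw [Finset.prod_Ico_eq_prod_range]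
          apply Finset.prod_congr rfl
          intro j _
          rw [add_comm]
      _ = p := by
          obtain ⟨n, rfl⟩ : ∃ n, p = n + 1 := ⟨p - 1, by omega⟩
          have hω' : IsPrimitiveRoot ω (n + 1) := hω
          simpa using hω'.prod_one_sub_pow_eq_order
  -- split the range and conclude
  obtain ⟨n, rfl⟩ : ∃ n, k = p - 1 + n := ⟨k - (p - 1), by omega⟩
  have hn : p - 1 + n - p + 1 = n := by omega
  rw [hn, Finset.prod_range_add, hperiod]
  congr 1
  apply Finset.prod_congr rfl
  intro j _
  rw [hper j]
end

section
/- Let p be an odd prime and let ω be any primitive p-th root of unity in the complex numbers. Then for every natural number k ≥ 1, the Newman sum satisfies S_p(2^k) = (1/p) · Σ_{l=1}^{p−1} ∏_{j=0}^{k−1} (1 − ω^{l·2^j}). -/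
lemma sum_digits_div (m : ℕ) : (Nat.digits 2 m).sum = m % 2 + (Nat.digits 2 (m / 2)).sum := by
  rcases Nat.eq_zero_or_pos m with h | h
  · simp [h]
  · rw [Nat.digits_def' (by norm_num : 1 < 2) h]; simp

lemma sum_digits_add_pow (k m : ℕ) (hm : m < 2 ^ k) :
    (Nat.digits 2 (2 ^ k + m)).sum = (Nat.digits 2 m).sum + 1 := by
  induction k generalizing m with
  | zero => interval_cases m; simp [Nat.digits_def' (by norm_num : 1 < 2)]
  | succ k ih =>
    have hpos : 0 < 2 ^ (k + 1) + m := by positivity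
    rw [Nat.digits_def' (by norm_num : 1 < 2) hpos]
    have h1 : (2 ^ (k + 1) + m) % 2 = m % 2 := by omega
    have h2 : (2 ^ (k + 1) + m) / 2 = 2 ^ k + m / 2 := by omega
    rw [List.sum_cons, h1, h2, ih (m / 2) (by omega), sum_digits_div m]
    ring

lemma sum_pow_eq_prod (z : ℂ) (k : ℕ) :
    ∑ n ∈ Finset.range (2 ^ k), (-1 : ℂ) ^ (Nat.digits 2 n).sum * z ^ n =
      ∏ j ∈ Finset.range k, (1 - z ^ (2 ^ j)) := by
  induction k with
  | zero => simp
  | succ k ih =>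
    rw [pow_succ, mul_two, Finset.sum_range_add, Finset.prod_range_succ]
    have : ∀ i ∈ Finset.range (2 ^ k),
        (-1 : ℂ) ^ (Nat.digits 2 (2 ^ k + i)).sum * z ^ (2 ^ k + i) =
          -(z ^ (2 ^ k)) * ((-1 : ℂ) ^ (Nat.digits 2 i).sum * z ^ i) := by
      intro i hi
      rw [sum_digits_add_pow k i (Finset.mem_range.mp hi), pow_succ, pow_add]
      ring
    rw [Finset.sum_congr rfl this, ← Finset.mul_sum, ih]
    ring

lemma root_filter (p : ℕ) (hp : p.Prime) (ω : ℂ) (hω : IsPrimitiveRoot ω p) (n : ℕ) :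
    ∑ l ∈ Finset.range p, ω ^ (l * n) = if p ∣ n then (p : ℂ) else 0 := by
  have h : ∀ l, ω ^ (l * n) = (ω ^ n) ^ l := fun l => by rw [← pow_mul, mul_comm]
  simp only [h]
  by_cases hd : p ∣ n
  · have : ω ^ n = 1 := (hω.pow_eq_one_iff_dvd n).mpr hd
    simp [this, hd]
  · have hne : ω ^ n ≠ 1 := fun hc => hd ((hω.pow_eq_one_iff_dvd n).mp hc)
    rw [geom_sum_eq hne]
    have : (ω ^ n) ^ p = 1 := by
      rw [← pow_mul, mul_comm, pow_mul, hω.pow_eq_one, one_pow]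
    simp [this, hd]

/-- For an odd prime `p`, a primitive `p`-th root of unity `ω` in `ℂ`, and `k ≥ 1`,
`S_p(2^k) = (1/p) ∑_{l=1}^{p-1} ∏_{j=0}^{k-1} (1 - ω^{l·2^j})`. -/
theorem newmanSum_eq_sum_prod
    (p : ℕ) (hp : p.Prime) (hodd : Odd p)
    (ω : ℂ) (hω : IsPrimitiveRoot ω p)
    (k : ℕ) (hk : 1 ≤ k) :
    (newmanSum p (2 ^ k) : ℂ) =
      (1 / p) * ∑ l ∈ Finset.Icc 1 (p - 1), ∏ j ∈ Finset.range k, (1 - ω ^ (l * 2 ^ j)) := by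
  have hp0 : (p : ℂ) ≠ 0 := Nat.cast_ne_zero.mpr hp.pos.ne'
  rw [one_div, inv_mul_eq_div, eq_div_iff hp0]
  have key : ∀ n, ((if p ∣ n then (-1 : ℂ) ^ (Nat.digits 2 n).sum else 0) * p) =
      ∑ l ∈ Finset.range p, (-1 : ℂ) ^ (Nat.digits 2 n).sum * ω ^ (l * n) := by
    intro n
    rw [← Finset.mul_sum, root_filter p hp ω hω n]
    split_ifs <;> ring
  have step1 : (newmanSum p (2 ^ k) : ℂ) * p =
      ∑ n ∈ Finset.range (2 ^ k), ∑ l ∈ Finset.range p,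
        (-1 : ℂ) ^ (Nat.digits 2 n).sum * ω ^ (l * n) := by
    simp only [newmanSum]
    push_cast [apply_ite (Int.cast : ℤ → ℂ)]
    rw [Finset.sum_mul]
    exact Finset.sum_congr rfl fun n _ => key n
  rw [step1, Finset.sum_comm]
  have step2 : ∀ l, ∑ n ∈ Finset.range (2 ^ k), (-1 : ℂ) ^ (Nat.digits 2 n).sum * ω ^ (l * n) =
      ∏ j ∈ Finset.range k, (1 - ω ^ (l * 2 ^ j)) := by
    intro l
    have := sum_pow_eq_prod (ω ^ l) k
    simpa only [← pow_mul] using this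
  rw [Finset.sum_congr rfl fun l _ => step2 l]
  have hrange : Finset.range p = insert 0 (Finset.Icc 1 (p - 1)) := by
    have h1 := hp.one_lt
    ext x
    simp only [Finset.mem_range, Finset.mem_insert, Finset.mem_Icc]
    omega
  rw [hrange, Finset.sum_insert (by simp)]
  have hzero : ∏ j ∈ Finset.range k, (1 - ω ^ (0 * 2 ^ j)) = 0 :=
    Finset.prod_eq_zero (Finset.mem_range.mpr hk) (by simp)
  rw [hzero, zero_add]
end
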